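/- arXiv:0803.3294 — 5 statements merged into one kernel-verified Lean document; each statement's English description precedes it below -/
import Mathlib

section
/- Let G be an Abelian p-group of length at most N containing, for every r ∈ ℕ, a subgroup isomorphic to (Z/p^{k+1})^r, and such that G_{k+1} = p^{k+1}G is isomorphic to C_{k+1} for a fixed finite group. Then for every m there exist m elements of G of order p and height exactly k that are linearly independent over G_{k+1}; in particular the k-th Ulm invariant u_k(G) is infinite. -/
/-- Multiplication by `j` as an additive homomorphism. -/
def smulHom (G : Type*) [AddCommGroup G] (j : ℕ) : G →+ G where
  toFun x := j • x
  map_zero' := smul_zero j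
  map_add' x y := smul_add j x y

/-- The subgroup `jG` of an Abelian group `G`. -/
def smulSub (G : Type*) [AddCommGroup G] (j : ℕ) : AddSubgroup G :=
  (smulHom G j).range

/-- `P_j(G)`: the elements of order dividing `p` in `p^j G`. -/
def Psub (G : Type*) [AddCommGroup G] (p j : ℕ) : AddSubgroup G :=
  smulSub G (p ^ j) ⊓ (smulHom G p).ker

section Aux

variable {G : Type*} [AddCommGroup G] {p : ℕ} [NeZero p]

lemma nsmul_mod_aux (g : G) (hg : p • g = 0) (n : ℕ) : n • g = (n % p) • g := by
  conv_lhs => rw [← Nat.mod_add_div n p]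
  rw [add_smul, mul_comm, mul_smul, hg, smul_zero, add_zero]

/-- The `ZMod p`-combination map attached to a family of elements killed by `p`. -/
def sumHom {m : ℕ} (b : Fin m → G) (hb : ∀ i, p • b i = 0) : (Fin m → ZMod p) →+ G where
  toFun z := ∑ j, (z j).val • b j
  map_zero' := by simp
  map_add' z w := by
    show (∑ j, ((z + w) j).val • b j) = (∑ j, (z j).val • b j) + ∑ j, (w j).val • b j
    rw [← Finset.sum_add_distrib]
    refine Finset.sum_congr rfl fun j _ => ?_
    rw [Pi.add_apply, ZMod.val_add, ← nsmul_mod_aux (b j) (hb j), add_smul]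

lemma sumHom_apply {m : ℕ} (b : Fin m → G) (hb : ∀ i, p • b i = 0) (z : Fin m → ZMod p) :
    sumHom b hb z = ∑ j, (z j).val • b j := rfl

lemma sumHom_smul {m : ℕ} (b : Fin m → G) (hb : ∀ i, p • b i = 0) (a : ZMod p)
    (z : Fin m → ZMod p) : sumHom b hb (a • z) = a.val • sumHom b hb z := by
  simp only [sumHom_apply, Finset.smul_sum]
  refine Finset.sum_congr rfl fun j _ => ?_
  rw [Pi.smul_apply, smul_eq_mul, ZMod.val_mul, ← nsmul_mod_aux (b j) (hb j), mul_smul]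

lemma sumHom_single [Fact (1 < p)] {m : ℕ} (b : Fin m → G) (hb : ∀ i, p • b i = 0)
    (i : Fin m) : sumHom b hb (Pi.single i 1) = b i := by
  rw [sumHom_apply, Finset.sum_eq_single i]
  · simp [ZMod.val_one]
  · intro j _ hj
    rw [Pi.single_eq_of_ne hj]
    simp
  · simp

end Aux

/-- Let `G` be an Abelian `p`-group of length at most `N` containing, for every
`r`, a subgroup isomorphic to `(ℤ/p^(k+1))^r`, and such that
`G_(k+1) = p^(k+1)G` is isomorphic to a fixed finite group. Then for every `m`
there are `m` elements of `G` of order `p` and height exactly `k` that are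
linearly independent over `G_(k+1)`; in particular the `k`-th Ulm invariant
`u_k(G)` is infinite. -/
theorem stmt2 (p : ℕ) (hp : p.Prime) (N k : ℕ) (hkN : k < N)
    (G : Type*) [AddCommGroup G]
    (hlen : ∀ x : G, (p ^ N) • x = 0)
    (hsub : ∀ r : ℕ, ∃ H : AddSubgroup G,
      Nonempty (H ≃+ (Fin r → ZMod (p ^ (k + 1)))))
    (C : Type*) [AddCommGroup C] [Finite C]
    (hC : Nonempty (smulSub G (p ^ (k + 1)) ≃+ C)) :
    (∀ m : ℕ, ∃ b : Fin m → G,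
      (∀ i, addOrderOf (b i) = p ∧ b i ∈ smulSub G (p ^ k) ∧
        b i ∉ smulSub G (p ^ (k + 1))) ∧
      (∀ z : Fin m → ZMod p,
        (∑ i, (z i).val • b i) ∈ smulSub G (p ^ (k + 1)) → ∀ i, z i = 0)) ∧
    Infinite ((Psub G p k) ⧸ ((Psub G p (k + 1)).addSubgroupOf (Psub G p k))) := by
  classical
  haveI : Fact p.Prime := ⟨hp⟩
  have hp1 : 1 < p := hp.one_lt
  haveI : NeZero p := ⟨hp.ne_zero⟩
  haveI : Fact (1 < p) := ⟨hp1⟩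
  haveI : Finite (smulSub G (p ^ (k + 1))) := by
    obtain ⟨eC⟩ := hC
    exact Finite.of_equiv C eC.symm.toEquiv
  have hcardC : Nat.card (smulSub G (p ^ (k + 1))) = Nat.card C :=
    Nat.card_congr hC.some.toEquiv
  set c := Nat.card C with hc
  have key : ∀ m : ℕ, ∃ b : Fin m → G,
      (∀ i, addOrderOf (b i) = p ∧ b i ∈ smulSub G (p ^ k) ∧
        b i ∉ smulSub G (p ^ (k + 1))) ∧
      (∀ z : Fin m → ZMod p,
        (∑ i, (z i).val • b i) ∈ smulSub G (p ^ (k + 1)) → ∀ i, z i = 0) := by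
    intro m
    obtain ⟨H, ⟨φ⟩⟩ := hsub (m + c)
    set r := m + c with hr
    -- the embedding of `(ZMod (p^(k+1)))^r` into `G`
    set ψ : (Fin r → ZMod (p ^ (k + 1))) →+ G :=
      H.subtype.comp φ.symm.toAddMonoidHom with hψ
    have hψinj : Function.Injective ψ :=
      Subtype.coe_injective.comp φ.symm.injective
    set e : Fin r → G := fun i => ψ (Pi.single i 1) with he
    set x : Fin r → G := fun i => (p ^ k) • e i with hx
    have hzq : ∀ s : Fin r → ZMod (p ^ (k + 1)), (p ^ (k + 1)) • s = 0 := by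
      intro s
      funext j
      rw [Pi.smul_apply, nsmul_eq_mul, ZMod.natCast_self, zero_mul]
      rfl
    have hpx : ∀ j, p • x j = 0 := by
      intro j
      rw [hx]
      dsimp only
      rw [← mul_smul, ← pow_succ', ← map_nsmul, hzq, map_zero]
    set Sf : (Fin r → ZMod p) →+ G := sumHom x hpx with hSf
    -- injectivity of Sf
    have hS0 : ∀ z : Fin r → ZMod p, Sf z = 0 → z = 0 := by
      intro z hz
      have hfac : Sf z = ψ (∑ j, ((z j).val * p ^ k) • Pi.single j 1) := by
        rw [map_sum, hSf, sumHom_apply]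
        refine Finset.sum_congr rfl fun j _ => ?_
        rw [map_nsmul, mul_smul, hx, he]
      rw [hfac] at hz
      have hz0 : (∑ j, ((z j).val * p ^ k) • (Pi.single j 1 : Fin r → ZMod (p ^ (k + 1)))) = 0 := by
        apply hψinj
        rw [hz, map_zero]
      funext i
      have hi := congrFun hz0 i
      rw [Finset.sum_apply] at hi
      rw [Finset.sum_eq_single i] at hi
      · rw [Pi.smul_apply, Pi.single_eq_same, nsmul_eq_mul, mul_one] at hi
        have hdvd : p ^ (k + 1) ∣ (z i).val * p ^ k :=
          (ZMod.natCast_eq_zero_iff _ _).mp hi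
        rw [mul_comm, pow_succ] at hdvd
        have hdvd2 : p ∣ (z i).val :=
          (Nat.mul_dvd_mul_iff_left (pow_pos hp.pos k)).mp hdvd
        have : (z i).val = 0 := Nat.eq_zero_of_dvd_of_lt hdvd2 (ZMod.val_lt _)
        exact (ZMod.val_eq_zero _).mp this
      · intro j _ hj
        rw [Pi.smul_apply, Pi.single_eq_of_ne (Ne.symm hj), smul_zero]
      · simp
    have hSk : ∀ z : Fin r → ZMod p, Sf z ∈ smulSub G (p ^ k) := by
      intro z
      refine ⟨∑ j, (z j).val • e j, ?_⟩
      show (p ^ k) • (∑ j, (z j).val • e j) = Sf z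
      rw [Finset.smul_sum, hSf, sumHom_apply]
      exact Finset.sum_congr rfl fun j _ => smul_comm _ _ _
    have hpS : ∀ z : Fin r → ZMod p, p • Sf z = 0 := by
      intro z
      rw [hSf, sumHom_apply, Finset.smul_sum]
      rw [Finset.sum_eq_zero]
      intro j _
      rw [smul_comm, hpx j, smul_zero]
    -- the submodule of coefficient vectors landing in p^(k+1) G
    set T : Submodule (ZMod p) (Fin r → ZMod p) :=
      { carrier := {z | Sf z ∈ smulSub G (p ^ (k + 1))}
        add_mem' := fun {a b} ha hb => by
          simp only [Set.mem_setOf_eq, map_add] at *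
          exact add_mem ha hb
        zero_mem' := by
          simp only [Set.mem_setOf_eq, map_zero]
          exact zero_mem _
        smul_mem' := fun a z hz => by
          simp only [Set.mem_setOf_eq] at *
          have h1 : Sf (a • z) = a.val • Sf z := sumHom_smul x hpx a z
          rw [h1]
          exact AddSubgroup.nsmul_mem _ hz _ } with hT
    have hmemT : ∀ z : Fin r → ZMod p, z ∈ T ↔ Sf z ∈ smulSub G (p ^ (k + 1)) :=
      fun z => Iff.rfl
    -- cardinality bound on T
    have hcardT : Nat.card T ≤ c := by
      have hinj : Function.Injective
          (fun z : T => (⟨Sf z.1, z.2⟩ : smulSub G (p ^ (k + 1)))) := by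
        intro z1 z2 h
        have h1 : Sf z1.1 = Sf z2.1 := congrArg Subtype.val h
        have h0 : Sf (z1.1 - z2.1) = 0 := by rw [map_sub, h1, sub_self]
        exact Subtype.ext (sub_eq_zero.mp (hS0 _ h0))
      calc Nat.card T ≤ Nat.card (smulSub G (p ^ (k + 1))) :=
            Nat.card_le_card_of_injective _ hinj
        _ = c := hcardC
    haveI : Fintype T := Fintype.ofFinite T
    have hcard2 : Nat.card T = p ^ Module.finrank (ZMod p) T := by
      rw [Nat.card_eq_fintype_card, Module.card_eq_pow_finrank (K := ZMod p), ZMod.card]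
    have hftlt : Module.finrank (ZMod p) T < c := by
      have := Nat.lt_pow_self (n := Module.finrank (ZMod p) T) hp1
      omega
    obtain ⟨T', hT'⟩ := Submodule.exists_isCompl T
    have hfr : Module.finrank (ZMod p) T + Module.finrank (ZMod p) T' = r := by
      rw [Submodule.finrank_add_eq_of_isCompl hT', Module.finrank_fin_fun]
    have hm : m ≤ Module.finrank (ZMod p) T' := by omega
    set Bas := Module.finBasis (ZMod p) T' with hBas
    set v : Fin m → (Fin r → ZMod p) := fun i => (Bas (Fin.castLE hm i) : Fin r → ZMod p)
      with hv
    have hvT' : ∀ i, v i ∈ T' := fun i => Submodule.coe_mem _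
    have hvne : ∀ i, v i ≠ 0 := by
      intro i h
      exact Bas.ne_zero (Fin.castLE hm i) (Subtype.ext h)
    refine ⟨fun i => Sf (v i), fun i => ⟨?_, hSk _, ?_⟩, ?_⟩
    · exact addOrderOf_eq_prime (hpS (v i)) (fun h0 => hvne i (hS0 _ h0))
    · intro hmem
      have hvi : v i ∈ T ⊓ T' := ⟨(hmemT _).mpr hmem, hvT' i⟩
      rw [hT'.inf_eq_bot, Submodule.mem_bot] at hvi
      exact hvne i hvi
    · intro z hz
      have hsum : (∑ i, (z i).val • Sf (v i)) = Sf (∑ i, z i • v i) := by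
        rw [map_sum]
        refine Finset.sum_congr rfl fun i _ => ?_
        rw [hSf, sumHom_smul]
      rw [hsum] at hz
      have hwT : (∑ i, z i • v i) ∈ T := (hmemT _).mpr hz
      have hwT' : (∑ i, z i • v i) ∈ T' :=
        Submodule.sum_mem _ fun i _ => Submodule.smul_mem _ _ (hvT' i)
      have hw0 : (∑ i, z i • v i) = 0 := by
        have h2 : (∑ i, z i • v i) ∈ T ⊓ T' := ⟨hwT, hwT'⟩
        rwa [hT'.inf_eq_bot, Submodule.mem_bot] at h2
      have hw'0 : (∑ i, z i • Bas (Fin.castLE hm i)) = 0 := by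
        apply Subtype.ext
        push_cast
        rw [← hw0]
      have li : LinearIndependent (ZMod p) (fun i : Fin m => Bas (Fin.castLE hm i)) :=
        Bas.linearIndependent.comp _ (Fin.castLE_injective hm)
      exact Fintype.linearIndependent_iff.mp li z hw'0
  refine ⟨key, ?_⟩
  by_contra hinf
  rw [not_infinite_iff_finite] at hinf
  set Q := (Psub G p k) ⧸ ((Psub G p (k + 1)).addSubgroupOf (Psub G p k)) with hQ
  obtain ⟨b, hb, hind⟩ := key (Nat.card Q + 1)
  have hpb : ∀ i, p • b i = 0 := by
    intro i
    rw [← (hb i).1]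
    exact addOrderOf_nsmul_eq_zero (b i)
  have hmem : ∀ i, b i ∈ Psub G p k := by
    intro i
    refine AddSubgroup.mem_inf.mpr ⟨(hb i).2.1, ?_⟩
    show p • b i = 0
    exact hpb i
  set f : Fin (Nat.card Q + 1) → Q :=
    fun i => QuotientAddGroup.mk ⟨b i, hmem i⟩ with hf
  have finj : Function.Injective f := by
    intro i j h
    by_contra hne
    have h2 := QuotientAddGroup.eq.mp h
    rw [AddSubgroup.mem_addSubgroupOf] at h2
    have h3 : b j - b i ∈ smulSub G (p ^ (k + 1)) := by
      have := (AddSubgroup.mem_inf.mp h2).1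
      simpa [neg_add_eq_sub] using this
    have h4 : (∑ l, (((Pi.single j 1 - Pi.single i 1 : Fin (Nat.card Q + 1) → ZMod p)) l).val • b l)
        = b j - b i := by
      show sumHom b hpb (Pi.single j 1 - Pi.single i 1) = b j - b i
      rw [map_sub, sumHom_single, sumHom_single]
    have h5 := hind (Pi.single j 1 - Pi.single i 1) (by rw [h4]; exact h3) j
    rw [Pi.sub_apply, Pi.single_eq_same, Pi.single_eq_of_ne (Ne.symm hne), sub_zero] at h5
    exact one_ne_zero h5
  have hle := Nat.card_le_card_of_injective f finj
  simp only [Nat.card_eq_fintype_card, Fintype.card_fin] at hle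
  omega
end

section
/- Let S be a Π⁰₂ subset of ℕ, given with a computable approximation S_s such that n ∈ S iff n ∈ S_s for infinitely many s. Then there is a uniformly computable sequence of Q-vector spaces (A_n) with dim(A_n) = 1 if n ∈ S and dim(A_n) = 2 if n ∉ S. -/
/-- The lightface arithmetical hierarchy on subsets of ℕ: `SigmaN n` is Σ⁰ₙ. -/
def SigmaN : ℕ → (ℕ → Prop) → Prop
  | 0, S => ComputablePred S
  | n + 1, S => ∃ R : ℕ → Prop, SigmaN n R ∧ ∀ x, S x ↔ ∃ y, ¬ R (Nat.pair x y)

/-- `PiN n` is Π⁰ₙ. -/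
def PiN (n : ℕ) (S : ℕ → Prop) : Prop := SigmaN n fun x => ¬ S x

/-- `DeltaN n` is Δ⁰ₙ. -/
def DeltaN (n : ℕ) (S : ℕ → Prop) : Prop := SigmaN n S ∧ PiN n S

/-- `DSigmaN n` is the class of differences of two Σ⁰ₙ sets. -/
def DSigmaN (n : ℕ) (S : ℕ → Prop) : Prop :=
  ∃ S₁ S₂ : ℕ → Prop, SigmaN n S₁ ∧ SigmaN n S₂ ∧ ∀ x, S x ↔ S₁ x ∧ ¬ S₂ x

/-- Evaluation of the `e`-th partial computable function. -/
def codeEval (e : ℕ) : ℕ →. ℕ :=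
  (Denumerable.ofNat Nat.Partrec.Code e).eval

/-- A fixed computable surjection from ℕ onto ℚ, used to code scalars. -/
def ratOf (n : ℕ) : ℚ :=
  ((n.unpair.1.unpair.1 : ℚ) - (n.unpair.1.unpair.2 : ℚ)) / (n.unpair.2 : ℚ)

/-- `(add, smul, zero)` is a presentation of a ℚ-vector space on the universe ℕ,
with scalars coded by `ratOf`. -/
def IsVecPres (add smul : ℕ → ℕ → ℕ) (zero : ℕ) : Prop :=
  (∀ x y, add x y = add y x) ∧
  (∀ x y z, add (add x y) z = add x (add y z)) ∧
  (∀ x, add zero x = x) ∧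
  (∀ x, ∃ y, add x y = zero) ∧
  (∀ a b x, ratOf a = ratOf b → smul a x = smul b x) ∧
  (∀ a x, ratOf a = 1 → smul a x = x) ∧
  (∀ a x, ratOf a = 0 → smul a x = zero) ∧
  (∀ a x y, smul a (add x y) = add (smul a x) (smul a y)) ∧
  (∀ a b c x, ratOf c = ratOf a + ratOf b →
    smul c x = add (smul a x) (smul b x)) ∧
  (∀ a b c x, ratOf c = ratOf a * ratOf b → smul c x = smul a (smul b x))

/-- The linear combination `z₁ • b₁ + ⋯ + z_d • b_d` in a presentation. -/
def lcomb (add smul : ℕ → ℕ → ℕ) (zero : ℕ) {d : ℕ}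
    (z b : Fin d → ℕ) : ℕ :=
  (List.ofFn fun i => smul (z i) (b i)).foldr add zero

/-- The tuple `b` is linearly independent in the presentation. -/
def Indep (add smul : ℕ → ℕ → ℕ) (zero : ℕ) {d : ℕ} (b : Fin d → ℕ) : Prop :=
  ∀ z : Fin d → ℕ, lcomb add smul zero z b = zero → ∀ i, ratOf (z i) = 0

/-- The tuple `b` spans the presentation. -/
def Spans (add smul : ℕ → ℕ → ℕ) (zero : ℕ) {d : ℕ} (b : Fin d → ℕ) : Prop :=
  ∀ x : ℕ, ∃ z : Fin d → ℕ, lcomb add smul zero z b = x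

/-- The presented vector space has dimension `d`. -/
def DimEq (add smul : ℕ → ℕ → ℕ) (zero : ℕ) (d : ℕ) : Prop :=
  ∃ b : Fin d → ℕ, Indep add smul zero b ∧ Spans add smul zero b

/-- The presented vector space has infinite dimension. -/
def DimInf (add smul : ℕ → ℕ → ℕ) (zero : ℕ) : Prop :=
  ∀ d : ℕ, ∃ b : Fin d → ℕ, Indep add smul zero b

/-- The atomic diagram of a vector space presentation, coded as a set of
natural numbers. -/
def VDiag (add smul : ℕ → ℕ → ℕ) (zero : ℕ) (m : ℕ) : Prop :=
  (∃ x y, m = Nat.pair 0 (Nat.pair (Nat.pair x y) (add x y))) ∨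
  (∃ a x, m = Nat.pair 1 (Nat.pair (Nat.pair a x) (smul a x))) ∨
  m = Nat.pair 2 zero

/-- `e` is an index for (the characteristic function of the atomic diagram of)
the presentation `(add, smul, zero)`. -/
def IsVIndex (e : ℕ) (add smul : ℕ → ℕ → ℕ) (zero : ℕ) : Prop :=
  ∀ m, (VDiag add smul zero m → codeEval e m = Part.some 1) ∧
    (¬ VDiag add smul zero m → codeEval e m = Part.some 0)

/-- The index set of the class of computable ℚ-vector spaces. -/
def IVS (e : ℕ) : Prop :=
  ∃ add smul zero, IsVecPres add smul zero ∧ IsVIndex e add smul zero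

/-- `I` is m-complete `Γ` within `IK`: `I` is the intersection of a `Γ` set
with `IK`, and every `Γ` set m-reduces to `I` via a computable function whose
values lie in `IK`. -/
def MCompleteWithin (Γ : (ℕ → Prop) → Prop) (I IK : ℕ → Prop) : Prop :=
  (∃ R : ℕ → Prop, Γ R ∧ ∀ e, I e ↔ R e ∧ IK e) ∧
  ∀ S : ℕ → Prop, Γ S → ∃ f : ℕ → ℕ, Computable f ∧
    (∀ n, IK (f n)) ∧ ∀ n, S n ↔ I (f n)

namespace VSAux

def pA (n : ℕ) : ℕ := n.unpair.1.unpair.1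
def qA (n : ℕ) : ℕ := n.unpair.1.unpair.2
def dA (n : ℕ) : ℕ := n.unpair.2

theorem ratOf_eq (n : ℕ) : ratOf n = ((pA n : ℚ) - (qA n : ℚ)) / (dA n : ℚ) := rfl

def normC (a : ℕ) : ℕ := if dA a = 0 then Nat.pair (Nat.pair 0 0) 1 else a

theorem pA_pair (p q r : ℕ) : pA (Nat.pair (Nat.pair p q) r) = p := by
  simp [pA, Nat.unpair_pair]
theorem qA_pair (p q r : ℕ) : qA (Nat.pair (Nat.pair p q) r) = q := by
  simp [qA, Nat.unpair_pair]
theorem dA_pair (p q r : ℕ) : dA (Nat.pair (Nat.pair p q) r) = r := by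
  simp [dA, Nat.unpair_pair]

theorem ratOf_pair (p q r : ℕ) :
    ratOf (Nat.pair (Nat.pair p q) r) = ((p : ℚ) - (q : ℚ)) / (r : ℚ) := by
  rw [ratOf_eq, pA_pair, qA_pair, dA_pair]

theorem ratOf_normC (a : ℕ) : ratOf (normC a) = ratOf a := by
  unfold normC
  split
  · rename_i h
    rw [ratOf_pair, ratOf_eq, h]
    simp
  · rfl

theorem dA_normC_pos (a : ℕ) : 0 < dA (normC a) := by
  unfold normC
  split
  · rw [dA_pair]; norm_num
  · omega

def cEq (a b : ℕ) : Bool :=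
  pA (normC a) * dA (normC b) + qA (normC b) * dA (normC a) ==
    qA (normC a) * dA (normC b) + pA (normC b) * dA (normC a)

theorem cEq_iff {a b : ℕ} : cEq a b = true ↔ ratOf a = ratOf b := by
  rw [← ratOf_normC a, ← ratOf_normC b]
  have h1 := dA_normC_pos a
  have h2 := dA_normC_pos b
  rw [cEq, beq_iff_eq, ratOf_eq, ratOf_eq]
  rw [div_eq_div_iff (by exact_mod_cast h1.ne') (by exact_mod_cast h2.ne')]
  constructor
  · intro h
    have : ((pA (normC a) * dA (normC b) + qA (normC b) * dA (normC a) : ℕ) : ℚ)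
        = ((qA (normC a) * dA (normC b) + pA (normC b) * dA (normC a) : ℕ) : ℚ) := by
      exact_mod_cast h
    push_cast at this
    linarith
  · intro h
    have : ((pA (normC a) * dA (normC b) + qA (normC b) * dA (normC a) : ℕ) : ℚ)
        = ((qA (normC a) * dA (normC b) + pA (normC b) * dA (normC a) : ℕ) : ℚ) := by
      push_cast
      linarith
    exact_mod_cast this

theorem ratOf_surjective : Function.Surjective ratOf := by
  intro q
  refine ⟨Nat.pair (Nat.pair q.num.toNat (-q.num).toNat) q.den, ?_⟩
  rw [ratOf_pair]
  have hden : (q.den : ℚ) ≠ 0 := by exact_mod_cast q.den_nz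
  rcases le_or_gt 0 q.num with h | h
  · have h1 : ((q.num.toNat : ℚ)) = (q.num : ℚ) := by exact_mod_cast Int.toNat_of_nonneg h
    have h2 : (-q.num).toNat = 0 := by omega
    rw [h1, h2]
    push_cast
    rw [sub_zero]
    exact_mod_cast Rat.num_div_den q
  · have h1 : q.num.toNat = 0 := by omega
    have h2 : ((((-q.num).toNat : ℕ)) : ℚ) = (-q.num : ℚ) := by
      exact_mod_cast Int.toNat_of_nonneg (by omega)
    rw [h1, h2]
    push_cast
    rw [zero_sub, neg_neg]
    exact_mod_cast Rat.num_div_den q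

def canonC (a : ℕ) : ℕ := (List.range (a + 1)).findIdx (fun k => cEq k a)

theorem canonC_eq_find (a : ℕ) :
    canonC a = Nat.find (⟨a, rfl⟩ : ∃ k, ratOf k = ratOf a) := by
  have hex : ∃ x ∈ List.range (a + 1), (fun k => cEq k a) x = true := by
    exact ⟨a, by simp, cEq_iff.2 rfl⟩
  have hlt := List.findIdx_lt_length_of_exists hex
  apply le_antisymm
  · -- Nat.find satisfies the pred and is ≤ a, so findIdx ≤ Nat.find
    by_contra hc
    push_neg at hc
    have hfind := Nat.find_spec (⟨a, rfl⟩ : ∃ k, ratOf k = ratOf a)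
    have hle : Nat.find (⟨a, rfl⟩ : ∃ k, ratOf k = ratOf a) ≤ a :=
      Nat.find_le rfl
    have hlen : Nat.find (⟨a, rfl⟩ : ∃ k, ratOf k = ratOf a) < (List.range (a+1)).length := by
      simpa using Nat.lt_succ_of_le hle
    have := List.not_of_lt_findIdx (xs := List.range (a+1)) (p := fun k => cEq k a) hc
    rw [List.getElem_range] at this
    rw [cEq_iff.symm] at hfind
    simp [hfind] at this
  · apply Nat.find_le
    have := List.findIdx_getElem (w := hlt)
    rw [List.getElem_range] at this
    exact cEq_iff.1 this

theorem ratOf_canonC (a : ℕ) : ratOf (canonC a) = ratOf a := by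
  rw [canonC_eq_find]; exact Nat.find_spec (⟨a, rfl⟩ : ∃ k, ratOf k = ratOf a)

theorem canonC_eq_of_ratOf_eq {a b : ℕ} (h : ratOf a = ratOf b) : canonC a = canonC b := by
  rw [canonC_eq_find, canonC_eq_find]
  congr 1
  · simp [h]

theorem canonC_idem (a : ℕ) : canonC (canonC a) = canonC a := by
  have h := canonC_eq_of_ratOf_eq (ratOf_canonC a)
  rw [h]

theorem canonC_inj {a b : ℕ} (ha : canonC a = a) (hb : canonC b = b)
    (h : ratOf a = ratOf b) : a = b := by
  rw [← ha, ← hb]; exact canonC_eq_of_ratOf_eq h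

theorem ratOf_zero : ratOf 0 = 0 := by
  have : (0 : ℕ).unpair = (0, 0) := rfl
  simp [ratOf, this]

theorem canonC_zero : canonC 0 = 0 := by
  rw [canonC_eq_find]
  simp

theorem canonC_eq_zero_of {a : ℕ} (ha : canonC a = a) (h : ratOf a = 0) : a = 0 := by
  apply canonC_inj ha canonC_zero
  rw [h, ratOf_zero]

def cAdd (a b : ℕ) : ℕ :=
  Nat.pair
    (Nat.pair (pA (normC a) * dA (normC b) + pA (normC b) * dA (normC a))
      (qA (normC a) * dA (normC b) + qA (normC b) * dA (normC a)))
    (dA (normC a) * dA (normC b))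

theorem ratOf_cAdd (a b : ℕ) : ratOf (cAdd a b) = ratOf a + ratOf b := by
  rw [← ratOf_normC a, ← ratOf_normC b]
  have h1 := dA_normC_pos a
  have h2 := dA_normC_pos b
  rw [cAdd, ratOf_pair, ratOf_eq, ratOf_eq]
  have c1 : (dA (normC a) : ℚ) ≠ 0 := by exact_mod_cast h1.ne'
  have c2 : (dA (normC b) : ℚ) ≠ 0 := by exact_mod_cast h2.ne'
  field_simp
  push_cast
  ring

def cMul (a b : ℕ) : ℕ :=
  Nat.pair
    (Nat.pair (pA (normC a) * pA (normC b) + qA (normC a) * qA (normC b))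
      (pA (normC a) * qA (normC b) + qA (normC a) * pA (normC b)))
    (dA (normC a) * dA (normC b))

theorem ratOf_cMul (a b : ℕ) : ratOf (cMul a b) = ratOf a * ratOf b := by
  rw [← ratOf_normC a, ← ratOf_normC b]
  have h1 := dA_normC_pos a
  have h2 := dA_normC_pos b
  rw [cMul, ratOf_pair, ratOf_eq, ratOf_eq]
  have c1 : (dA (normC a) : ℚ) ≠ 0 := by exact_mod_cast h1.ne'
  have c2 : (dA (normC b) : ℚ) ≠ 0 := by exact_mod_cast h2.ne'
  field_simp
  push_cast
  ring

def natC (k : ℕ) : ℕ := Nat.pair (Nat.pair k 0) 1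

theorem ratOf_natC (k : ℕ) : ratOf (natC k) = k := by
  rw [natC, ratOf_pair]; simp

end VSAux

namespace VSAux

-- ## Vector codes

def sem (v : ℕ) : ℚ × ℚ := (ratOf v.unpair.1, ratOf v.unpair.2)

def vcan (v : ℕ) : ℕ := Nat.pair (canonC v.unpair.1) (canonC v.unpair.2)

theorem sem_vcan (v : ℕ) : sem (vcan v) = sem v := by
  simp [sem, vcan, Nat.unpair_pair, ratOf_canonC]

theorem vcan_idem (v : ℕ) : vcan (vcan v) = vcan v := by
  simp [vcan, Nat.unpair_pair, canonC_idem]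

theorem vcan_eq_of_sem {v w : ℕ} (h : sem v = sem w) : vcan v = vcan w := by
  rw [sem, sem, Prod.mk.injEq] at h
  rw [vcan, vcan, canonC_eq_of_ratOf_eq h.1, canonC_eq_of_ratOf_eq h.2]

theorem vc_inj {v w : ℕ} (hv : vcan v = v) (hw : vcan w = w) (h : sem v = sem w) :
    v = w := by
  rw [← hv, ← hw]; exact vcan_eq_of_sem h

theorem vcan_zero : vcan 0 = 0 := by
  have h : (0 : ℕ).unpair = (0, 0) := rfl
  rw [vcan, h]
  simp only [canonC_zero]
  rfl

theorem sem_zero : sem 0 = 0 := by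
  have h : (0 : ℕ).unpair = (0, 0) := rfl
  rw [sem, h]
  simp only [ratOf_zero]
  rfl

def vAdd (v w : ℕ) : ℕ :=
  vcan (Nat.pair (cAdd v.unpair.1 w.unpair.1) (cAdd v.unpair.2 w.unpair.2))

theorem sem_vAdd (v w : ℕ) : sem (vAdd v w) = sem v + sem w := by
  rw [vAdd, sem_vcan]
  simp only [sem, Nat.unpair_pair, ratOf_cAdd]
  rfl

theorem vcan_vAdd (v w : ℕ) : vcan (vAdd v w) = vAdd v w := vcan_idem _

def vSmul (a v : ℕ) : ℕ :=
  vcan (Nat.pair (cMul a v.unpair.1) (cMul a v.unpair.2))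

theorem sem_vSmul (a v : ℕ) : sem (vSmul a v) = ratOf a • sem v := by
  rw [vSmul, sem_vcan]
  simp only [sem, Nat.unpair_pair, ratOf_cMul]
  rfl

theorem vcan_vSmul (a v : ℕ) : vcan (vSmul a v) = vSmul a v := vcan_idem _

theorem sem_surjective : ∀ p : ℚ × ℚ, ∃ v : ℕ, vcan v = v ∧ sem v = p := by
  rintro ⟨q₁, q₂⟩
  obtain ⟨a, ha⟩ := ratOf_surjective q₁
  obtain ⟨b, hb⟩ := ratOf_surjective q₂
  refine ⟨vcan (Nat.pair a b), vcan_idem _, ?_⟩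
  rw [sem_vcan]
  simp [sem, Nat.unpair_pair, ha, hb]

theorem snd_eq_zero_of {v : ℕ} (hv : vcan v = v) (h : (sem v).2 = 0) :
    v.unpair.2 = 0 := by
  have h2 : canonC v.unpair.2 = v.unpair.2 := by
    have := congrArg (fun x => x.unpair.2) hv
    simpa [vcan, Nat.unpair_pair] using this
  exact canonC_eq_zero_of h2 h

-- the collapse map
def phi (k v : ℕ) : ℕ :=
  Nat.pair (canonC (cAdd v.unpair.1 (cMul (natC k) v.unpair.2))) 0

theorem sem_phi (k v : ℕ) : sem (phi k v) = ((sem v).1 + k * (sem v).2, 0) := by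
  simp [phi, sem, Nat.unpair_pair, ratOf_canonC, ratOf_cAdd, ratOf_cMul, ratOf_natC,
    ratOf_zero]

theorem vcan_phi (k v : ℕ) : vcan (phi k v) = phi k v := by
  simp [phi, vcan, Nat.unpair_pair, canonC_idem, canonC_zero]

theorem phi_fix {k v : ℕ} (hv : vcan v = v) (h : (sem v).2 = 0) : phi k v = v := by
  have h2 : v.unpair.2 = 0 := snd_eq_zero_of hv h
  have h1 : canonC v.unpair.1 = v.unpair.1 := by
    have := congrArg (fun x => x.unpair.1) hv
    simpa [vcan, Nat.unpair_pair] using this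
  have hr : ratOf (cAdd v.unpair.1 (cMul (natC k) v.unpair.2)) = ratOf v.unpair.1 := by
    rw [ratOf_cAdd, ratOf_cMul, h2, ratOf_zero]
    ring
  have : canonC (cAdd v.unpair.1 (cMul (natC k) v.unpair.2)) = v.unpair.1 := by
    rw [canonC_eq_of_ratOf_eq hr, h1]
  rw [phi, this, ← h2, Nat.pair_unpair]

theorem sem_inj_of_ne {v w : ℕ} (hv : vcan v = v) (hw : vcan w = w) (h : v ≠ w) :
    sem v ≠ sem w := fun hs => h (vc_inj hv hw hs)

end VSAux

namespace VSAux

-- ## List layer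

def nodupB (L : List ℕ) : Bool :=
  (L.foldr (fun a p => ((p.2.idxOf a == p.2.length) && p.1, a :: p.2)) (true, [])).1

theorem nodupB_spec (L : List ℕ) :
    (L.foldr (fun a (p : Bool × List ℕ) =>
      ((p.2.idxOf a == p.2.length) && p.1, a :: p.2)) (true, [])).2 = L ∧
    (nodupB L = true ↔ L.Nodup) := by
  induction L with
  | nil => simp [nodupB]
  | cons a L ih =>
    rw [nodupB] at *
    simp only [List.foldr_cons]
    obtain ⟨h2, hiff⟩ := ih
    rw [h2]
    constructor
    · rfl
    · simp only [Bool.and_eq_true, beq_iff_eq, List.idxOf_eq_length_iff, List.nodup_cons]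
      exact and_congr Iff.rfl hiff

theorem nodupB_iff {L : List ℕ} : nodupB L = true ↔ L.Nodup := (nodupB_spec L).2

def goodk (L : List ℕ) : ℕ :=
  (List.range (L.length * L.length + 1)).findIdx (fun k => nodupB (L.map (phi k)))

def collapseL (L : List ℕ) : List ℕ := L.map (phi (goodk L))

def natV (k : ℕ) : ℕ := Nat.pair (canonC (natC k)) 0

theorem vcan_natV (k : ℕ) : vcan (natV k) = natV k := by
  simp [natV, vcan, Nat.unpair_pair, canonC_idem, canonC_zero]

theorem natV_inj : Function.Injective natV := by
  intro j k h
  have : sem (natV j) = sem (natV k) := by rw [h]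
  simp only [natV, sem, Nat.unpair_pair, ratOf_canonC, ratOf_natC, Prod.mk.injEq] at this
  exact_mod_cast this.1

def freshV (L : List ℕ) : ℕ :=
  natV ((List.range (L.length + 1)).findIdx (fun k => L.idxOf (natV k) == L.length))

theorem freshV_not_mem (L : List ℕ) : freshV L ∉ L := by
  have hex : ∃ x ∈ List.range (L.length + 1), (fun k => L.idxOf (natV k) == L.length) x = true := by
    by_contra hc
    push_neg at hc
    have hall : ∀ k < L.length + 1, natV k ∈ L := by
      intro k hk
      have := hc k (by simpa using hk)
      simp only [ne_eq, beq_iff_eq, List.idxOf_eq_length_iff, not_not] at this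
      exact this
    have hsub : (Finset.range (L.length + 1)).image natV ⊆ L.toFinset := by
      intro x hx
      simp only [Finset.mem_image, Finset.mem_range] at hx
      obtain ⟨k, hk, rfl⟩ := hx
      simpa using hall k hk
    have hcard := Finset.card_le_card hsub
    rw [Finset.card_image_of_injective _ natV_inj, Finset.card_range] at hcard
    have := L.toFinset_card_le
    omega
  have hlt := List.findIdx_lt_length_of_exists hex
  have := List.findIdx_getElem (w := hlt)
  rw [List.getElem_range] at this
  simp only [beq_iff_eq, List.idxOf_eq_length_iff] at this
  exact this

theorem vcan_freshV (L : List ℕ) : vcan (freshV L) = freshV L := vcan_natV _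

def padL (L : List ℕ) : List ℕ := L ++ [freshV L]

def aia (v : ℕ) (L : List ℕ) : List ℕ :=
  if L.idxOf v < L.length then L else L ++ [v]

theorem mem_aia (v : ℕ) (L : List ℕ) : v ∈ aia v L := by
  rw [aia]
  split
  · rename_i h
    exact List.idxOf_lt_length_iff.mp h
  · simp

theorem aia_prefix (v : ℕ) (L : List ℕ) (i : ℕ) (hi : i < L.length) :
    (aia v L).getD i 0 = L.getD i 0 := by
  rw [aia]
  split
  · rfl
  · rw [List.getD_eq_getElem _ _ hi, List.getD_eq_getElem _ _ (by simp; omega)]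
    exact List.getElem_append_left hi

theorem aia_nodup {v : ℕ} {L : List ℕ} (h : L.Nodup) : (aia v L).Nodup := by
  rw [aia]
  split
  · exact h
  · rename_i hv
    rw [List.idxOf_lt_length_iff] at hv
    simp only [List.nodup_append, List.nodup_cons]
    refine ⟨h, by simp, ?_⟩
    intro a ha b hb heq
    simp only [List.mem_singleton] at hb
    subst hb
    exact hv (heq ▸ ha)

theorem aia_sublist (v : ℕ) (L : List ℕ) : ∀ w ∈ aia v L, w = v ∨ w ∈ L := by
  intro w hw
  rw [aia] at hw
  split at hw
  · exact Or.inr hw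
  · rcases List.mem_append.mp hw with h | h
    · exact Or.inr h
    · simp at h; exact Or.inl h

theorem length_aia_ge (v : ℕ) (L : List ℕ) : L.length ≤ (aia v L).length := by
  rw [aia]; split
  · exact le_rfl
  · simp

theorem mem_of_mem_aia' {v w : ℕ} {L : List ℕ} (h : w ∈ L) : w ∈ aia v L := by
  rw [aia]; split
  · exact h
  · exact List.mem_append_left _ h

def taskL (s : ℕ) (L : List ℕ) : List ℕ :=
  let j := s.unpair.1
  let m := j.unpair.1
  let u := j.unpair.2
  if m = 0 then aia (vAdd (L.getD u.unpair.1 0) (L.getD u.unpair.2 0)) L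
  else if m = 1 then aia (vSmul u.unpair.1 (L.getD u.unpair.2 0)) L
  else aia (vcan u) L

def stepL (b : Bool) (s : ℕ) (L : List ℕ) : List ℕ :=
  taskL s (padL (cond b (collapseL L) L))

def stateL (Sa : ℕ → ℕ → Bool) (n s : ℕ) : List ℕ :=
  Nat.rec [0] (fun t L => stepL (Sa n t) t L) s

def AddF (Sa : ℕ → ℕ → Bool) (n x y : ℕ) : ℕ :=
  let N := stateL Sa n (Nat.pair (Nat.pair 0 (Nat.pair x y)) (max x y) + 1)
  N.idxOf (vAdd (N.getD x 0) (N.getD y 0))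

def SmulF (Sa : ℕ → ℕ → Bool) (n a x : ℕ) : ℕ :=
  let N := stateL Sa n (Nat.pair (Nat.pair 1 (Nat.pair a x)) x + 1)
  N.idxOf (vSmul a (N.getD x 0))

end VSAux

namespace VSAux

-- ## the collapse linear map

def chi (k : ℚ) : (ℚ × ℚ) →ₗ[ℚ] (ℚ × ℚ) where
  toFun p := (p.1 + k * p.2, 0)
  map_add' p q := by
    refine Prod.ext ?_ (by simp)
    simp only [Prod.fst_add, Prod.snd_add]
    ring
  map_smul' c p := by
    refine Prod.ext ?_ (by simp)
    simp only [Prod.smul_fst, Prod.smul_snd, RingHom.id_apply, smul_eq_mul]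
    ring

theorem chi_apply (k : ℚ) (p : ℚ × ℚ) : chi k p = (p.1 + k * p.2, 0) := rfl

theorem sem_phi' (k v : ℕ) : sem (phi k v) = chi (k : ℚ) (sem v) := by
  rw [sem_phi, chi_apply]

-- ## goodk works

theorem exists_goodk {L : List ℕ} (hnd : L.Nodup) (hvc : ∀ v ∈ L, vcan v = v) :
    ∃ x ∈ List.range (L.length * L.length + 1), (fun k => nodupB (L.map (phi k))) x = true := by
  by_contra hc
  push_neg at hc
  have hbad : ∀ k, ∃ p : ℕ × ℕ, k < L.length * L.length + 1 →
      p.1 < L.length ∧ p.2 < L.length ∧ p.1 ≠ p.2 ∧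
        phi k (L.getD p.1 0) = phi k (L.getD p.2 0) := by
    intro k
    by_cases hk : k < L.length * L.length + 1
    · have h1 := hc k (List.mem_range.mpr hk)
      simp only [ne_eq, Bool.not_eq_true] at h1
      have h2 : ¬ (L.map (phi k)).Nodup := by
        intro hnd2
        rw [← nodupB_iff] at hnd2
        simp [hnd2] at h1
      rw [List.nodup_iff_injective_getElem, Function.not_injective_iff] at h2
      obtain ⟨i, j, hij, hne⟩ := h2
      refine ⟨(i.1, j.1), fun _ => ⟨by simpa using i.2, by simpa using j.2, ?_, ?_⟩⟩
      · simpa [Fin.ext_iff] using hne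
      · have hi : (i : ℕ) < L.length := by simpa using i.2
        have hj : (j : ℕ) < L.length := by simpa using j.2
        rw [List.getElem_map, List.getElem_map] at hij
        rw [List.getD_eq_getElem _ _ hi, List.getD_eq_getElem _ _ hj]
        exact hij
    · exact ⟨(0, 0), fun h => absurd h hk⟩
  choose f hf using hbad
  have hinj : ∀ k < L.length * L.length + 1, ∀ k' < L.length * L.length + 1,
      f k = f k' → k = k' := by
    intro k hk k' hk' heq
    obtain ⟨hi1, hj1, hne1, hcol1⟩ := hf k hk
    obtain ⟨hi2, hj2, hne2, hcol2⟩ := hf k' hk'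
    rw [← heq] at hcol2
    by_contra hkk
    have e1 : chi (k : ℚ) (sem (L.getD (f k).1 0)) = chi (k : ℚ) (sem (L.getD (f k).2 0)) := by
      rw [← sem_phi', ← sem_phi', hcol1]
    have e2 : chi (k' : ℚ) (sem (L.getD (f k).1 0)) = chi (k' : ℚ) (sem (L.getD (f k).2 0)) := by
      rw [← sem_phi', ← sem_phi', hcol2]
    rw [chi_apply, chi_apply, Prod.mk.injEq] at e1 e2
    have e1' := e1.1
    have e2' := e2.1
    have hk2 : (k : ℚ) ≠ (k' : ℚ) := by exact_mod_cast hkk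
    have h3 : ((k : ℚ) - k') * ((sem (L.getD (f k).1 0)).2 - (sem (L.getD (f k).2 0)).2) = 0 := by
      ring_nf
      ring_nf at e1' e2'
      linarith
    have hsnd : (sem (L.getD (f k).1 0)).2 = (sem (L.getD (f k).2 0)).2 := by
      rcases mul_eq_zero.mp h3 with h | h
      · exact absurd (sub_eq_zero.mp h) hk2
      · exact sub_eq_zero.mp h
    have hfst : (sem (L.getD (f k).1 0)).1 = (sem (L.getD (f k).2 0)).1 := by
      rw [hsnd] at e1'
      linarith
    have humem : L.getD (f k).1 0 ∈ L := by
      rw [List.getD_eq_getElem _ _ hi1]; exact List.getElem_mem _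
    have hwmem : L.getD (f k).2 0 ∈ L := by
      rw [List.getD_eq_getElem _ _ hj1]; exact List.getElem_mem _
    have heqv : L.getD (f k).1 0 = L.getD (f k).2 0 :=
      vc_inj (hvc _ humem) (hvc _ hwmem) (Prod.ext hfst hsnd)
    rw [List.getD_eq_getElem _ _ hi1, List.getD_eq_getElem _ _ hj1] at heqv
    rw [List.nodup_iff_injective_getElem] at hnd
    have : (⟨(f k).1, hi1⟩ : Fin L.length) = ⟨(f k).2, hj1⟩ := hnd heqv
    simp only [Fin.mk.injEq] at this
    exact hne1 this
  have hss : (Finset.range (L.length * L.length + 1)).card ≤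
      (Finset.range L.length ×ˢ Finset.range L.length).card := by
    apply Finset.card_le_card_of_injOn f
    · intro k hk
      rw [Finset.mem_coe, Finset.mem_range] at hk
      obtain ⟨h1, h2, _, _⟩ := hf k hk
      simp [Finset.mem_product, h1, h2]
    · intro a ha b hb hab
      exact hinj a (Finset.mem_range.mp ha) b (Finset.mem_range.mp hb) hab
  simp only [Finset.card_range, Finset.card_product] at hss
  omega

theorem collapseL_spec {L : List ℕ} (hnd : L.Nodup) (hvc : ∀ v ∈ L, vcan v = v) :
    (collapseL L).Nodup := by
  have hex := exists_goodk hnd hvc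
  have hlt := List.findIdx_lt_length_of_exists hex
  have h := List.findIdx_getElem (w := hlt)
  rw [List.getElem_range] at h
  rw [collapseL]
  exact nodupB_iff.mp h

end VSAux

namespace VSAux

-- ## step-level lemmas

theorem taskL_eq (s : ℕ) (L : List ℕ) : ∃ v, vcan v = v ∧ taskL s L = aia v L := by
  rw [taskL]
  split
  · exact ⟨_, vcan_vAdd _ _, rfl⟩
  · split
    · exact ⟨_, vcan_vSmul _ _, rfl⟩
    · exact ⟨_, vcan_idem _, rfl⟩

theorem condL_inv {b : Bool} {L : List ℕ} (hnd : L.Nodup) (hvc : ∀ v ∈ L, vcan v = v) :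
    (cond b (collapseL L) L).Nodup ∧ ∀ v ∈ cond b (collapseL L) L, vcan v = v := by
  cases b
  · exact ⟨hnd, hvc⟩
  · refine ⟨collapseL_spec hnd hvc, ?_⟩
    intro v hv
    simp only [cond_true, collapseL, List.mem_map] at hv
    obtain ⟨w, _, rfl⟩ := hv
    exact vcan_phi _ _

theorem padL_inv {L : List ℕ} (hnd : L.Nodup) (hvc : ∀ v ∈ L, vcan v = v) :
    (padL L).Nodup ∧ ∀ v ∈ padL L, vcan v = v := by
  constructor
  · rw [padL, List.nodup_append]
    refine ⟨hnd, List.nodup_singleton _, ?_⟩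
    intro a ha b hb heq
    simp only [List.mem_singleton] at hb
    subst hb
    exact freshV_not_mem L (heq ▸ ha)
  · intro v hv
    rw [padL, List.mem_append] at hv
    rcases hv with h | h
    · exact hvc v h
    · simp only [List.mem_singleton] at h
      subst h
      exact vcan_freshV L

theorem stepL_inv {b : Bool} {s : ℕ} {L : List ℕ} (hnd : L.Nodup)
    (hvc : ∀ v ∈ L, vcan v = v) :
    (stepL b s L).Nodup ∧ ∀ v ∈ stepL b s L, vcan v = v := by
  obtain ⟨h1, h2⟩ := condL_inv hnd hvc (b := b)
  obtain ⟨h3, h4⟩ := padL_inv h1 h2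
  obtain ⟨v, hv, heq⟩ := taskL_eq s (padL (cond b (collapseL L) L))
  rw [stepL, heq]
  refine ⟨aia_nodup h3, ?_⟩
  intro w hw
  rcases aia_sublist _ _ _ hw with h | h
  · subst h; exact hv
  · exact h4 w h

theorem taskL_len (s : ℕ) (L : List ℕ) : L.length ≤ (taskL s L).length := by
  obtain ⟨v, _, heq⟩ := taskL_eq s L
  rw [heq]
  exact length_aia_ge _ _

theorem stepL_len (b : Bool) (s : ℕ) (L : List ℕ) :
    L.length + 1 ≤ (stepL b s L).length := by
  rw [stepL]
  refine le_trans ?_ (taskL_len _ _)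
  rw [padL]
  cases b <;> simp [collapseL]

theorem padL_prefix (L : List ℕ) (i : ℕ) (hi : i < L.length) :
    (padL L).getD i 0 = L.getD i 0 := by
  rw [padL, List.getD_eq_getElem _ _ hi, List.getD_eq_getElem _ _ (by simp; omega)]
  exact List.getElem_append_left hi

theorem taskL_prefix (s : ℕ) (L : List ℕ) (i : ℕ) (hi : i < L.length) :
    (taskL s L).getD i 0 = L.getD i 0 := by
  obtain ⟨v, _, heq⟩ := taskL_eq s L
  rw [heq]
  exact aia_prefix _ _ _ hi

theorem collapseL_getD (L : List ℕ) (i : ℕ) (hi : i < L.length) :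
    (collapseL L).getD i 0 = phi (goodk L) (L.getD i 0) := by
  rw [collapseL, List.getD_eq_getElem _ _ (by simpa), List.getD_eq_getElem _ _ hi]
  exact List.getElem_map _

theorem condL_len (b : Bool) (L : List ℕ) : (cond b (collapseL L) L).length = L.length := by
  cases b <;> simp [collapseL]

theorem stepL_prefix_getD (b : Bool) (s : ℕ) (L : List ℕ) (i : ℕ) (hi : i < L.length) :
    (stepL b s L).getD i 0 = (cond b (collapseL L) L).getD i 0 := by
  rw [stepL, taskL_prefix _ _ _ (by rw [padL]; simp [condL_len]; omega),
    padL_prefix _ _ (by rw [condL_len]; omega)]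

theorem stepL_prefix (b : Bool) (s : ℕ) (L : List ℕ) :
    ∃ χ : (ℚ × ℚ) →ₗ[ℚ] (ℚ × ℚ), ∀ i < L.length,
      sem ((stepL b s L).getD i 0) = χ (sem (L.getD i 0)) := by
  cases b
  · refine ⟨LinearMap.id, ?_⟩
    intro i hi
    rw [stepL_prefix_getD _ _ _ _ hi]
    simp
  · refine ⟨chi (goodk L : ℚ), ?_⟩
    intro i hi
    rw [stepL_prefix_getD _ _ _ _ hi]
    simp only [cond_true]
    rw [collapseL_getD _ _ hi]
    exact sem_phi' _ _

-- ## state-level lemmas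

section State

variable (Sa : ℕ → ℕ → Bool) (n : ℕ)

theorem state_zero : stateL Sa n 0 = [0] := rfl

theorem state_succ (s : ℕ) :
    stateL Sa n (s + 1) = stepL (Sa n s) s (stateL Sa n s) := rfl

theorem getD_mem {L : List ℕ} {i : ℕ} (h : i < L.length) : L.getD i 0 ∈ L := by
  rw [List.getD_eq_getElem _ _ h]; exact List.getElem_mem _

theorem state_inv (s : ℕ) :
    (stateL Sa n s).Nodup ∧ ∀ v ∈ stateL Sa n s, vcan v = v := by
  induction s with
  | zero =>
    rw [state_zero]
    refine ⟨List.nodup_singleton 0, ?_⟩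
    intro v hv
    simp only [List.mem_singleton] at hv
    rw [hv]
    exact vcan_zero
  | succ s ih =>
    rw [state_succ]
    exact stepL_inv ih.1 ih.2

theorem state_nodup (s : ℕ) : (stateL Sa n s).Nodup := (state_inv Sa n s).1

theorem state_vcan (s : ℕ) : ∀ v ∈ stateL Sa n s, vcan v = v := (state_inv Sa n s).2

theorem state_length (s : ℕ) : s + 1 ≤ (stateL Sa n s).length := by
  induction s with
  | zero => rw [state_zero]; simp
  | succ s ih =>
    rw [state_succ]
    have := stepL_len (Sa n s) s (stateL Sa n s)
    omega

theorem state_length_mono {s t : ℕ} (h : s ≤ t) :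
    (stateL Sa n s).length ≤ (stateL Sa n t).length := by
  induction t with
  | zero => rw [Nat.le_zero.mp h]
  | succ t ih =>
    rcases Nat.lt_or_ge s (t+1) with h' | h'
    · have := ih (by omega)
      rw [state_succ]
      have h2 := stepL_len (Sa n t) t (stateL Sa n t)
      omega
    · rw [Nat.le_antisymm h h']

theorem state_prefix {s t : ℕ} (h : s ≤ t) :
    ∃ ψ : (ℚ × ℚ) →ₗ[ℚ] (ℚ × ℚ), ∀ i < (stateL Sa n s).length,
      sem ((stateL Sa n t).getD i 0) = ψ (sem ((stateL Sa n s).getD i 0)) := by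
  induction t with
  | zero =>
    rw [Nat.le_zero.mp h]
    exact ⟨LinearMap.id, fun i _ => by simp⟩
  | succ t ih =>
    rcases Nat.lt_or_ge s (t+1) with h' | h'
    · obtain ⟨ψ, hψ⟩ := ih (by omega)
      obtain ⟨χ, hχ⟩ := stepL_prefix (Sa n t) t (stateL Sa n t)
      refine ⟨χ.comp ψ, ?_⟩
      intro i hi
      have hlen : i < (stateL Sa n t).length :=
        lt_of_lt_of_le hi (state_length_mono Sa n (by omega))
      rw [state_succ, hχ i hlen, hψ i hi]
      simp
    · rw [Nat.le_antisymm h h']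
      exact ⟨LinearMap.id, fun i _ => by simp⟩

theorem state_stable {s i : ℕ} (hi : i < (stateL Sa n s).length)
    (h0 : ((stateL Sa n s).getD i 0).unpair.2 = 0) :
    ∀ t, s ≤ t → (stateL Sa n t).getD i 0 = (stateL Sa n s).getD i 0 := by
  intro t ht
  induction t with
  | zero => rw [Nat.le_zero.mp ht]
  | succ t ih =>
    rcases Nat.lt_or_ge s (t+1) with h' | h'
    · have hprev := ih (by omega)
      have hlen : i < (stateL Sa n t).length :=
        lt_of_lt_of_le hi (state_length_mono Sa n (by omega))
      have hmem : (stateL Sa n t).getD i 0 ∈ stateL Sa n t := getD_mem hlen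
      have hvc := state_vcan Sa n t _ hmem
      have hsem0 : (sem ((stateL Sa n t).getD i 0)).2 = 0 := by
        show ratOf ((stateL Sa n t).getD i 0).unpair.2 = 0
        rw [hprev, h0, ratOf_zero]
      have hcond : (cond (Sa n t) (collapseL (stateL Sa n t)) (stateL Sa n t)).getD i 0
          = (stateL Sa n t).getD i 0 := by
        cases Sa n t
        · rfl
        · simp only [cond_true]
          rw [collapseL_getD _ _ hlen]
          exact phi_fix hvc hsem0
      rw [state_succ, stepL_prefix_getD _ _ _ _ hlen, hcond, hprev]
    · rw [Nat.le_antisymm ht h']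

theorem state_stable_nc {s t : ℕ} (hst : s ≤ t)
    (hnc : ∀ u, s ≤ u → u < t → Sa n u = false) {i : ℕ}
    (hi : i < (stateL Sa n s).length) :
    (stateL Sa n t).getD i 0 = (stateL Sa n s).getD i 0 := by
  induction t with
  | zero => rw [Nat.le_zero.mp hst]
  | succ t ih =>
    rcases Nat.lt_or_ge s (t+1) with h' | h'
    · have hprev := ih (by omega) (fun u hu hu' => hnc u hu (by omega))
      have hlen : i < (stateL Sa n t).length :=
        lt_of_lt_of_le hi (state_length_mono Sa n (by omega))
      rw [state_succ, stepL_prefix_getD _ _ _ _ hlen, hnc t (by omega) (by omega)]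
      simpa using hprev
    · rw [Nat.le_antisymm hst h']

theorem state_collapse {s i : ℕ} (htrue : Sa n s = true)
    (hi : i < (stateL Sa n s).length) :
    ((stateL Sa n (s+1)).getD i 0).unpair.2 = 0 := by
  rw [state_succ, stepL_prefix_getD _ _ _ _ hi, htrue]
  simp only [cond_true]
  rw [collapseL_getD _ _ hi, phi]
  simp [Nat.unpair_pair]

end State

end VSAux

namespace VSAux

theorem taskL_sum (x y r : ℕ) (L : List ℕ) :
    taskL (Nat.pair (Nat.pair 0 (Nat.pair x y)) r) L
      = aia (vAdd (L.getD x 0) (L.getD y 0)) L := by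
  rw [taskL]
  simp [Nat.unpair_pair]

theorem taskL_smul (a x r : ℕ) (L : List ℕ) :
    taskL (Nat.pair (Nat.pair 1 (Nat.pair a x)) r) L
      = aia (vSmul a (L.getD x 0)) L := by
  rw [taskL]
  simp [Nat.unpair_pair]

theorem taskL_code (v r : ℕ) (L : List ℕ) :
    taskL (Nat.pair (Nat.pair 2 v) r) L = aia (vcan v) L := by
  rw [taskL]
  simp [Nat.unpair_pair]

theorem indexOf_getD {v : ℕ} {L : List ℕ} (h : v ∈ L) :
    L.getD (L.idxOf v) 0 = v := by
  rw [List.getD_eq_getElem _ _ (List.idxOf_lt_length_iff.mpr h)]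
  exact List.idxOf_get (h := List.idxOf_lt_length_iff.mpr h)

section AddSpec

variable (Sa : ℕ → ℕ → Bool) (n : ℕ)

/-- the stage at which the sum of entries `x` and `y` is secured -/
def aStage (x y : ℕ) : ℕ := Nat.pair (Nat.pair 0 (Nat.pair x y)) (max x y) + 1

def sStage (a x : ℕ) : ℕ := Nat.pair (Nat.pair 1 (Nat.pair a x)) x + 1

theorem addF_spec (x y : ℕ) :
    x < (stateL Sa n (aStage x y)).length ∧
    y < (stateL Sa n (aStage x y)).length ∧
    AddF Sa n x y < (stateL Sa n (aStage x y)).length ∧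
    (stateL Sa n (aStage x y)).getD (AddF Sa n x y) 0
      = vAdd ((stateL Sa n (aStage x y)).getD x 0) ((stateL Sa n (aStage x y)).getD y 0) := by
  set s := Nat.pair (Nat.pair 0 (Nat.pair x y)) (max x y) with hs
  have hsge : max x y ≤ s := Nat.right_le_pair _ _
  set M := padL (cond (Sa n s) (collapseL (stateL Sa n s)) (stateL Sa n s)) with hM
  have hMlen : s + 2 ≤ M.length := by
    rw [hM, padL]
    have h1 := state_length Sa n s
    simp [condL_len]
    omega
  have hstate : stateL Sa n (aStage x y) = aia (vAdd (M.getD x 0) (M.getD y 0)) M := by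
    rw [aStage, ← hs, state_succ, stepL, ← hM, taskL_sum]
  have hx : x < M.length := by omega
  have hy : y < M.length := by omega
  have hgx : (stateL Sa n (aStage x y)).getD x 0 = M.getD x 0 := by
    rw [hstate]; exact aia_prefix _ _ _ hx
  have hgy : (stateL Sa n (aStage x y)).getD y 0 = M.getD y 0 := by
    rw [hstate]; exact aia_prefix _ _ _ hy
  have hmem : vAdd ((stateL Sa n (aStage x y)).getD x 0) ((stateL Sa n (aStage x y)).getD y 0)
      ∈ stateL Sa n (aStage x y) := by
    rw [hgx, hgy, hstate]
    exact mem_aia _ _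
  have hlenS : M.length ≤ (stateL Sa n (aStage x y)).length := by
    rw [hstate]; exact length_aia_ge _ _
  refine ⟨by omega, by omega, ?_, ?_⟩
  · rw [AddF]
    exact List.idxOf_lt_length_iff.mpr hmem
  · rw [AddF]
    exact indexOf_getD hmem

theorem smulF_spec (a x : ℕ) :
    x < (stateL Sa n (sStage a x)).length ∧
    SmulF Sa n a x < (stateL Sa n (sStage a x)).length ∧
    (stateL Sa n (sStage a x)).getD (SmulF Sa n a x) 0
      = vSmul a ((stateL Sa n (sStage a x)).getD x 0) := by
  set s := Nat.pair (Nat.pair 1 (Nat.pair a x)) x with hs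
  have hsge : x ≤ s := Nat.right_le_pair _ _
  set M := padL (cond (Sa n s) (collapseL (stateL Sa n s)) (stateL Sa n s)) with hM
  have hMlen : s + 2 ≤ M.length := by
    rw [hM, padL]
    have h1 := state_length Sa n s
    simp [condL_len]
    omega
  have hstate : stateL Sa n (sStage a x) = aia (vSmul a (M.getD x 0)) M := by
    rw [sStage, ← hs, state_succ, stepL, ← hM, taskL_smul]
  have hx : x < M.length := by omega
  have hgx : (stateL Sa n (sStage a x)).getD x 0 = M.getD x 0 := by
    rw [hstate]; exact aia_prefix _ _ _ hx
  have hmem : vSmul a ((stateL Sa n (sStage a x)).getD x 0) ∈ stateL Sa n (sStage a x) := by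
    rw [hgx, hstate]
    exact mem_aia _ _
  have hlenS : M.length ≤ (stateL Sa n (sStage a x)).length := by
    rw [hstate]; exact length_aia_ge _ _
  refine ⟨by omega, ?_, ?_⟩
  · rw [SmulF]
    exact List.idxOf_lt_length_iff.mpr hmem
  · rw [SmulF]
    exact indexOf_getD hmem

theorem code_mem (v r : ℕ) (hv : vcan v = v) :
    v ∈ stateL Sa n (Nat.pair (Nat.pair 2 v) r + 1) := by
  rw [state_succ, stepL, taskL_code, hv]
  exact mem_aia _ _

-- semantic stability of the Add relation
theorem addF_sem (x y t : ℕ) (ht : aStage x y ≤ t) :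
    sem ((stateL Sa n t).getD (AddF Sa n x y) 0)
      = sem ((stateL Sa n t).getD x 0) + sem ((stateL Sa n t).getD y 0) := by
  obtain ⟨hx, hy, hz, heq⟩ := addF_spec Sa n x y
  obtain ⟨ψ, hψ⟩ := state_prefix Sa n ht
  rw [hψ _ hz, hψ _ hx, hψ _ hy, heq, sem_vAdd, map_add]

theorem smulF_sem (a x t : ℕ) (ht : sStage a x ≤ t) :
    sem ((stateL Sa n t).getD (SmulF Sa n a x) 0)
      = ratOf a • sem ((stateL Sa n t).getD x 0) := by
  obtain ⟨hx, hz, heq⟩ := smulF_spec Sa n a x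
  obtain ⟨ψ, hψ⟩ := state_prefix Sa n ht
  rw [hψ _ hz, hψ _ hx, heq, sem_vSmul, map_smul]

end AddSpec

end VSAux

namespace VSAux

-- ## Computability

open Primrec

set_option maxHeartbeats 1000000

theorem natBeq_primrec : Primrec₂ (fun a b : ℕ => a == b) := by
  have h : (fun a b : ℕ => a == b) = fun a b : ℕ => decide (a = b) := by
    funext a b
    by_cases h : a = b <;> simp [h]
  rw [h]
  exact (Primrec.eq (α := ℕ)).decide

theorem unpair1_primrec : Primrec (fun n : ℕ => n.unpair.1) := fst.comp Primrec.unpair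
theorem unpair2_primrec : Primrec (fun n : ℕ => n.unpair.2) := snd.comp Primrec.unpair

theorem pA_primrec : Primrec pA := unpair1_primrec.comp unpair1_primrec
theorem qA_primrec : Primrec qA := unpair2_primrec.comp unpair1_primrec
theorem dA_primrec : Primrec dA := unpair2_primrec

theorem normC_primrec : Primrec normC :=
  Primrec.ite (PrimrecRel.comp Primrec.eq dA_primrec (const 0)) (const _) Primrec.id

theorem cEq_primrec : Primrec₂ cEq := by
  have hna : Primrec (fun p : ℕ × ℕ => normC p.1) := normC_primrec.comp fst
  have hnb : Primrec (fun p : ℕ × ℕ => normC p.2) := normC_primrec.comp snd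
  exact natBeq_primrec.comp
    (nat_add.comp (nat_mul.comp (pA_primrec.comp hna) (dA_primrec.comp hnb))
      (nat_mul.comp (qA_primrec.comp hnb) (dA_primrec.comp hna)))
    (nat_add.comp (nat_mul.comp (qA_primrec.comp hna) (dA_primrec.comp hnb))
      (nat_mul.comp (pA_primrec.comp hnb) (dA_primrec.comp hna)))

theorem canonC_primrec : Primrec canonC :=
  list_findIdx (list_range.comp Primrec.succ) cEq_primrec.swap

theorem cAdd_primrec : Primrec₂ cAdd := by
  have hna : Primrec (fun p : ℕ × ℕ => normC p.1) := normC_primrec.comp fst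
  have hnb : Primrec (fun p : ℕ × ℕ => normC p.2) := normC_primrec.comp snd
  exact Primrec₂.natPair.comp
    (Primrec₂.natPair.comp
      (nat_add.comp (nat_mul.comp (pA_primrec.comp hna) (dA_primrec.comp hnb))
        (nat_mul.comp (pA_primrec.comp hnb) (dA_primrec.comp hna)))
      (nat_add.comp (nat_mul.comp (qA_primrec.comp hna) (dA_primrec.comp hnb))
        (nat_mul.comp (qA_primrec.comp hnb) (dA_primrec.comp hna))))
    (nat_mul.comp (dA_primrec.comp hna) (dA_primrec.comp hnb))

theorem cMul_primrec : Primrec₂ cMul := by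
  have hna : Primrec (fun p : ℕ × ℕ => normC p.1) := normC_primrec.comp fst
  have hnb : Primrec (fun p : ℕ × ℕ => normC p.2) := normC_primrec.comp snd
  exact Primrec₂.natPair.comp
    (Primrec₂.natPair.comp
      (nat_add.comp (nat_mul.comp (pA_primrec.comp hna) (pA_primrec.comp hnb))
        (nat_mul.comp (qA_primrec.comp hna) (qA_primrec.comp hnb)))
      (nat_add.comp (nat_mul.comp (pA_primrec.comp hna) (qA_primrec.comp hnb))
        (nat_mul.comp (qA_primrec.comp hna) (pA_primrec.comp hnb))))
    (nat_mul.comp (dA_primrec.comp hna) (dA_primrec.comp hnb))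

theorem natC_primrec : Primrec natC :=
  Primrec₂.natPair.comp (Primrec₂.natPair.comp Primrec.id (const 0)) (const 1)

theorem vcan_primrec : Primrec vcan :=
  Primrec₂.natPair.comp (canonC_primrec.comp unpair1_primrec)
    (canonC_primrec.comp unpair2_primrec)

theorem vAdd_primrec : Primrec₂ vAdd :=
  vcan_primrec.comp <| Primrec₂.natPair.comp
    (cAdd_primrec.comp (unpair1_primrec.comp fst) (unpair1_primrec.comp snd))
    (cAdd_primrec.comp (unpair2_primrec.comp fst) (unpair2_primrec.comp snd))

theorem vSmul_primrec : Primrec₂ vSmul :=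
  vcan_primrec.comp <| Primrec₂.natPair.comp
    (cMul_primrec.comp fst (unpair1_primrec.comp snd))
    (cMul_primrec.comp fst (unpair2_primrec.comp snd))

theorem phi_primrec : Primrec₂ phi :=
  Primrec₂.natPair.comp
    (canonC_primrec.comp <| cAdd_primrec.comp (unpair1_primrec.comp snd)
      (cMul_primrec.comp (natC_primrec.comp fst) (unpair2_primrec.comp snd)))
    (const 0)

theorem nodupB_primrec : Primrec nodupB := by
  have hstep : Primrec₂ fun (_ : List ℕ) (q : ℕ × (Bool × List ℕ)) =>
      ((q.2.2.idxOf q.1 == q.2.2.length) && q.2.1, q.1 :: q.2.2) := by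
    have hrest : Primrec fun (p : List ℕ × (ℕ × (Bool × List ℕ))) => p.2.2.2 :=
      snd.comp (snd.comp snd)
    have ha : Primrec fun (p : List ℕ × (ℕ × (Bool × List ℕ))) => p.2.1 := fst.comp snd
    have hb : Primrec fun (p : List ℕ × (ℕ × (Bool × List ℕ))) => p.2.2.1 :=
      fst.comp (snd.comp snd)
    exact Primrec.pair
      (Primrec.and.comp
        (natBeq_primrec.comp (list_idxOf.comp ha hrest) (list_length.comp hrest)) hb)
      (list_cons.comp ha hrest)
  exact fst.comp (list_foldr Primrec.id (const (true, ([] : List ℕ))) hstep)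

theorem goodk_primrec : Primrec goodk := by
  apply list_findIdx (f := fun L : List ℕ => List.range (L.length * L.length + 1))
    (p := fun L k => nodupB (L.map (phi k)))
  · exact list_range.comp (Primrec.succ.comp (nat_mul.comp list_length list_length))
  · exact nodupB_primrec.comp (list_map fst (phi_primrec.comp (snd.comp fst) snd).to₂)

theorem collapseL_primrec : Primrec collapseL :=
  list_map Primrec.id (phi_primrec.comp (goodk_primrec.comp fst) snd).to₂

theorem natV_primrec : Primrec natV :=
  Primrec₂.natPair.comp (canonC_primrec.comp natC_primrec) (const 0)

theorem freshV_primrec : Primrec freshV := by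
  apply Primrec.comp natV_primrec
  apply list_findIdx (f := fun L : List ℕ => List.range (L.length + 1))
    (p := fun L k => L.idxOf (natV k) == L.length)
  · exact list_range.comp (Primrec.succ.comp list_length)
  · exact natBeq_primrec.comp (list_idxOf.comp (natV_primrec.comp snd) fst)
      (list_length.comp fst)

theorem padL_primrec : Primrec padL :=
  list_concat.comp Primrec.id freshV_primrec

theorem aia_primrec : Primrec₂ aia := by
  apply Primrec.ite
  · exact PrimrecRel.comp nat_lt (list_idxOf.comp fst snd) (list_length.comp snd)
  · exact snd
  · exact list_concat.comp snd fst

theorem getD0_primrec : Primrec₂ (fun (L : List ℕ) (i : ℕ) => L.getD i 0) := list_getD 0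

theorem taskL_primrec : Primrec₂ taskL := by
  have hj : Primrec fun p : ℕ × List ℕ => p.1.unpair.1 := unpair1_primrec.comp fst
  have hm : Primrec fun p : ℕ × List ℕ => p.1.unpair.1.unpair.1 := unpair1_primrec.comp hj
  have hu : Primrec fun p : ℕ × List ℕ => p.1.unpair.1.unpair.2 := unpair2_primrec.comp hj
  have hL : Primrec fun p : ℕ × List ℕ => p.2 := snd
  have hadd : Primrec fun p : ℕ × List ℕ =>
      aia (vAdd (p.2.getD p.1.unpair.1.unpair.2.unpair.1 0)
        (p.2.getD p.1.unpair.1.unpair.2.unpair.2 0)) p.2 :=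
    aia_primrec.comp
      (vAdd_primrec.comp (getD0_primrec.comp hL (unpair1_primrec.comp hu))
        (getD0_primrec.comp hL (unpair2_primrec.comp hu))) hL
  have hsmul : Primrec fun p : ℕ × List ℕ =>
      aia (vSmul p.1.unpair.1.unpair.2.unpair.1 (p.2.getD p.1.unpair.1.unpair.2.unpair.2 0)) p.2 :=
    aia_primrec.comp
      (vSmul_primrec.comp (unpair1_primrec.comp hu)
        (getD0_primrec.comp hL (unpair2_primrec.comp hu))) hL
  have hcode : Primrec fun p : ℕ × List ℕ => aia (vcan p.1.unpair.1.unpair.2) p.2 :=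
    aia_primrec.comp (vcan_primrec.comp hu) hL
  exact Primrec.ite (PrimrecRel.comp Primrec.eq hm (const 0)) hadd
    (Primrec.ite (PrimrecRel.comp Primrec.eq hm (const 1)) hsmul hcode)

theorem stepL_primrec : Primrec fun t : Bool × ℕ × List ℕ => stepL t.1 t.2.1 t.2.2 := by
  have hcondlist : Primrec fun t : Bool × ℕ × List ℕ =>
      cond t.1 (collapseL t.2.2) t.2.2 :=
    Primrec.cond fst (collapseL_primrec.comp (snd.comp snd)) (snd.comp snd)
  exact taskL_primrec.comp (fst.comp snd) (padL_primrec.comp hcondlist)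

attribute [irreducible] stepL taskL collapseL goodk nodupB canonC cEq normC phi
  vcan vAdd vSmul aia padL freshV natV natC cAdd cMul

section WithSa

variable {Sa : ℕ → ℕ → Bool}

theorem stateL_computable (hSa : Computable₂ Sa) : Computable₂ (stateL Sa) := by
  have hstep : Computable fun (x : (ℕ × ℕ) × ℕ × List ℕ) =>
      stepL (Sa x.1.1 x.2.1) x.2.1 x.2.2 :=
    stepL_primrec.to_comp.comp
      (Computable.pair (hSa.comp (Computable.fst.comp Computable.fst)
          (Computable.fst.comp Computable.snd))
        (Computable.pair (Computable.fst.comp Computable.snd)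
          (Computable.snd.comp Computable.snd)))
  have h2 : Computable₂ fun (p : ℕ × ℕ) (q : ℕ × List ℕ) =>
      stepL (Sa p.1 q.1) q.1 q.2 := hstep
  have h3 := Computable.nat_rec (f := fun p : ℕ × ℕ => p.2)
    (g := fun _ : ℕ × ℕ => ([0] : List ℕ))
    (h := fun (p : ℕ × ℕ) (q : ℕ × List ℕ) => stepL (Sa p.1 q.1) q.1 q.2)
    Computable.snd (Computable.const _) h2
  exact h3.of_eq fun p => rfl

theorem addF_computable (hSa : Computable₂ Sa) : Computable fun t : ℕ × ℕ × ℕ => AddF Sa t.1 t.2.1 t.2.2 := by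
  have hstage : Primrec fun t : ℕ × ℕ × ℕ =>
      Nat.pair (Nat.pair 0 (Nat.pair t.2.1 t.2.2)) (max t.2.1 t.2.2) + 1 :=
    Primrec.succ.comp (Primrec₂.natPair.comp
      (Primrec₂.natPair.comp (const 0)
        (Primrec₂.natPair.comp (fst.comp snd) (snd.comp snd)))
      (nat_max.comp (fst.comp snd) (snd.comp snd)))
  have hN : Computable fun t : ℕ × ℕ × ℕ =>
      stateL Sa t.1 (Nat.pair (Nat.pair 0 (Nat.pair t.2.1 t.2.2)) (max t.2.1 t.2.2) + 1) :=
    (stateL_computable hSa).comp Computable.fst hstage.to_comp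
  have hfin : Primrec fun q : (List ℕ) × (ℕ × ℕ) =>
      q.1.idxOf (vAdd (q.1.getD q.2.1 0) (q.1.getD q.2.2 0)) :=
    list_idxOf.comp
      (vAdd_primrec.comp (getD0_primrec.comp fst (fst.comp snd))
        (getD0_primrec.comp fst (snd.comp snd))) fst
  exact (hfin.to_comp.comp (Computable.pair hN Computable.snd)).of_eq fun t => rfl

theorem smulF_computable (hSa : Computable₂ Sa) : Computable fun t : ℕ × ℕ × ℕ => SmulF Sa t.1 t.2.1 t.2.2 := by
  have hstage : Primrec fun t : ℕ × ℕ × ℕ =>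
      Nat.pair (Nat.pair 1 (Nat.pair t.2.1 t.2.2)) t.2.2 + 1 :=
    Primrec.succ.comp (Primrec₂.natPair.comp
      (Primrec₂.natPair.comp (const 1)
        (Primrec₂.natPair.comp (fst.comp snd) (snd.comp snd)))
      (snd.comp snd))
  have hN : Computable fun t : ℕ × ℕ × ℕ =>
      stateL Sa t.1 (Nat.pair (Nat.pair 1 (Nat.pair t.2.1 t.2.2)) t.2.2 + 1) :=
    (stateL_computable hSa).comp Computable.fst hstage.to_comp
  have hfin : Primrec fun q : (List ℕ) × (ℕ × ℕ) =>
      q.1.idxOf (vSmul q.2.1 (q.1.getD q.2.2 0)) :=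
    list_idxOf.comp
      (vSmul_primrec.comp (fst.comp snd) (getD0_primrec.comp fst (snd.comp snd))) fst
  exact (hfin.to_comp.comp (Computable.pair hN Computable.snd)).of_eq fun t => rfl

end WithSa

end VSAux

namespace VSAux

theorem lcomb_one (add smul : ℕ → ℕ → ℕ) (zero : ℕ) (z b : Fin 1 → ℕ) :
    lcomb add smul zero z b = add (smul (z 0) (b 0)) zero := by
  simp [lcomb, List.ofFn_succ]

theorem lcomb_two (add smul : ℕ → ℕ → ℕ) (zero : ℕ) (z b : Fin 2 → ℕ) :
    lcomb add smul zero z b = add (smul (z 0) (b 0)) (add (smul (z 1) (b 1)) zero) := by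
  simp [lcomb, List.ofFn_succ]

theorem ratOf_negC : ratOf (Nat.pair (Nat.pair 0 1) 1) = -1 := by
  rw [ratOf_pair]
  norm_num

end VSAux

open VSAux in
theorem stmt9' (S : ℕ → Prop) (Sa : ℕ → ℕ → Bool) (hSa : Computable₂ Sa)
    (happrox : ∀ n, S n ↔ {s : ℕ | Sa n s = true}.Infinite) :
    ∃ (Add Smul : ℕ → ℕ → ℕ → ℕ) (Zer : ℕ → ℕ),
      Computable (fun t : ℕ × ℕ × ℕ => Add t.1 t.2.1 t.2.2) ∧
      Computable (fun t : ℕ × ℕ × ℕ => Smul t.1 t.2.1 t.2.2) ∧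
      Computable Zer ∧
      ∀ n, IsVecPres (Add n) (Smul n) (Zer n) ∧
        (S n → DimEq (Add n) (Smul n) (Zer n) 1) ∧
        (¬ S n → DimEq (Add n) (Smul n) (Zer n) 2) := by
  classical
  refine ⟨AddF Sa, SmulF Sa, fun _ => 0, addF_computable hSa, smulF_computable hSa,
    Computable.const 0, ?_⟩
  intro n
  -- the limit of the construction
  have hstab : ∀ x : ℕ, ∃ c : ℕ, ∃ N : ℕ, ∀ t, N ≤ t → (stateL Sa n t).getD x 0 = c := by
    intro x
    by_cases hS : S n
    · have hinf := (happrox n).1 hS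
      obtain ⟨u, hu_mem, hu_gt⟩ := hinf.exists_gt x
      have hxlen : x < (stateL Sa n u).length := by
        have := state_length Sa n u
        omega
      have h0 : ((stateL Sa n (u+1)).getD x 0).unpair.2 = 0 :=
        state_collapse Sa n hu_mem hxlen
      have hxlen1 : x < (stateL Sa n (u+1)).length :=
        lt_of_lt_of_le hxlen (state_length_mono Sa n (by omega))
      exact ⟨_, u+1, fun t ht => state_stable Sa n hxlen1 h0 t ht⟩
    · have hfin : {s : ℕ | Sa n s = true}.Finite :=
        Set.not_infinite.mp (fun h => hS ((happrox n).2 h))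
      obtain ⟨c₀, hc₀⟩ := hfin.bddAbove
      have hxlen : x < (stateL Sa n (max (x+1) (c₀+1))).length := by
        have := state_length Sa n (max (x+1) (c₀+1))
        omega
      refine ⟨_, max (x+1) (c₀+1), fun t ht => state_stable_nc Sa n ht ?_ hxlen⟩
      intro u hu _
      by_contra hb
      have : Sa n u = true := by
        cases hSa' : Sa n u
        · exact absurd hSa' hb
        · rfl
      have := hc₀ this
      omega
  choose F NF hF using hstab
  -- basic facts about F
  have hFvc : ∀ x, vcan (F x) = F x := by
    intro x
    have hx : x < (stateL Sa n (max (NF x) x)).length := by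
      have := state_length Sa n (max (NF x) x)
      omega
    have h1 : (stateL Sa n (max (NF x) x)).getD x 0 = F x := hF x _ (le_max_left _ _)
    rw [← h1]
    exact state_vcan Sa n _ _ (getD_mem hx)
  have hFinj : ∀ x y : ℕ, sem (F x) = sem (F y) → x = y := by
    intro x y hxy
    have hFeq : F x = F y := vc_inj (hFvc x) (hFvc y) hxy
    set t := max (max (NF x) (NF y)) (max x y) with htdef
    have hlen := state_length Sa n t
    have hx : x < (stateL Sa n t).length := by omega
    have hy : y < (stateL Sa n t).length := by omega
    have h1 : (stateL Sa n t).getD x 0 = F x := hF x t (by omega)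
    have h2 : (stateL Sa n t).getD y 0 = F y := hF y t (by omega)
    have hnd := state_nodup Sa n t
    rw [List.nodup_iff_injective_getElem] at hnd
    have hg : (stateL Sa n t)[x]'hx = (stateL Sa n t)[y]'hy := by
      rw [← List.getD_eq_getElem _ 0 hx, ← List.getD_eq_getElem _ 0 hy, h1, h2, hFeq]
    have h3 : (⟨x, hx⟩ : Fin (stateL Sa n t).length) = ⟨y, hy⟩ := hnd hg
    simpa using h3
  have hFadd : ∀ x y, sem (F (AddF Sa n x y)) = sem (F x) + sem (F y) := by
    intro x y
    set z := AddF Sa n x y with hz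
    set t := max (max (NF x) (NF y)) (max (NF z) (aStage x y)) with htdef
    rw [← hF x t (by omega), ← hF y t (by omega), ← hF z t (by omega)]
    exact addF_sem Sa n x y t (by omega)
  have hFsmul : ∀ a x, sem (F (SmulF Sa n a x)) = ratOf a • sem (F x) := by
    intro a x
    set z := SmulF Sa n a x with hz
    set t := max (max (NF x) (NF z)) (sStage a x) with htdef
    rw [← hF x t (by omega), ← hF z t (by omega)]
    exact smulF_sem Sa n a x t (by omega)
  have hF0 : F 0 = 0 := by
    have h0 : (stateL Sa n 0).getD 0 0 = 0 := by rw [state_zero]; rfl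
    have hlen : 0 < (stateL Sa n 0).length := by rw [state_zero]; simp
    have hz : ((stateL Sa n 0).getD 0 0).unpair.2 = 0 := by rw [h0]; rfl
    have := state_stable Sa n hlen hz (NF 0) (Nat.zero_le _)
    rw [← hF 0 (NF 0) le_rfl, this, h0]
  have hsemF0 : sem (F 0) = 0 := by rw [hF0]; exact sem_zero
  -- realizing codes as limit values
  have hsurj_zero : ∀ v : ℕ, vcan v = v → v.unpair.2 = 0 → ∃ x, F x = v := by
    intro v hv h0
    have hmem : v ∈ stateL Sa n (Nat.pair (Nat.pair 2 v) 0 + 1) := code_mem Sa n v 0 hv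
    set s := Nat.pair (Nat.pair 2 v) 0 + 1 with hs
    set i := (stateL Sa n s).idxOf v with hi
    have hilt : i < (stateL Sa n s).length := List.idxOf_lt_length_iff.mpr hmem
    have hgi : (stateL Sa n s).getD i 0 = v := indexOf_getD hmem
    have hstable := state_stable Sa n hilt (by rw [hgi]; exact h0)
    refine ⟨i, ?_⟩
    rw [← hF i (max s (NF i)) (le_max_right _ _), hstable _ (le_max_left _ _), hgi]
  constructor
  · -- IsVecPres
    refine ⟨?_, ?_, ?_, ?_, ?_, ?_, ?_, ?_, ?_, ?_⟩
    · intro x y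
      exact hFinj _ _ (by rw [hFadd, hFadd, add_comm])
    · intro x y z
      exact hFinj _ _ (by rw [hFadd, hFadd, hFadd, hFadd, add_assoc])
    · intro x
      exact hFinj _ _ (by rw [hFadd, hsemF0, zero_add])
    · intro x
      refine ⟨SmulF Sa n (Nat.pair (Nat.pair 0 1) 1) x, hFinj _ _ ?_⟩
      rw [hFadd, hFsmul, ratOf_negC, hsemF0, neg_one_smul, add_neg_cancel]
    · intro a b x h
      exact hFinj _ _ (by rw [hFsmul, hFsmul, h])
    · intro a x h
      exact hFinj _ _ (by rw [hFsmul, h, one_smul])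
    · intro a x h
      exact hFinj _ _ (by rw [hFsmul, h, zero_smul, hsemF0])
    · intro a x y
      exact hFinj _ _ (by rw [hFsmul, hFadd, hFadd, hFsmul, hFsmul, smul_add])
    · intro a b c x h
      exact hFinj _ _ (by rw [hFsmul, hFadd, hFsmul, hFsmul, h, add_smul])
    · intro a b c x h
      exact hFinj _ _ (by rw [hFsmul, hFsmul, hFsmul, h, mul_smul])
  constructor
  · -- S n → dimension 1
    intro hS
    have hinf := (happrox n).1 hS
    have hsnd : ∀ x, (sem (F x)).2 = 0 := by
      intro x
      obtain ⟨u, hu_mem, hu_gt⟩ := hinf.exists_gt (max (NF x) x)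
      have hxlen : x < (stateL Sa n u).length := by
        have := state_length Sa n u
        omega
      have h0 : ((stateL Sa n (u+1)).getD x 0).unpair.2 = 0 :=
        state_collapse Sa n hu_mem hxlen
      rw [hF x (u+1) (by omega)] at h0
      show ratOf (F x).unpair.2 = 0
      rw [h0, ratOf_zero]
    have hsurj1 : ∀ r : ℚ, ∃ x, sem (F x) = (r, 0) := by
      intro r
      obtain ⟨v, hv, hsemv⟩ := sem_surjective (r, 0)
      have h0 : v.unpair.2 = 0 := snd_eq_zero_of hv (by rw [hsemv])
      obtain ⟨x, hx⟩ := hsurj_zero v hv h0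
      exact ⟨x, by rw [hx, hsemv]⟩
    obtain ⟨b0, hb0⟩ := hsurj1 1
    refine ⟨fun _ => b0, ?_, ?_⟩
    · intro z hz i
      have hi : i = 0 := Subsingleton.elim _ _
      subst hi
      rw [lcomb_one] at hz
      have := congrArg (fun w => sem (F w)) hz
      simp only at this
      rw [hFadd, hFsmul, hsemF0, add_zero, hb0] at this
      have h1 : (ratOf (z 0) • ((1 : ℚ), (0 : ℚ))).1 = (0 : ℚ) := by
        rw [this]; rfl
      simpa using h1
    · intro x
      obtain ⟨a, ha⟩ := ratOf_surjective (sem (F x)).1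
      refine ⟨fun _ => a, hFinj _ _ ?_⟩
      rw [lcomb_one, hFadd, hFsmul, hsemF0, add_zero, hb0, ha, Prod.smul_mk]
      simp only [smul_eq_mul, mul_one, mul_zero]
      exact Prod.ext rfl (hsnd x).symm
  · -- ¬ S n → dimension 2
    intro hS
    have hfin : {s : ℕ | Sa n s = true}.Finite :=
      Set.not_infinite.mp (fun h => hS ((happrox n).2 h))
    obtain ⟨c₀, hc₀⟩ := hfin.bddAbove
    have hsurjv : ∀ v : ℕ, vcan v = v → ∃ x, F x = v := by
      intro v hv
      have hmem : v ∈ stateL Sa n (Nat.pair (Nat.pair 2 v) (c₀+1) + 1) :=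
        code_mem Sa n v (c₀+1) hv
      set s := Nat.pair (Nat.pair 2 v) (c₀+1) + 1 with hs
      have hsge : c₀ + 1 ≤ s := by
        have := Nat.right_le_pair (Nat.pair 2 v) (c₀+1)
        omega
      set i := (stateL Sa n s).idxOf v with hi
      have hilt : i < (stateL Sa n s).length := List.idxOf_lt_length_iff.mpr hmem
      have hgi : (stateL Sa n s).getD i 0 = v := indexOf_getD hmem
      have hnc : ∀ t, s ≤ t → (stateL Sa n t).getD i 0 = (stateL Sa n s).getD i 0 := by
        intro t ht
        refine state_stable_nc Sa n ht ?_ hilt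
        intro u hu _
        by_contra hb
        have : Sa n u = true := by
          cases hSa' : Sa n u
          · exact absurd hSa' hb
          · rfl
        have := hc₀ this
        omega
      refine ⟨i, ?_⟩
      rw [← hF i (max s (NF i)) (le_max_right _ _), hnc _ (le_max_left _ _), hgi]
    have hsurj2 : ∀ p : ℚ × ℚ, ∃ x, sem (F x) = p := by
      intro p
      obtain ⟨v, hv, hsemv⟩ := sem_surjective p
      obtain ⟨x, hx⟩ := hsurjv v hv
      exact ⟨x, by rw [hx, hsemv]⟩
    obtain ⟨b0, hb0⟩ := hsurj2 (1, 0)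
    obtain ⟨b1, hb1⟩ := hsurj2 (0, 1)
    have hcomb : ∀ z : Fin 2 → ℕ,
        sem (F (lcomb (AddF Sa n) (SmulF Sa n) 0 z ![b0, b1]))
          = (ratOf (z 0), ratOf (z 1)) := by
      intro z
      rw [lcomb_two]
      rw [hFadd, hFsmul, hFadd, hFsmul, hsemF0, add_zero]
      simp only [Matrix.cons_val_zero, Matrix.cons_val_one, Matrix.head_cons]
      rw [hb0, hb1, Prod.smul_mk, Prod.smul_mk]
      simp [Prod.ext_iff]
    refine ⟨![b0, b1], ?_, ?_⟩
    · intro z hz i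
      have h1 := hcomb z
      rw [hz, hsemF0] at h1
      have h2 : (ratOf (z 0), ratOf (z 1)) = ((0 : ℚ × ℚ)) := h1.symm
      rw [Prod.ext_iff] at h2
      fin_cases i
      · simpa using h2.1
      · simpa using h2.2
    · intro x
      obtain ⟨a0, ha0⟩ := ratOf_surjective (sem (F x)).1
      obtain ⟨a1, ha1⟩ := ratOf_surjective (sem (F x)).2
      refine ⟨![a0, a1], hFinj _ _ ?_⟩
      rw [hcomb]
      simp only [Matrix.cons_val_zero, Matrix.cons_val_one, Matrix.head_cons]
      rw [ha0, ha1]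


/-- Let `S` be a Π⁰₂ set given with a computable approximation `Sa` such that
`n ∈ S` iff `n ∈ S_s` for infinitely many `s`.  Then there is a uniformly
computable sequence of ℚ-vector spaces `(A n)` with `dim (A n) = 1` if `n ∈ S`
and `dim (A n) = 2` if `n ∉ S`. -/
theorem stmt9 (S : ℕ → Prop) (Sa : ℕ → ℕ → Bool) (hSa : Computable₂ Sa)
    (happrox : ∀ n, S n ↔ {s : ℕ | Sa n s = true}.Infinite) :
    ∃ (Add Smul : ℕ → ℕ → ℕ → ℕ) (Zer : ℕ → ℕ),
      Computable (fun t : ℕ × ℕ × ℕ => Add t.1 t.2.1 t.2.2) ∧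
      Computable (fun t : ℕ × ℕ × ℕ => Smul t.1 t.2.1 t.2.2) ∧
      Computable Zer ∧
      ∀ n, IsVecPres (Add n) (Smul n) (Zer n) ∧
        (S n → DimEq (Add n) (Smul n) (Zer n) 1) ∧
        (¬ S n → DimEq (Add n) (Smul n) (Zer n) 2) := by
  exact stmt9' S Sa hSa happrox
end

section
/- Let G be a computable Abelian p-group and α a computable ordinal. Then: (1) G_{ω·α} is Π⁰_{2α} as a subset of G; (2) G_{ω·α+m} is Σ⁰_{2α+1}; (3) P_{ω·α} = G_{ω·α} ∩ P(G) is Π⁰_{2α}; (4) P_{ω·α+m} is Σ⁰_{2α+1}. -/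
/-- `(add, neg, zero)` is a presentation of an Abelian group on the universe ℕ. -/
def IsGrpPres (add : ℕ → ℕ → ℕ) (neg : ℕ → ℕ) (zero : ℕ) : Prop :=
  (∀ x y, add x y = add y x) ∧
  (∀ x y z, add (add x y) z = add x (add y z)) ∧
  (∀ x, add zero x = x) ∧
  (∀ x, add (neg x) x = zero)

/-- `nsm add zero k x = k • x` in the presented group. -/
def nsm (add : ℕ → ℕ → ℕ) (zero : ℕ) : ℕ → ℕ → ℕ
  | 0, _ => zero
  | k + 1, x => add x (nsm add zero k x)

/-- `Gword add zero p M x` says that `x ∈ G_{ω·M}`, where `G_{ω·0} = G` and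
`G_{ω·(M+1)} = ⋂ₘ p^m G_{ω·M}`. -/
def Gword (add : ℕ → ℕ → ℕ) (zero p : ℕ) : ℕ → ℕ → Prop
  | 0, _ => True
  | M + 1, x => ∀ m : ℕ, ∃ y, Gword add zero p M y ∧ nsm add zero (p ^ m) y = x

section Aux

open Computable ComputablePred

private lemma cp_comp {S : ℕ → Prop} {f : ℕ → ℕ} (hS : ComputablePred S)
    (hf : Computable f) : ComputablePred fun x => S (f x) := by
  obtain ⟨g, hg, rfl⟩ := ComputablePred.computable_iff.1 hS
  exact ComputablePred.computable_iff.2 ⟨fun x => g (f x), hg.comp hf, rfl⟩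

private lemma cp_and {S T : ℕ → Prop} (hS : ComputablePred S) (hT : ComputablePred T) :
    ComputablePred fun x => S x ∧ T x := by
  obtain ⟨f, hf, rfl⟩ := ComputablePred.computable_iff.1 hS
  obtain ⟨g, hg, rfl⟩ := ComputablePred.computable_iff.1 hT
  exact ComputablePred.computable_iff.2 ⟨fun x => f x && g x,
    (Primrec.and.to_comp).comp hf hg,
    funext fun x => by simp [Bool.and_eq_true]⟩

private lemma cp_or {S T : ℕ → Prop} (hS : ComputablePred S) (hT : ComputablePred T) :
    ComputablePred fun x => S x ∨ T x := by
  obtain ⟨f, hf, rfl⟩ := ComputablePred.computable_iff.1 hS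
  obtain ⟨g, hg, rfl⟩ := ComputablePred.computable_iff.1 hT
  exact ComputablePred.computable_iff.2 ⟨fun x => f x || g x,
    (Primrec.or.to_comp).comp hf hg,
    funext fun x => by simp [Bool.or_eq_true]⟩

private lemma cp_eq {f g : ℕ → ℕ} (hf : Computable f) (hg : Computable g) :
    ComputablePred fun x => f x = g x :=
  ComputablePred.computable_iff.2 ⟨fun x => f x == g x,
    (Primrec.beq.to_comp).comp hf hg, funext fun x => by simp⟩

private lemma hu1 : Computable fun z : ℕ => z.unpair.1 :=
  (Primrec.fst.comp Primrec.unpair).to_comp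

private lemma hu2 : Computable fun z : ℕ => z.unpair.2 :=
  (Primrec.snd.comp Primrec.unpair).to_comp

private lemma hpair : Computable₂ Nat.pair := Primrec₂.natPair.to_comp

private lemma SigmaN.of_iff {n : ℕ} {S T : ℕ → Prop} (h : SigmaN n S)
    (e : ∀ x, S x ↔ T x) : SigmaN n T := by
  have : S = T := funext fun x => propext (e x)
  exact this ▸ h

private lemma SigmaN.comp : ∀ {n : ℕ} {S : ℕ → Prop}, SigmaN n S → ∀ {f : ℕ → ℕ},
    Computable f → SigmaN n fun x => S (f x)
  | 0, S, h, f, hf => cp_comp h hf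
  | n + 1, S, ⟨R, hR, hiff⟩, f, hf => by
    refine ⟨fun z => R (Nat.pair (f z.unpair.1) z.unpair.2),
      SigmaN.comp hR (hpair.comp (hf.comp hu1) hu2), fun x => ?_⟩
    simp only [Nat.unpair_pair]
    exact hiff (f x)

private lemma SigmaN.mono : ∀ {n : ℕ} {S : ℕ → Prop}, SigmaN n S → SigmaN (n + 1) S
  | 0, S, h => by
    refine ⟨fun z => ¬ S z.unpair.1, cp_comp h.not hu1, fun x => ?_⟩
    simp only [Nat.unpair_pair, not_not]
    exact ⟨fun hx => ⟨0, hx⟩, fun ⟨y, hy⟩ => hy⟩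
  | n + 1, S, ⟨R, hR, hiff⟩ => ⟨R, SigmaN.mono hR, hiff⟩

private lemma SigmaN.of_cp {n : ℕ} {S : ℕ → Prop} (h : ComputablePred S) : SigmaN n S := by
  induction n with
  | zero => exact h
  | succ n ih => exact ih.mono

private lemma PiN.toSigma {n : ℕ} {S : ℕ → Prop} (h : PiN n S) : SigmaN (n + 1) S := by
  refine ⟨fun z => ¬ S z.unpair.1, SigmaN.comp h hu1, fun x => ?_⟩
  simp only [Nat.unpair_pair, not_not]
  exact ⟨fun hx => ⟨0, hx⟩, fun ⟨y, hy⟩ => hy⟩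

private lemma SigmaN.and_or : ∀ (n : ℕ) (S T : ℕ → Prop), SigmaN n S → SigmaN n T →
    SigmaN n (fun x => S x ∧ T x) ∧ SigmaN n (fun x => S x ∨ T x)
  | 0, S, T, hS, hT => ⟨cp_and hS hT, cp_or hS hT⟩
  | n + 1, S, T, ⟨R1, hR1, hiff1⟩, ⟨R2, hR2, hiff2⟩ => by
    constructor
    · refine ⟨fun z => R1 (Nat.pair z.unpair.1 z.unpair.2.unpair.1) ∨
        R2 (Nat.pair z.unpair.1 z.unpair.2.unpair.2), ?_, fun x => ?_⟩
      · exact (SigmaN.and_or n _ _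
          (SigmaN.comp hR1 (hpair.comp hu1 (hu1.comp hu2)))
          (SigmaN.comp hR2 (hpair.comp hu1 (hu2.comp hu2)))).2
      · constructor
        · rintro ⟨hSx, hTx⟩
          obtain ⟨y1, hy1⟩ := (hiff1 x).1 hSx
          obtain ⟨y2, hy2⟩ := (hiff2 x).1 hTx
          refine ⟨Nat.pair y1 y2, ?_⟩
          simp only [Nat.unpair_pair]
          tauto
        · rintro ⟨y, hy⟩
          simp only [Nat.unpair_pair, not_or] at hy
          exact ⟨(hiff1 x).2 ⟨_, hy.1⟩, (hiff2 x).2 ⟨_, hy.2⟩⟩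
    · refine ⟨fun z => R1 z ∧ R2 z, (SigmaN.and_or n _ _ hR1 hR2).1, fun x => ?_⟩
      constructor
      · rintro (hSx | hTx)
        · obtain ⟨y, hy⟩ := (hiff1 x).1 hSx
          exact ⟨y, fun h => hy h.1⟩
        · obtain ⟨y, hy⟩ := (hiff2 x).1 hTx
          exact ⟨y, fun h => hy h.2⟩
      · rintro ⟨y, hy⟩
        rw [not_and_or] at hy
        rcases hy with h | h
        · exact Or.inl ((hiff1 x).2 ⟨y, h⟩)
        · exact Or.inr ((hiff2 x).2 ⟨y, h⟩)

private lemma SigmaN.exists_pair {n : ℕ} {S : ℕ → Prop} (h : SigmaN (n + 1) S) :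
    SigmaN (n + 1) fun x => ∃ m, S (Nat.pair x m) := by
  obtain ⟨R, hR, hiff⟩ := h
  refine ⟨fun u => R (Nat.pair (Nat.pair u.unpair.1 u.unpair.2.unpair.1) u.unpair.2.unpair.2),
    SigmaN.comp hR (hpair.comp (hpair.comp hu1 (hu1.comp hu2)) (hu2.comp hu2)),
    fun x => ?_⟩
  constructor
  · rintro ⟨m, hm⟩
    obtain ⟨y, hy⟩ := (hiff _).1 hm
    refine ⟨Nat.pair m y, ?_⟩
    simpa using hy
  · rintro ⟨w, hw⟩
    simp only [Nat.unpair_pair] at hw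
    exact ⟨w.unpair.1, (hiff _).2 ⟨w.unpair.2, hw⟩⟩

private lemma sigma_step {n : ℕ} {G : ℕ → Prop} (hG : PiN n G) {F : ℕ → ℕ → Prop}
    (hF : ComputablePred fun z : ℕ => F z.unpair.1 z.unpair.2) :
    SigmaN (n + 1) fun x => ∃ y, G y ∧ F x y := by
  refine ⟨fun z => ¬ (G z.unpair.2 ∧ F z.unpair.1 z.unpair.2), ?_, fun x => ?_⟩
  · refine SigmaN.of_iff ((SigmaN.and_or n _ _ (SigmaN.comp hG hu2)
      (SigmaN.of_cp hF.not)).2) fun z => ?_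
    rw [not_and_or]
  · simp only [Nat.unpair_pair, not_not]

end Aux

/-- Barker's lemma.  Let `G` be a computable Abelian `p`-group (presented by
`(add, neg, zero)` on ℕ).  Then for all `M, m`: `G_{ω·M}` is Π⁰₂M,
`G_{ω·M+m}` is Σ⁰₂M₊₁, `P_{ω·M}` is Π⁰₂M, and `P_{ω·M+m}` is Σ⁰₂M₊₁. -/
theorem stmt11 (p : ℕ) (hp : p.Prime)
    (add : ℕ → ℕ → ℕ) (neg : ℕ → ℕ) (zero : ℕ)
    (hpres : IsGrpPres add neg zero)
    (hadd : Computable₂ add) (hneg : Computable neg)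
    (hpgroup : ∀ x, ∃ n, nsm add zero (p ^ n) x = zero) :
    ∀ M m : ℕ,
      PiN (2 * M) (Gword add zero p M) ∧
      SigmaN (2 * M + 1)
        (fun x => ∃ y, Gword add zero p M y ∧ nsm add zero (p ^ m) y = x) ∧
      PiN (2 * M) (fun x => Gword add zero p M x ∧ nsm add zero p x = zero) ∧
      SigmaN (2 * M + 1)
        (fun x => (∃ y, Gword add zero p M y ∧ nsm add zero (p ^ m) y = x) ∧
          nsm add zero p x = zero) := by
  -- `nsm` is computable in both arguments
  have hnsm : Computable₂ (nsm add zero) := by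
    have := Computable.nat_rec (Computable.fst (α := ℕ) (β := ℕ))
      (Computable.const zero)
      ((hadd.comp ((Computable.snd).comp Computable.fst)
        ((Computable.snd).comp Computable.snd)).to₂ :
        Computable₂ fun (a : ℕ × ℕ) (q : ℕ × ℕ) => add a.2 q.2)
    refine Computable₂.mk (this.of_eq fun a => ?_)
    induction a.1 with
    | zero => rfl
    | succ k ih => simp [nsm, ih]
  -- `m ↦ p ^ m` is computable
  have hpow : Computable fun m : ℕ => p ^ m := by
    have := Computable.nat_rec (Computable.id (α := ℕ)) (Computable.const 1)
      ((Primrec.nat_mul.to_comp.comp (Computable.const p)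
        ((Computable.snd).comp Computable.snd)).to₂ :
        Computable₂ fun (_ : ℕ) (q : ℕ × ℕ) => p * q.2)
    refine this.of_eq fun m => ?_
    induction m with
    | zero => rfl
    | succ k ih =>
      simp only [id_eq] at ih ⊢
      rw [pow_succ, Nat.mul_comm (p ^ k) p, ← ih]
  -- main induction: `G_{ω·M}` is Π⁰₂M
  have key : ∀ M : ℕ, PiN (2 * M) (Gword add zero p M) := by
    intro M
    induction M with
    | zero =>
      show ComputablePred fun x => ¬ Gword add zero p 0 x
      refine ComputablePred.computable_iff.2 ⟨fun _ => false, Computable.const false, ?_⟩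
      funext x
      simp [Gword]
    | succ M ih =>
      -- the uniform Σ⁰₂M₊₁ relation `T (pair x m) ↔ ∃ y, G_M y ∧ p^m • y = x`
      have hT : SigmaN (2 * M + 1)
          (fun w => ∃ y, Gword add zero p M y ∧
            nsm add zero (p ^ w.unpair.2) y = w.unpair.1) := by
        refine sigma_step ih ?_
        exact cp_eq
          (hnsm.comp (hpow.comp (hu2.comp hu1)) hu2)
          (hu1.comp hu1)
      -- `¬T` is Σ⁰₂M₊₂
      have hnT : SigmaN (2 * M + 1 + 1) (fun w => ¬ (∃ y, Gword add zero p M y ∧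
          nsm add zero (p ^ w.unpair.2) y = w.unpair.1)) :=
        PiN.toSigma (SigmaN.of_iff hT fun w => Iff.symm not_not)
      have hE := SigmaN.exists_pair hnT
      have h2M : 2 * (M + 1) = 2 * M + 1 + 1 := by ring
      rw [show PiN (2 * (M + 1)) (Gword add zero p (M + 1)) =
        SigmaN (2 * M + 1 + 1) (fun x => ¬ Gword add zero p (M + 1) x) by rw [h2M]; rfl]
      refine SigmaN.of_iff hE fun x => ?_
      constructor
      · rintro ⟨m, hm⟩ hG
        exact hm (by simpa using hG m)
      · intro hG
        rw [show (Gword add zero p (M + 1) x) =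
          ∀ m : ℕ, ∃ y, Gword add zero p M y ∧ nsm add zero (p ^ m) y = x from rfl] at hG
        push_neg at hG
        obtain ⟨m, hm⟩ := hG
        refine ⟨m, ?_⟩
        simp only [Nat.unpair_pair]
        rintro ⟨y, hy1, hy2⟩
        exact hm y hy1 hy2
  intro M m
  have h1 := key M
  have h2 : SigmaN (2 * M + 1)
      (fun x => ∃ y, Gword add zero p M y ∧ nsm add zero (p ^ m) y = x) := by
    refine sigma_step h1 ?_
    exact cp_eq (hnsm.comp (Computable.const (p ^ m)) hu2) hu1
  have hC : ComputablePred fun x : ℕ => nsm add zero p x = zero :=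
    cp_eq (hnsm.comp (Computable.const p) Computable.id) (Computable.const zero)
  refine ⟨h1, h2, ?_, ?_⟩
  · refine SigmaN.of_iff ((SigmaN.and_or (2 * M) _ _ h1 (SigmaN.of_cp hC.not)).2)
      fun x => ?_
    rw [not_and_or]
  · exact (SigmaN.and_or (2 * M + 1) _ _ h2 (SigmaN.of_cp hC)).1
end

section
/- Let C be a reduced Abelian p-group of length N with a unique k < N such that u_k(C) = ∞ and u_m(C) = 0 for all m < k. Then C ≅ H ⊕ (Z/p^{k+1})^{(ω)} where H is a finite direct sum of cyclic groups Z/p^{i+1} with k < i < N; and any countable Abelian p-group G of length ≤ N with u_m(G) = 0 for m < k, with p^{k+1}G ≅ p^{k+1}C, and containing subgroups isomorphic to (Z/p^{k+1})^r for every r, is isomorphic to C. -/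
/-- The `j`-th Ulm invariant of `G` is infinite. -/
def UlmInf (G : Type*) [AddCommGroup G] (p j : ℕ) : Prop :=
  Infinite ((Psub G p j) ⧸ ((Psub G p (j + 1)).addSubgroupOf (Psub G p j)))

/-- The `j`-th Ulm invariant of `G` is zero. -/
def UlmZero (G : Type*) [AddCommGroup G] (p j : ℕ) : Prop :=
  Psub G p j ≤ Psub G p (j + 1)

abbrev UlmQuot (G : Type*) [AddCommGroup G] (p j : ℕ) :=
  (Psub G p j) ⧸ ((Psub G p (j + 1)).addSubgroupOf (Psub G p j))

lemma ulmInf_iff {G : Type*} [AddCommGroup G] {p j : ℕ} :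
    UlmInf G p j ↔ Infinite (UlmQuot G p j) := Iff.rfl

section basic
variable {G H : Type*} [AddCommGroup G] [AddCommGroup H] {p j t : ℕ}

lemma smulHom_apply {x : G} : smulHom G j x = j • x := rfl

lemma mem_smulSub {x : G} : x ∈ smulSub G j ↔ ∃ y, j • y = x := by
  simp [smulSub, AddMonoidHom.mem_range, smulHom_apply]

lemma mem_Psub {x : G} : x ∈ Psub G p j ↔ (∃ y, (p ^ j) • y = x) ∧ p • x = 0 := by
  simp [Psub, AddSubgroup.mem_inf, mem_smulSub, AddMonoidHom.mem_ker, smulHom_apply]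

lemma Psub_antitone (h : j ≤ t) : Psub G p t ≤ Psub G p j := by
  intro x hx
  rw [mem_Psub] at hx ⊢
  obtain ⟨⟨y, hy⟩, h2⟩ := hx
  exact ⟨⟨(p ^ (t - j)) • y, by rw [← hy, smul_smul, ← pow_add, Nat.add_sub_cancel' h]⟩, h2⟩

lemma Psub_map (e : G ≃+ H) (p j : ℕ) :
    (Psub G p j).map e.toAddMonoidHom = Psub H p j := by
  ext x
  simp only [AddSubgroup.mem_map, mem_Psub, AddEquiv.coe_toAddMonoidHom]
  constructor
  · rintro ⟨y, ⟨⟨z, hz⟩, h2⟩, rfl⟩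
    exact ⟨⟨e z, by rw [← map_nsmul, hz]⟩, by rw [← map_nsmul, h2, map_zero]⟩
  · rintro ⟨⟨z, hz⟩, h2⟩
    refine ⟨e.symm x, ⟨⟨e.symm z, by rw [← map_nsmul, hz]⟩, ?_⟩, by simp⟩
    rw [← map_nsmul, h2, map_zero]

/-- Transport of Ulm quotients along an `AddEquiv`. -/
noncomputable def ulmQuotCongr (e : G ≃+ H) (p j : ℕ) :
    UlmQuot G p j ≃+ UlmQuot H p j := by
  refine QuotientAddGroup.congr _ _
    ((e.addSubgroupMap (Psub G p j)).trans (AddEquiv.addSubgroupCongr (Psub_map e p j))) ?_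
  ext x
  simp only [AddSubgroup.mem_map, AddSubgroup.mem_addSubgroupOf]
  constructor
  · rintro ⟨y, hy, rfl⟩
    simpa using (Psub_map e p (j+1)) ▸ AddSubgroup.mem_map_of_mem _ hy
  · intro hx
    refine ⟨⟨e.symm x.1, ?_⟩, ?_, ?_⟩
    · have := (Psub_map e.symm p j) ▸ AddSubgroup.mem_map_of_mem (e.symm.toAddMonoidHom) x.2
      simpa using this
    · have := (Psub_map e.symm p (j+1)) ▸ AddSubgroup.mem_map_of_mem (e.symm.toAddMonoidHom) hx
      simpa using this
    · ext; exact e.apply_symm_apply x.1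
end basic

section shift
variable {G : Type*} [AddCommGroup G] {p t j : ℕ}

lemma mem_smulSub_of_Psub {x : G} (hx : x ∈ Psub G p (t + j)) : x ∈ smulSub G (p ^ t) := by
  rw [mem_Psub] at hx
  obtain ⟨⟨z, hz⟩, -⟩ := hx
  exact mem_smulSub.2 ⟨(p ^ j) • z, by rw [smul_smul, ← pow_add, ← hz]⟩

lemma mem_Psub_smulSub {a : ↥(smulSub G (p ^ t))} :
    a ∈ Psub (↥(smulSub G (p ^ t))) p j ↔ (a : G) ∈ Psub G p (t + j) := by
  rw [mem_Psub, mem_Psub]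
  constructor
  · rintro ⟨⟨y, hy⟩, h2⟩
    obtain ⟨z, hz⟩ := mem_smulSub.1 y.2
    refine ⟨⟨z, ?_⟩, ?_⟩
    · rw [pow_add, mul_comm, ← smul_smul, hz, ← AddSubgroup.coe_nsmul, hy]
    · rw [← AddSubgroup.coe_nsmul, h2, AddSubgroup.coe_zero]
  · rintro ⟨⟨z, hz⟩, h2⟩
    refine ⟨⟨⟨(p ^ t) • z, mem_smulSub.2 ⟨z, rfl⟩⟩, ?_⟩, ?_⟩
    · apply Subtype.ext
      rw [AddSubgroup.coe_nsmul]
      show (p ^ j) • ((p ^ t) • z) = _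
      rw [smul_smul, ← pow_add, add_comm j t, hz]
    · apply Subtype.ext
      rw [AddSubgroup.coe_nsmul, h2]
      rfl

/-- Shifting `Psub` along the subgroup `p^t G`. -/
def psubShift (G : Type*) [AddCommGroup G] (p t j : ℕ) :
    ↥(Psub (↥(smulSub G (p ^ t))) p j) ≃+ ↥(Psub G p (t + j)) where
  toFun x := ⟨x.1.1, mem_Psub_smulSub.1 x.2⟩
  invFun x := ⟨⟨x.1, mem_smulSub_of_Psub x.2⟩, mem_Psub_smulSub.2 x.2⟩
  left_inv x := Subtype.ext (Subtype.ext rfl)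
  right_inv x := Subtype.ext rfl
  map_add' x y := Subtype.ext rfl

/-- Shifting Ulm quotients along the subgroup `p^t G`. -/
noncomputable def ulmQuotShift (G : Type*) [AddCommGroup G] (p t j : ℕ) :
    UlmQuot (↥(smulSub G (p ^ t))) p j ≃+ UlmQuot G p (t + j) := by
  refine QuotientAddGroup.congr _ _ (psubShift G p t j) ?_
  ext x
  rw [← AddEquiv.toAddMonoidHom_eq_coe, AddSubgroup.mem_map_equiv]
  show ((psubShift G p t j).symm x).1 ∈ Psub _ p (j + 1) ↔ (x : G) ∈ Psub G p (t + j + 1)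
  rw [mem_Psub_smulSub]
  rfl
end shift

section card
variable {p : ℕ} [Fact p.Prime]

lemma zmod_smul_eq_val_nsmul {n : ℕ} [NeZero n] {M : Type*} [AddCommGroup M]
    [Module (ZMod n) M] (c : ZMod n) (x : M) : c • x = c.val • x := by
  conv_lhs => rw [show c = ((c.val : ℕ) : ZMod n) by rw [ZMod.natCast_val, ZMod.cast_id]]
  rw [Nat.cast_smul_eq_nsmul]

/-- An additive equivalence of `ZMod n`-modules is linear. -/
def addEquivToLinearZMod {n : ℕ} [NeZero n] {M N : Type*} [AddCommGroup M] [AddCommGroup N]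
    [Module (ZMod n) M] [Module (ZMod n) N] (e : M ≃+ N) : M ≃ₗ[ZMod n] N :=
  { e with
    map_smul' := fun c x => by
      simp only [AddEquiv.toEquiv_eq_coe, Equiv.toFun_as_coe, EquivLike.coe_coe, RingHom.id_apply]
      rw [zmod_smul_eq_val_nsmul, zmod_smul_eq_val_nsmul, map_nsmul] }

lemma finsupp_equiv_index {X Y : Type} (e : (X →₀ ZMod p) ≃+ (Y →₀ ZMod p)) :
    Nonempty (X ≃ Y) := by
  have := (addEquivToLinearZMod (n := p) e).rank_eq
  rw [rank_finsupp_self, rank_finsupp_self, Cardinal.lift_id, Cardinal.lift_id] at this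
  exact Cardinal.eq.1 this

lemma finsupp_infinite_iff {X : Type*} : Infinite (X →₀ ZMod p) ↔ Infinite X := by
  constructor
  · intro h
    by_contra hX
    rw [not_infinite_iff_finite] at hX
    have : Finite (X →₀ ZMod p) := Finite.of_equiv _ Finsupp.equivFunOnFinite.symm
    exact this.not_infinite h
  · intro h
    exact Infinite.of_injective (fun a : X => Finsupp.single a (1 : ZMod p))
      (Finsupp.single_left_injective one_ne_zero)

lemma finsupp_subsingleton_isEmpty {X : Type*} (h : Subsingleton (X →₀ ZMod p)) :
    IsEmpty X := by
  by_contra hX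
  rw [not_isEmpty_iff] at hX
  obtain ⟨x⟩ := hX
  have h1 : (Finsupp.single x (1 : ZMod p)) = 0 := Subsingleton.elim _ _
  have := Finsupp.single_eq_zero.1 h1
  exact one_ne_zero this
end card

section finiteness
variable {G : Type*} [AddCommGroup G] {p j : ℕ}

lemma psub_finite_of_quot (h1 : Finite ↥(Psub G p (j + 1))) (h2 : Finite (UlmQuot G p j)) :
    Finite ↥(Psub G p j) := by
  have hsub : Finite ↥((Psub G p (j + 1)).addSubgroupOf (Psub G p j)) := by
    apply Finite.of_injective (fun z : ↥((Psub G p (j + 1)).addSubgroupOf (Psub G p j)) =>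
      (⟨z.1.1, z.2⟩ : ↥(Psub G p (j + 1))))
    intro a b hab
    replace hab := congrArg Subtype.val hab
    exact Subtype.ext (Subtype.ext hab)
  have := AddSubgroup.addGroupEquivQuotientProdAddSubgroup
    (s := (Psub G p (j + 1)).addSubgroupOf (Psub G p j))
  exact Finite.of_equiv _ this.symm

lemma psub_infinite_quot (h1 : Infinite ↥(Psub G p j)) (h2 : Finite ↥(Psub G p (j + 1))) :
    Infinite (UlmQuot G p j) := by
  by_contra h
  rw [not_infinite_iff_finite] at h
  exact (psub_finite_of_quot h2 h).not_infinite h1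

lemma infinite_of_injections {α : Type*}
    (h : ∀ n : ℕ, ∃ f : Fin n → α, Function.Injective f) : Infinite α := by
  by_contra hα
  rw [not_infinite_iff_finite] at hα
  have := Fintype.ofFinite α
  obtain ⟨f, hf⟩ := h (Fintype.card α + 1)
  have := Fintype.card_le_of_injective f hf
  simp at this
end finiteness
section main

lemma addsub_coe_sum {G : Type*} [AddCommGroup G] {H : AddSubgroup G} {ι : Type*}
    (s : Finset ι) (f : ι → ↥H) : ((∑ i ∈ s, f i : ↥H) : G) = ∑ i ∈ s, ((f i : G)) :=
  map_sum H.subtype f s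

lemma main_decomp {p : ℕ} (hp : p.Prime) (N : ℕ) (G : Type) [AddCommGroup G] [Countable G]
    (hlen : ∀ x : G, (p ^ N) • x = 0) :
    ∃ B : Fin N → Type,
      (∀ j, Countable (B j)) ∧
      (∀ j : Fin N, Nonempty (UlmQuot G p (j : ℕ) ≃+ (B j →₀ ZMod p))) ∧
      Nonempty (G ≃+ ∀ j : Fin N, (B j →₀ ZMod (p ^ ((j : ℕ) + 1)))) := by
  classical
  haveI hpf : Fact p.Prime := ⟨hp⟩
  set S : AddSubgroup G := (smulHom G p).ker with hSdef
  haveI : Module (ZMod p) ↥S := AddCommGroup.zmodModule (by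
    rintro ⟨x, hx⟩
    apply Subtype.ext
    rw [AddSubgroup.coe_nsmul]
    exact hx)
  set W : ℕ → Submodule (ZMod p) ↥S :=
    fun j => AddSubgroup.toZModSubmodule p ((smulSub G (p ^ j)).comap S.subtype) with hWdef
  have hWmem : ∀ (j : ℕ) (x : ↥S), x ∈ W j ↔ (x : G) ∈ smulSub G (p ^ j) := by
    intro j x
    rw [hWdef]
    rw [AddSubgroup.mem_toZModSubmodule, AddSubgroup.mem_comap]
    rfl
  have hWanti : ∀ {a b : ℕ}, a ≤ b → W b ≤ W a := by
    intro a b hab x hx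
    rw [hWmem] at hx ⊢
    obtain ⟨y, hy⟩ := mem_smulSub.1 hx
    exact mem_smulSub.2 ⟨(p ^ (b - a)) • y, by
      rw [smul_smul, ← pow_add, Nat.add_sub_cancel' hab, hy]⟩
  have hWtop : W 0 = ⊤ := by
    rw [eq_top_iff]
    intro x _
    rw [hWmem]
    exact mem_smulSub.2 ⟨x, by rw [pow_zero, one_nsmul]⟩
  have hWbot : ∀ j, N ≤ j → W j = ⊥ := by
    intro j hj
    rw [eq_bot_iff]
    intro x hx
    rw [hWmem] at hx
    obtain ⟨y, hy⟩ := mem_smulSub.1 hx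
    have h0 : (x : G) = 0 := by
      rw [← hy, ← Nat.sub_add_cancel hj, pow_add, mul_smul, hlen y, smul_zero]
    exact Subtype.ext h0
  set Pr : ℕ → Set ↥S → Prop := fun i A =>
    A ⊆ ↑(W (N - i)) ∧ Submodule.span (ZMod p) A = W (N - i) ∧
      LinearIndependent (ZMod p) (Subtype.val : A → ↥S) with hPr
  have h0 : Pr 0 ∅ := by
    refine ⟨Set.empty_subset _, ?_, linearIndependent_empty _ _⟩
    rw [Submodule.span_empty, Nat.sub_zero, hWbot N le_rfl]
  have hstep : ∀ i (A : {A : Set ↥S // Pr i A}), ∃ A' : {A' : Set ↥S // Pr (i + 1) A'},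
      A.1 ⊆ A'.1 := by
    rintro i ⟨A, hA1, hA2, hA3⟩
    have hsub : A ⊆ ↑(W (N - (i + 1))) :=
      hA1.trans (hWanti (Nat.sub_le_sub_left (Nat.le_succ i) N))
    obtain ⟨b, hb_t, hAb, ht_b, hli⟩ := exists_linearIndepOn_id_extension hA3 hsub
    refine ⟨⟨b, hb_t, ?_, hli⟩, hAb⟩
    apply le_antisymm
    · rw [Submodule.span_le]; exact hb_t
    · intro x hx; exact ht_b hx
  choose F hF using hstep
  let cs : ∀ i : ℕ, {A : Set ↥S // Pr i A} := fun i => Nat.rec ⟨∅, h0⟩ F i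
  have cs_succ : ∀ i, cs (i + 1) = F i (cs i) := fun i => rfl
  have cs_mono : ∀ {a b : ℕ}, a ≤ b → (cs a).1 ⊆ (cs b).1 := by
    intro a b hab
    induction b, hab using Nat.le_induction with
    | base => exact subset_rfl
    | succ b hb ih =>
      refine ih.trans ?_
      rw [cs_succ b]
      exact hF b (cs b)
  set sfun : ℕ → Set ↥S := fun j => (cs (N - j)).1 with hsfun
  have sPr : ∀ j, Pr (N - j) (sfun j) := fun j => (cs (N - j)).2
  have sfun_anti : ∀ {a b : ℕ}, a ≤ b → sfun b ⊆ sfun a := fun {a b} h =>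
    cs_mono (Nat.sub_le_sub_left h N)
  have sspan : ∀ j, j ≤ N → Submodule.span (ZMod p) (sfun j) = W j := by
    intro j hj
    have := (sPr j).2.1
    rwa [Nat.sub_sub_self hj] at this
  have ssub : ∀ j, j ≤ N → sfun j ⊆ ↑(W j) := by
    intro j hj
    have := (sPr j).1
    rwa [Nat.sub_sub_self hj] at this
  have sli : ∀ j, LinearIndependent (ZMod p) (Subtype.val : sfun j → ↥S) := fun j => (sPr j).2.2
  have sN : sfun N = ∅ := by
    rw [hsfun]
    show (cs (N - N)).1 = ∅
    rw [Nat.sub_self]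
    rfl
  set s0 : Set ↥S := sfun 0 with hs0
  set ht : ↥S → ℕ := fun x => Nat.findGreatest (fun j => x ∈ sfun j) N with hht
  have ht_mem : ∀ x : ↥S, x ∈ s0 → x ∈ sfun (ht x) := by
    intro x hx
    rw [hht]
    exact Nat.findGreatest_spec (P := fun j => x ∈ sfun j) (Nat.zero_le N) hx
  have ht_le : ∀ x, ht x ≤ N := by
    intro x
    rw [hht]
    exact Nat.findGreatest_le N
  have ht_lt : ∀ x ∈ s0, ht x < N := by
    intro x hx
    rcases Nat.lt_or_ge (ht x) N with h | h
    · exact h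
    · exfalso
      have h1 : ht x = N := le_antisymm (ht_le x) h
      have h2 := ht_mem x hx
      rw [h1, sN] at h2
      exact h2
  have ht_ge : ∀ (x : ↥S) (j : ℕ), j ≤ N → x ∈ sfun j → j ≤ ht x := by
    intro x j hj hx
    rw [hht]
    exact Nat.le_findGreatest (P := fun j => x ∈ sfun j) hj hx
  have ht_notmem : ∀ x ∈ s0, x ∉ sfun (ht x + 1) := by
    intro x hx
    have hlt := ht_lt x hx
    rw [hht] at hlt
    have h2 : ¬ (fun j => x ∈ sfun j) (Nat.findGreatest (fun j => x ∈ sfun j) N + 1) :=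
      Nat.findGreatest_is_greatest (Nat.lt_succ_self _) hlt
    rw [hht]
    exact h2
  have ht_eq : ∀ (x : ↥S) (j : ℕ), j < N → x ∈ sfun j → x ∉ sfun (j + 1) →
      x ∈ s0 ∧ ht x = j := by
    intro x j hj h1 h2
    have hx0 : x ∈ s0 := sfun_anti (Nat.zero_le j) h1
    refine ⟨hx0, le_antisymm ?_ (ht_ge x j hj.le h1)⟩
    by_contra hgt
    push_neg at hgt
    exact h2 (sfun_anti hgt (ht_mem x hx0))
  -- lift the basis elements
  have hgex : ∀ x : ↥s0, ∃ gx : G, (p ^ (ht x.1)) • gx = (x.1 : G) := by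
    intro x
    have hx : x.1 ∈ sfun (ht x.1) := ht_mem x.1 x.2
    have hmem := ssub (ht x.1) (ht_le x.1) hx
    exact mem_smulSub.1 ((hWmem _ x.1).1 hmem)
  choose gg hgg using hgex
  have hord : ∀ x : ↥s0, (p ^ (ht x.1 + 1)) • gg x = 0 := by
    intro x
    rw [pow_succ', mul_smul, hgg x]
    exact x.1.2
  set B : Fin N → Type := fun j => {x : ↥s0 // ht x.1 = (j : ℕ)} with hB
  have hcount : ∀ j, Countable (B j) := fun j => inferInstance
  -- the cyclic homomorphisms
  have hcast : ∀ (j : Fin N) (b : B j), ((p ^ ((j : ℕ) + 1) : ℕ) : ℤ) • gg b.1 = 0 := by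
    intro j b
    have h := hord b.1
    rw [b.2] at h
    rw [natCast_zsmul]
    exact h
  set cyc : ∀ j : Fin N, B j → (ZMod (p ^ ((j : ℕ) + 1)) →+ G) :=
    fun j b => ZMod.lift _ ⟨zmultiplesHom G (gg b.1), by
      rw [zmultiplesHom_apply]; exact hcast j b⟩ with hcyc
  have cyc_nat : ∀ (j : Fin N) (b : B j) (m : ℕ),
      cyc j b ((m : ℕ) : ZMod (p ^ ((j : ℕ) + 1))) = m • gg b.1 := by
    intro j b m
    rw [hcyc]
    simp only []
    rw [show ((m : ℕ) : ZMod (p ^ ((j : ℕ) + 1))) = (((m : ℤ) : ZMod (p ^ ((j : ℕ) + 1)))) by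
      push_cast; ring]
    rw [ZMod.lift_coe, zmultiplesHom_apply, natCast_zsmul]
  have cyc_val : ∀ (j : Fin N) (b : B j) (a : ZMod (p ^ ((j : ℕ) + 1))),
      cyc j b a = a.val • gg b.1 := by
    intro j b a
    haveI : NeZero (p ^ ((j : ℕ) + 1)) := NeZero.of_pos (pow_pos hp.pos _)
    conv_lhs => rw [show a = (((a.val : ℕ) : ZMod (p ^ ((j : ℕ) + 1)))) by
      rw [ZMod.natCast_val, ZMod.cast_id]]
    exact cyc_nat j b a.val
  set Φ : (∀ j : Fin N, (B j →₀ ZMod (p ^ ((j : ℕ) + 1)))) →+ G :=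
    ∑ j : Fin N, (Finsupp.liftAddHom (cyc j)).comp (Pi.evalAddMonoidHom _ j) with hΦ
  have Φ_apply : ∀ f, Φ f = ∑ j : Fin N, (f j).sum fun b a => cyc j b a := by
    intro f
    rw [hΦ, AddMonoidHom.finset_sum_apply]
    refine Finset.sum_congr rfl fun j _ => ?_
    rw [AddMonoidHom.comp_apply, Finsupp.liftAddHom_apply]
    rfl
  have Φ_single : ∀ (j : Fin N) (b : B j) (a : ZMod (p ^ ((j : ℕ) + 1))),
      Φ (Pi.single j (Finsupp.single b a)) = cyc j b a := by
    intro j b a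
    rw [Φ_apply, Finset.sum_eq_single j]
    · rw [Pi.single_eq_same]
      exact Finsupp.sum_single_index (map_zero _)
    · intro j' _ hne
      rw [Pi.single_eq_of_ne hne, Finsupp.sum_zero_index]
    · intro h; exact absurd (Finset.mem_univ j) h
  have hrangeg : ∀ x : ↥s0, gg x ∈ Φ.range := by
    intro x
    refine ⟨Pi.single ⟨ht x.1, ht_lt x.1 x.2⟩ (Finsupp.single ⟨x, rfl⟩ (1 : ZMod _)), ?_⟩
    rw [Φ_single]
    have h1 := cyc_nat ⟨ht x.1, ht_lt x.1 x.2⟩ ⟨x, rfl⟩ 1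
    rw [Nat.cast_one] at h1
    rw [h1, one_nsmul]
  -- surjectivity
  have key : ∀ t : ℕ, t ≤ N → ∀ x : G, (p ^ t) • x = 0 → x ∈ Φ.range := by
    intro t
    induction t with
    | zero =>
      intro _ x hx
      rw [pow_zero, one_nsmul] at hx
      rw [hx]; exact zero_mem _
    | succ t ih =>
      intro htN x hx
      have htN' : t ≤ N := (Nat.le_succ t).trans htN
      have hxS : (p ^ t) • x ∈ S := by
        show p • ((p ^ t) • x) = 0
        rw [← mul_smul, ← pow_succ']
        exact hx
      have hyW : (⟨(p ^ t) • x, hxS⟩ : ↥S) ∈ W t := (hWmem t _).2 (mem_smulSub.2 ⟨x, rfl⟩)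
      rw [← sspan t htN'] at hyW
      obtain ⟨c, hcsupp, hcsum⟩ := Submodule.mem_span_set.1 hyW
      have hmem0 : ∀ m ∈ c.support, (m : ↥S) ∈ s0 :=
        fun m hm => sfun_anti (Nat.zero_le t) (hcsupp hm)
      have hmemt : ∀ m ∈ c.support, t ≤ ht m :=
        fun m hm => ht_ge m t htN' (hcsupp hm)
      set b' : G := ∑ m ∈ c.support.attach,
        (c m.1).val • ((p ^ (ht m.1 - t)) • gg ⟨m.1, hmem0 m.1 m.2⟩) with hb'
      have hb'range : b' ∈ Φ.range := by
        apply AddSubgroup.sum_mem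
        intro m _
        exact AddSubgroup.nsmul_mem _ (AddSubgroup.nsmul_mem _ (hrangeg _) _) _
      have hyval : (p ^ t) • x = ∑ m ∈ c.support, (c m).val • (m : G) := by
        have h1 : ((⟨(p ^ t) • x, hxS⟩ : ↥S) : G) = ((c.sum fun mi r => r • mi : ↥S) : G) := by
          rw [hcsum]
        rw [show (p ^ t) • x = ((⟨(p ^ t) • x, hxS⟩ : ↥S) : G) from rfl, h1, Finsupp.sum]
        rw [addsub_coe_sum]
        refine Finset.sum_congr rfl fun m hm => ?_
        rw [zmod_smul_eq_val_nsmul, AddSubgroup.coe_nsmul]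
      have hpb' : (p ^ t) • b' = (p ^ t) • x := by
        rw [hb', Finset.smul_sum, hyval,
          ← Finset.sum_attach c.support (fun m => (c m).val • (m : G))]
        refine Finset.sum_congr rfl fun m _ => ?_
        have h2 : (p ^ t) • ((p ^ (ht m.1 - t)) • gg ⟨m.1, hmem0 m.1 m.2⟩)
            = ((m.1 : ↥S) : G) := by
          rw [← mul_smul, ← pow_add, Nat.add_sub_cancel' (hmemt m.1 m.2)]
          exact hgg ⟨m.1, hmem0 m.1 m.2⟩
        rw [smul_comm, h2]
      have hfinal : (p ^ t) • (x - b') = 0 := by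
        rw [smul_sub, hpb', sub_self]
      have hxb := ih htN' (x - b') hfinal
      have hxx : x = (x - b') + b' := by abel
      rw [hxx]
      exact AddSubgroup.add_mem _ hxb hb'range
  have hsurj : Function.Surjective Φ := fun x => key N le_rfl x (hlen x)
  -- injectivity
  have socle : ∀ f, (∀ (j : Fin N) (b : B j), p • f j b = 0) → Φ f = 0 → f = 0 := by
    intro f hpf hf0
    have hdvd : ∀ (j : Fin N) (b : B j), (p ^ (j : ℕ)) ∣ (f j b).val := by
      intro j b
      haveI : NeZero (p ^ ((j : ℕ) + 1)) := NeZero.of_pos (pow_pos hp.pos _)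
      have h1 : ((p * (f j b).val : ℕ) : ZMod (p ^ ((j : ℕ) + 1))) = 0 := by
        push_cast
        rw [ZMod.natCast_val, ZMod.cast_id, ← nsmul_eq_mul]
        exact hpf j b
      have h2 := (ZMod.natCast_eq_zero_iff _ _).1 h1
      have h3 : p * p ^ (j : ℕ) ∣ p * (f j b).val := by
        rw [← pow_succ']
        exact h2
      exact (Nat.mul_dvd_mul_iff_left hp.pos).1 h3
    set cf : ∀ j : Fin N, B j → ℕ := fun j b => (f j b).val / (p ^ (j : ℕ)) with hcf
    have hcfval : ∀ j b, cf j b * p ^ (j : ℕ) = (f j b).val := by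
      intro j b
      exact Nat.div_mul_cancel (hdvd j b)
    have hcflt : ∀ j b, cf j b < p := by
      intro j b
      haveI : NeZero (p ^ ((j : ℕ) + 1)) := NeZero.of_pos (pow_pos hp.pos _)
      have hvlt : (f j b).val < p ^ ((j : ℕ) + 1) := ZMod.val_lt _
      show (f j b).val / p ^ (j : ℕ) < p
      rw [Nat.div_lt_iff_lt_mul (pow_pos hp.pos _)]
      exact lt_of_lt_of_eq hvlt (pow_succ' p _)
    set l : ↥S →₀ ZMod p :=
      ∑ j : Fin N, ∑ b ∈ (f j).support, Finsupp.single (b.1.1) ((cf j b : ZMod p)) with hl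
    have hlsupp : l ∈ Finsupp.supported (ZMod p) (ZMod p) s0 := by
      rw [Finsupp.mem_supported]
      intro x hx
      rw [Finset.mem_coe, Finsupp.mem_support_iff, hl] at hx
      rw [Finsupp.finset_sum_apply] at hx
      obtain ⟨j, -, hj⟩ := Finset.exists_ne_zero_of_sum_ne_zero hx
      rw [Finsupp.finset_sum_apply] at hj
      obtain ⟨b, -, hb⟩ := Finset.exists_ne_zero_of_sum_ne_zero hj
      by_cases hbx : b.1.1 = x
      · rw [← hbx]; exact b.1.2
      · exact absurd (Finsupp.single_eq_of_ne' hbx) hb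
    have hltot : Finsupp.linearCombination (ZMod p) id l = 0 := by
      have hcoe : ((Finsupp.linearCombination (ZMod p) id l : ↥S) : G) = Φ f := by
        rw [hl, map_sum, addsub_coe_sum, Φ_apply]
        refine Finset.sum_congr rfl fun j _ => ?_
        rw [map_sum, addsub_coe_sum, Finsupp.sum]
        refine Finset.sum_congr rfl fun b hb => ?_
        rw [Finsupp.linearCombination_single, id_eq, zmod_smul_eq_val_nsmul,
          ZMod.val_cast_of_lt (hcflt j b), AddSubgroup.coe_nsmul, cyc_val]
        have hb1 : ((b.1.1 : ↥S) : G) = (p ^ (j : ℕ)) • gg b.1 := by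
          have h4 := hgg b.1
          rw [b.2] at h4
          exact h4.symm
        rw [hb1, ← mul_smul, hcfval j b]
      rw [hf0] at hcoe
      exact Subtype.ext hcoe
    have hl0 : l = 0 := by
      have := (linearIndepOn_iff (v := id)).1 (sli 0) l hlsupp hltot
      exact this
    funext j
    ext b
    show f j b = (0 : B j →₀ ZMod (p ^ ((j : ℕ) + 1))) b
    rw [Finsupp.coe_zero, Pi.zero_apply]
    by_contra hne
    have hbsupp : b ∈ (f j).support := Finsupp.mem_support_iff.2 hne
    have hlval : l (b.1.1) = ((cf j b : ℕ) : ZMod p) := by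
      rw [hl, Finsupp.finset_sum_apply, Finset.sum_eq_single j]
      · rw [Finsupp.finset_sum_apply, Finset.sum_eq_single b]
        · rw [Finsupp.single_eq_same]
        · intro b' _ hbne
          apply Finsupp.single_eq_of_ne'
          intro heq
          exact hbne (Subtype.ext (Subtype.ext heq))
        · intro hb; exact absurd hbsupp hb
      · intro j' _ hjne
        rw [Finsupp.finset_sum_apply]
        apply Finset.sum_eq_zero
        intro b' _
        apply Finsupp.single_eq_of_ne'
        intro heq
        apply hjne
        apply Fin.ext
        rw [← b'.2, heq, b.2]
      · intro h; exact absurd (Finset.mem_univ j) h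
    rw [hl0, Finsupp.coe_zero, Pi.zero_apply] at hlval
    have hcf0 : cf j b = 0 := by
      have h3 := ZMod.val_cast_of_lt (hcflt j b)
      rw [← hlval, ZMod.val_zero] at h3
      exact h3.symm
    have hval0 : (f j b).val = 0 := by rw [← hcfval j b, hcf0, zero_mul]
    haveI : NeZero (p ^ ((j : ℕ) + 1)) := NeZero.of_pos (pow_pos hp.pos _)
    exact hne ((ZMod.val_eq_zero _).1 hval0)
  have hexp : ∀ (m : ℕ) (f : ∀ j : Fin N, (B j →₀ ZMod (p ^ ((j : ℕ) + 1)))),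
      (p ^ m) • f = 0 → Φ f = 0 → f = 0 := by
    intro m
    induction m with
    | zero =>
      intro f hf _
      rwa [pow_zero, one_nsmul] at hf
    | succ m ih =>
      intro f hf hf0
      have hpf : p • f = 0 := by
        apply ih (p • f)
        · rw [← mul_smul, ← pow_succ]
          exact hf
        · rw [map_nsmul, hf0, smul_zero]
      apply socle f ?_ hf0
      intro j b
      show ((p • f) j) b = 0
      rw [hpf]
      rfl
  have hinj : Function.Injective Φ := by
    rw [injective_iff_map_eq_zero]
    intro f hf0
    apply hexp N f ?_ hf0
    funext j
    ext b
    show ((p ^ N) • f) j b = (0 : B j →₀ ZMod (p ^ ((j : ℕ) + 1))) b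
    rw [Finsupp.coe_zero, Pi.zero_apply]
    show (p ^ N) • (f j b) = 0
    rw [nsmul_eq_mul]
    have hz : ((p ^ N : ℕ) : ZMod (p ^ ((j : ℕ) + 1))) = 0 := by
      rw [ZMod.natCast_eq_zero_iff]
      exact pow_dvd_pow p j.2
    push_cast at hz ⊢
    rw [hz, zero_mul]
  -- the equivalences for the Ulm quotients
  have hbridge : ∀ j : Fin N, Nonempty (UlmQuot G p (j : ℕ) ≃+ (B j →₀ ZMod p)) := by
    intro j
    have hjN : (j : ℕ) < N := j.2
    have hsfj : ∀ b : B j, b.1.1 ∈ sfun (j : ℕ) := by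
      intro b
      have h1 := ht_mem b.1.1 b.1.2
      rw [b.2] at h1
      exact h1
    have hvb : ∀ b : B j, ((b.1.1 : ↥S) : G) ∈ Psub G p (j : ℕ) := by
      intro b
      rw [mem_Psub]
      refine ⟨?_, b.1.1.2⟩
      exact mem_smulSub.1 ((hWmem _ _).1 (ssub (j : ℕ) hjN.le (hsfj b)))
    set vb : B j → ↥(Psub G p (j : ℕ)) := fun b => ⟨((b.1.1 : ↥S) : G), hvb b⟩ with hvbdef
    have hvord : ∀ b : B j, (zmultiplesHom _ (vb b)) ((p : ℕ) : ℤ) = 0 := by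
      intro b
      rw [zmultiplesHom_apply, natCast_zsmul]
      apply Subtype.ext
      rw [AddSubgroup.coe_nsmul]
      exact b.1.1.2
    have cycV_val : ∀ (b : B j) (r : ZMod p),
        (ZMod.lift p ⟨zmultiplesHom _ (vb b), hvord b⟩) r = r.val • vb b := by
      intro b r
      conv_lhs => rw [show r = ((r.val : ℕ) : ZMod p) by rw [ZMod.natCast_val, ZMod.cast_id]]
      rw [show (((r.val : ℕ) : ZMod p)) = (((r.val : ℤ) : ZMod p)) by push_cast; ring]
      rw [ZMod.lift_coe, zmultiplesHom_apply, natCast_zsmul]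
    set θ0 : (B j →₀ ZMod p) →+ ↥(Psub G p (j : ℕ)) :=
      Finsupp.liftAddHom (fun b => ZMod.lift p ⟨zmultiplesHom _ (vb b), hvord b⟩) with hθ0
    have θ0_coe : ∀ l : B j →₀ ZMod p,
        ((θ0 l : ↥(Psub G p (j : ℕ))) : G) = ∑ b ∈ l.support, (l b).val • ((b.1.1 : ↥S) : G) := by
      intro l
      rw [hθ0, Finsupp.liftAddHom_apply, Finsupp.sum, addsub_coe_sum]
      refine Finset.sum_congr rfl fun b _ => ?_
      rw [cycV_val, AddSubgroup.coe_nsmul]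
    set θ : (B j →₀ ZMod p) →+ UlmQuot G p (j : ℕ) :=
      (QuotientAddGroup.mk' _).comp θ0 with hθ
    have hθinj : Function.Injective θ := by
      rw [injective_iff_map_eq_zero]
      intro l hl0
      have h1 : ((θ0 l : ↥(Psub G p (j : ℕ))) : G) ∈ Psub G p ((j : ℕ) + 1) := by
        have h2 : θ0 l ∈ (Psub G p ((j : ℕ) + 1)).addSubgroupOf (Psub G p (j : ℕ)) :=
          (QuotientAddGroup.eq_zero_iff (θ0 l)).1 hl0
        exact h2
      have hS1 : ((θ0 l : ↥(Psub G p (j : ℕ))) : G) ∈ S := (AddSubgroup.mem_inf.1 (θ0 l).2).2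
      have huW : (⟨((θ0 l : ↥(Psub G p (j : ℕ))) : G), hS1⟩ : ↥S) ∈ W ((j : ℕ) + 1) :=
        (hWmem _ _).2 ((AddSubgroup.mem_inf.1 h1).1)
      rw [← sspan _ hjN] at huW
      obtain ⟨c, hcsupp, hcsum⟩ := Submodule.mem_span_set.1 huW
      set ι : B j ↪ ↥S := ⟨fun b => b.1.1, fun a b hab => Subtype.ext (Subtype.ext hab)⟩ with hι
      have htot : Finsupp.linearCombination (ZMod p) id (l.embDomain ι - c) = 0 := by
        rw [map_sub]
        have h2 : Finsupp.linearCombination (ZMod p) id (l.embDomain ι)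
            = (⟨((θ0 l : ↥(Psub G p (j : ℕ))) : G), hS1⟩ : ↥S) := by
          apply Subtype.ext
          show ((Finsupp.linearCombination (ZMod p) id (l.embDomain ι) : ↥S) : G)
            = ((θ0 l : ↥(Psub G p (j : ℕ))) : G)
          rw [θ0_coe, Finsupp.linearCombination_embDomain, Finsupp.linearCombination_apply,
            Finsupp.sum, addsub_coe_sum]
          refine Finset.sum_congr rfl fun b _ => ?_
          rw [zmod_smul_eq_val_nsmul, AddSubgroup.coe_nsmul]
          rfl
        have h3 : Finsupp.linearCombination (ZMod p) id c
            = (⟨((θ0 l : ↥(Psub G p (j : ℕ))) : G), hS1⟩ : ↥S) := by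
          rw [Finsupp.linearCombination_apply]
          exact hcsum
        rw [h2, h3, sub_self]
      have hsupported : l.embDomain ι - c ∈ Finsupp.supported (ZMod p) (ZMod p) s0 := by
        rw [Finsupp.mem_supported]
        intro x hx
        have hx2 := Finsupp.support_sub (Finset.mem_coe.1 hx)
        rw [Finset.mem_union] at hx2
        rcases hx2 with hx3 | hx3
        · rw [Finsupp.support_embDomain, Finset.mem_map] at hx3
          obtain ⟨b, -, rfl⟩ := hx3
          exact b.1.2
        · exact sfun_anti (Nat.zero_le _) (hcsupp hx3)
      have hzero : l.embDomain ι - c = 0 :=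
        (linearIndepOn_iff (v := id)).1 (sli 0) _ hsupported htot
      have hlc : l.embDomain ι = c := by
        have := sub_eq_zero.1 hzero
        exact this
      ext b
      have hnot : ι b ∉ c.support := by
        intro hmem
        have h5 := hcsupp hmem
        have h6 := ht_notmem b.1.1 b.1.2
        rw [b.2] at h6
        exact h6 h5
      rw [Finsupp.coe_zero, Pi.zero_apply, ← Finsupp.embDomain_apply_self ι l b, hlc]
      exact Finsupp.notMem_support_iff.1 hnot
    have hθsurj : Function.Surjective θ := by
      intro q
      obtain ⟨x, rfl⟩ := QuotientAddGroup.mk'_surjective _ q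
      have hxS : (x : G) ∈ S := (AddSubgroup.mem_inf.1 x.2).2
      have hxW : (⟨(x : G), hxS⟩ : ↥S) ∈ W (j : ℕ) :=
        (hWmem _ _).2 ((AddSubgroup.mem_inf.1 x.2).1)
      rw [← sspan _ hjN.le] at hxW
      obtain ⟨c, hcsupp, hcsum⟩ := Submodule.mem_span_set.1 hxW
      set cT := c.filter (fun m => m ∉ sfun ((j : ℕ) + 1)) with hcT
      set cR := c.filter (fun m => ¬ m ∉ sfun ((j : ℕ) + 1)) with hcR
      have hcsplit : cT + cR = c := Finsupp.filter_pos_add_filter_neg c _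
      have hTmem : ∀ m ∈ cT.support, m ∈ s0 ∧ ht m = (j : ℕ) := by
        intro m hm
        rw [hcT, Finsupp.support_filter, Finset.mem_filter] at hm
        exact ht_eq m (j : ℕ) hjN (hcsupp hm.1) hm.2
      have hinjOn : Set.InjOn (fun b : B j => b.1.1)
          ((fun b : B j => b.1.1) ⁻¹' ↑cT.support) :=
        fun a _ b _ hab => Subtype.ext (Subtype.ext hab)
      set lB : B j →₀ ZMod p := cT.comapDomain _ hinjOn with hlB
      have hbij : Set.BijOn (fun b : B j => b.1.1)
          ((fun b : B j => b.1.1) ⁻¹' ↑cT.support) ↑cT.support := by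
        refine ⟨fun b hb => hb, hinjOn, ?_⟩
        intro m hm
        obtain ⟨hm0, hmj⟩ := hTmem m (Finset.mem_coe.1 hm)
        exact ⟨⟨⟨m, hm0⟩, hmj⟩, by exact hm, rfl⟩
      have hθ0lB : ((θ0 lB : ↥(Psub G p (j : ℕ))) : G)
          = ((cT.sum fun mi r => r • mi : ↥S) : G) := by
        rw [θ0_coe]
        have h7 := Finsupp.sum_comapDomain (fun b : B j => b.1.1) cT
          (fun m r => r.val • ((m : ↥S) : G)) hbij
        calc ∑ b ∈ lB.support, (lB b).val • ((b.1.1 : ↥S) : G)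
            = lB.sum (fun b r => r.val • ((b.1.1 : ↥S) : G)) := rfl
          _ = cT.sum (fun m r => r.val • ((m : ↥S) : G)) := h7
          _ = ((cT.sum fun mi r => r • mi : ↥S) : G) := by
              rw [Finsupp.sum, Finsupp.sum, addsub_coe_sum]
              refine Finset.sum_congr rfl fun m _ => ?_
              rw [zmod_smul_eq_val_nsmul, AddSubgroup.coe_nsmul]
      have hcRmem : (cR.sum fun mi r => r • mi : ↥S) ∈ W ((j : ℕ) + 1) := by
        rw [← sspan _ hjN, Finsupp.sum]
        apply Submodule.sum_smul_mem
        intro m hm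
        apply Submodule.subset_span
        rw [hcR, Finsupp.support_filter, Finset.mem_filter] at hm
        exact not_not.1 hm.2
      have hxsplit : (x : G) = ((θ0 lB : ↥(Psub G p (j : ℕ))) : G)
          + ((cR.sum fun mi r => r • mi : ↥S) : G) := by
        have h8 : ((⟨(x : G), hxS⟩ : ↥S) : G)
            = (((cT + cR).sum fun mi r => r • mi : ↥S) : G) := by
          rw [hcsplit, hcsum]
        rw [Finsupp.sum_add_index' (fun a => zero_smul _ a) (fun a b₁ b₂ => add_smul b₁ b₂ a)] at h8
        rw [show (x : G) = ((⟨(x : G), hxS⟩ : ↥S) : G) from rfl, h8, AddSubgroup.coe_add, hθ0lB]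
      refine ⟨lB, ?_⟩
      show QuotientAddGroup.mk' _ (θ0 lB) = QuotientAddGroup.mk' _ x
      rw [QuotientAddGroup.mk'_apply, QuotientAddGroup.mk'_apply, QuotientAddGroup.eq]
      rw [AddSubgroup.mem_addSubgroupOf]
      have h9 : ((-(θ0 lB) + x : ↥(Psub G p (j : ℕ))) : G)
          = ((cR.sum fun mi r => r • mi : ↥S) : G) := by
        rw [AddSubgroup.coe_add, AddSubgroup.coe_neg, hxsplit]
        abel
      rw [h9, mem_Psub]
      refine ⟨?_, (cR.sum fun mi r => r • mi : ↥S).2⟩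
      exact mem_smulSub.1 ((hWmem _ _).1 hcRmem)
    exact ⟨(AddEquiv.ofBijective θ ⟨hθinj, hθsurj⟩).symm⟩
  exact ⟨B, hcount, hbridge, ⟨(AddEquiv.ofBijective Φ ⟨hinj, hsurj⟩).symm⟩⟩
end main

section outer

lemma ulmZero_subsingleton {G : Type*} [AddCommGroup G] {p j : ℕ} (h : UlmZero G p j) :
    Subsingleton (UlmQuot G p j) := by
  constructor
  intro a b
  obtain ⟨x, rfl⟩ := QuotientAddGroup.mk'_surjective _ a
  obtain ⟨y, rfl⟩ := QuotientAddGroup.mk'_surjective _ b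
  rw [QuotientAddGroup.mk'_apply, QuotientAddGroup.mk'_apply, QuotientAddGroup.eq,
    AddSubgroup.mem_addSubgroupOf]
  exact AddSubgroup.add_mem _ (AddSubgroup.neg_mem _ (h x.2)) (h y.2)

/-- Transport of `Psub` along an `AddEquiv`. -/
noncomputable def psubCongr {G H : Type*} [AddCommGroup G] [AddCommGroup H] (e : G ≃+ H)
    (p j : ℕ) : ↥(Psub G p j) ≃+ ↥(Psub H p j) :=
  (e.addSubgroupMap _).trans (AddEquiv.addSubgroupCongr (Psub_map e p j))

end outer


/-- Let `C` be a reduced Abelian `p`-group of length `N` with a unique `k < N`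
such that `u_k(C) = ∞`, and with `u_m(C) = 0` for all `m < k`.  Then
`C ≅ H ⊕ (ℤ/p^(k+1))^(ω)` where `H` is a finite direct sum of cyclic groups
`ℤ/p^(i+1)` with `k < i < N`; and any countable Abelian `p`-group `G` of length
at most `N` with `u_m(G) = 0` for `m < k`, with `p^(k+1)G ≅ p^(k+1)C`, and
containing subgroups isomorphic to `(ℤ/p^(k+1))^r` for every `r`, is
isomorphic to `C`. -/
theorem stmt12 (p : ℕ) (hp : p.Prime) (N k : ℕ) (hk : k < N)
    (C : Type) [AddCommGroup C] [Countable C]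
    (hlen : ∀ x : C, (p ^ N) • x = 0)
    (hlen' : ∃ x : C, (p ^ (N - 1)) • x ≠ 0)
    (hinf : UlmInf C p k)
    (huniq : ∀ j, j < N → j ≠ k → ¬ UlmInf C p j)
    (hzero : ∀ m, m < k → UlmZero C p m) :
    (∃ (s : ℕ) (d : Fin s → ℕ), (∀ i, k < d i ∧ d i < N) ∧
      Nonempty (C ≃+
        ((∀ i : Fin s, ZMod (p ^ (d i + 1))) × (ℕ →₀ ZMod (p ^ (k + 1)))))) ∧
    (∀ (G : Type) [AddCommGroup G] [Countable G],
      (∀ x : G, (p ^ N) • x = 0) →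
      (∀ m, m < k → UlmZero G p m) →
      Nonempty ((smulSub G (p ^ (k + 1))) ≃+ (smulSub C (p ^ (k + 1)))) →
      (∀ r : ℕ, ∃ H : AddSubgroup G,
        Nonempty (H ≃+ (Fin r → ZMod (p ^ (k + 1))))) →
      Nonempty (G ≃+ C)) := by
  classical
  haveI hpf : Fact p.Prime := ⟨hp⟩
  obtain ⟨BC, hcountC, hbridgeC, ⟨EC⟩⟩ := main_decomp hp N C hlen
  set k' : Fin N := ⟨k, hk⟩ with hk'
  have hCempty : ∀ j : Fin N, (j : ℕ) < k → IsEmpty (BC j) := by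
    intro j hj
    obtain ⟨e⟩ := hbridgeC j
    haveI := ulmZero_subsingleton (hzero j hj)
    haveI : Subsingleton (BC j →₀ ZMod p) := e.toEquiv.symm.subsingleton
    exact finsupp_subsingleton_isEmpty this
  have hCfin : ∀ j : Fin N, k < (j : ℕ) → Finite (BC j) := by
    intro j hj
    obtain ⟨e⟩ := hbridgeC j
    haveI : Finite (UlmQuot C p (j : ℕ)) := not_infinite_iff_finite.1 (huniq j j.2 (by omega))
    haveI hfin : Finite (BC j →₀ ZMod p) := Finite.of_equiv _ e.toEquiv
    by_contra hinf2
    rw [not_finite_iff_infinite] at hinf2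
    exact (finsupp_infinite_iff.2 hinf2).not_finite hfin
  have hCkinf : Infinite (BC k') := by
    obtain ⟨e⟩ := hbridgeC k'
    haveI : Infinite (UlmQuot C p ((k' : Fin N) : ℕ)) := hinf
    haveI : Infinite (BC k' →₀ ZMod p) := Infinite.of_injective e e.injective
    exact finsupp_infinite_iff.1 this
  constructor
  · -- part 1
    set J := {j : Fin N // k < (j : ℕ)} with hJ
    haveI : ∀ j : J, Finite (BC j.1) := fun j => hCfin j.1 j.2
    letI instF : ∀ j : J, Fintype (BC j.1) := fun j => Fintype.ofFinite _
    set s := Fintype.card (Σ j : J, BC j.1) with hs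
    set eqv : (Σ j : J, BC j.1) ≃ Fin s := Fintype.equivFin _ with heqv
    refine ⟨s, fun i => (((eqv.symm i).1 : Fin N) : ℕ),
      fun i => ⟨(eqv.symm i).1.2, Fin.is_lt _⟩, ?_⟩
    set i0 : {j : Fin N // ¬ k < (j : ℕ)} := ⟨k', not_lt.2 le_rfl⟩ with hi0
    haveI hsub1 : ∀ a : {a : {j : Fin N // ¬ k < (j : ℕ)} // a ≠ i0},
        Subsingleton (BC a.1.1 →₀ ZMod (p ^ ((a.1.1 : ℕ) + 1))) := by
      intro a
      have hlt : (a.1.1 : ℕ) < k := by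
        have h1 : ¬ k < (a.1.1 : ℕ) := a.1.2
        have h2 : (a.1.1 : ℕ) ≠ k := by
          intro hcontra
          exact a.2 (Subtype.ext (Fin.ext hcontra))
        omega
      haveI := hCempty a.1.1 hlt
      exact ⟨fun f g => Finsupp.ext fun x => isEmptyElim x⟩
    letI : ∀ a : {a : {j : Fin N // ¬ k < (j : ℕ)} // a ≠ i0},
        Unique (BC a.1.1 →₀ ZMod (p ^ ((a.1.1 : ℕ) + 1))) :=
      fun a => Unique.mk' _
    letI : Encodable (BC k') := Encodable.ofCountable _
    letI : Denumerable (BC k') := Denumerable.ofEncodableOfInfinite _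
    have E1 := AddEquiv.mk' (Equiv.piEquivPiSubtypeProd (fun j : Fin N => k < (j : ℕ))
      (fun j => BC j →₀ ZMod (p ^ ((j : ℕ) + 1)))) (fun x y => rfl)
    have E2 := AddEquiv.mk' (Equiv.piSplitAt i0
      (fun a : {j : Fin N // ¬ k < (j : ℕ)} => BC a.1 →₀ ZMod (p ^ ((a.1 : ℕ) + 1))))
      (fun x y => rfl)
    have E3 := AddEquiv.mk' (Equiv.prodUnique (BC i0.1 →₀ ZMod (p ^ ((i0.1 : ℕ) + 1)))
      (∀ a : {a : {j : Fin N // ¬ k < (j : ℕ)} // a ≠ i0},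
        BC a.1.1 →₀ ZMod (p ^ ((a.1.1 : ℕ) + 1)))) (fun x y => rfl)
    have E4 : (BC k' →₀ ZMod (p ^ (k + 1))) ≃+ (ℕ →₀ ZMod (p ^ (k + 1))) :=
      Finsupp.domCongr (Denumerable.eqv _)
    have E5 := AddEquiv.piCongrRight (fun j : J =>
      (Finsupp.addEquivFunOnFinite :
        (BC j.1 →₀ ZMod (p ^ ((j.1 : ℕ) + 1))) ≃+ (BC j.1 → ZMod (p ^ ((j.1 : ℕ) + 1)))))
    have E6 := AddEquiv.mk'
      (Equiv.piCurry (fun (j : J) (_ : BC j.1) => ZMod (p ^ ((j.1 : ℕ) + 1)))).symm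
      (fun x y => rfl)
    have E7 := AddEquiv.mk' (Equiv.piCongrLeft'
      (fun x : Σ j : J, BC j.1 => ZMod (p ^ ((x.1.1 : ℕ) + 1))) eqv) (fun x y => rfl)
    exact ⟨EC.trans (E1.trans (AddEquiv.prodCongr (E5.trans (E6.trans E7))
      ((E2.trans E3).trans E4)))⟩
  · -- part 2
    intro G _ _ hlenG hzeroG hsmulEq hsubs
    obtain ⟨e⟩ := hsmulEq
    obtain ⟨BG, hcountG, hbridgeG, ⟨EG⟩⟩ := main_decomp hp N G hlenG
    have hfinC : ∀ (d jj : ℕ), k < jj → N ≤ jj + d → Finite ↥(Psub C p jj) := by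
      intro d
      induction d with
      | zero =>
        intro jj _ hNj
        have hsub : ∀ x : ↥(Psub C p jj), x = 0 := by
          intro x
          obtain ⟨⟨y, hy⟩, -⟩ := mem_Psub.1 x.2
          apply Subtype.ext
          rw [← hy, ← Nat.sub_add_cancel (by omega : N ≤ jj), pow_add, mul_smul, hlen y,
            smul_zero]
          rfl
        haveI : Subsingleton ↥(Psub C p jj) := ⟨fun a b => by rw [hsub a, hsub b]⟩
        exact Finite.of_subsingleton
      | succ d ih =>
        intro jj hkj hNj
        by_cases hc : N ≤ jj + d
        · exact ih jj hkj hc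
        · have hjN : jj < N := by omega
          haveI h1 : Finite ↥(Psub C p (jj + 1)) := ih (jj + 1) (by omega) (by omega)
          haveI h2 : Finite (UlmQuot C p jj) :=
            not_infinite_iff_finite.1 (huniq jj hjN (by omega))
          exact psub_finite_of_quot h1 h2
    haveI hfinCk1 : Finite ↥(Psub C p (k + 1)) := hfinC N (k + 1) (by omega) (by omega)
    have ePsub : ↥(Psub G p (k + 1)) ≃+ ↥(Psub C p (k + 1)) :=
      (psubShift G p (k + 1) 0).symm.trans ((psubCongr e p 0).trans (psubShift C p (k + 1) 0))
    haveI hfinGk1 : Finite ↥(Psub G p (k + 1)) := Finite.of_equiv _ ePsub.symm.toEquiv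
    haveI hinfGk : Infinite ↥(Psub G p k) := by
      apply infinite_of_injections
      intro r
      obtain ⟨H, ⟨φ⟩⟩ := hsubs r
      have hkill : ∀ v : Fin r → ZMod (p ^ (k + 1)), (p ^ (k + 1)) • v = 0 := by
        intro v
        funext a
        show (p ^ (k + 1)) • v a = 0
        rw [nsmul_eq_mul, ZMod.natCast_self, zero_mul]
      set w : Fin r → ↥H := fun i => φ.symm ((p ^ k) • Pi.single i (1 : ZMod (p ^ (k + 1))))
        with hw
      have hwsm : ∀ i, (p ^ k) • φ.symm (Pi.single i (1 : ZMod (p ^ (k + 1)))) = w i := by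
        intro i
        rw [hw, ← map_nsmul]
      have hwmem : ∀ i, ((w i : ↥H) : G) ∈ Psub G p k := by
        intro i
        rw [mem_Psub]
        constructor
        · refine ⟨(φ.symm (Pi.single i 1) : G), ?_⟩
          rw [← AddSubgroup.coe_nsmul, hwsm i]
        · have h1 : p • ((p ^ k) • (Pi.single i (1 : ZMod (p ^ (k + 1))) : Fin r → ZMod (p ^ (k + 1)))) = 0 := by
            rw [← mul_smul, ← pow_succ']
            exact hkill _
          have h2 : p • w i = 0 := by
            rw [hw]
            show p • φ.symm _ = 0
            rw [← map_nsmul, h1, map_zero]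
          rw [← AddSubgroup.coe_nsmul, h2]
          rfl
      refine ⟨fun i => ⟨((w i : ↥H) : G), hwmem i⟩, ?_⟩
      intro a b hab
      rw [Subtype.mk.injEq] at hab
      have h3 : w a = w b := Subtype.ext hab
      have h4 : (p ^ k) • Pi.single a (1 : ZMod (p ^ (k + 1)))
          = (p ^ k) • Pi.single b 1 := φ.symm.injective h3
      by_contra hne
      have h5 := congrFun h4 a
      rw [Pi.smul_apply, Pi.smul_apply, Pi.single_eq_same, Pi.single_eq_of_ne hne,
        smul_zero] at h5
      have h6 : ((p ^ k : ℕ) : ZMod (p ^ (k + 1))) = 0 := by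
        rw [nsmul_eq_mul, mul_one] at h5
        exact h5
      rw [ZMod.natCast_eq_zero_iff] at h6
      have h7 : ¬ (p ^ (k + 1) ∣ p ^ k) := by
        rw [Nat.pow_dvd_pow_iff_le_right hp.one_lt]
        omega
      exact h7 h6
    haveI hinfQGk : Infinite (UlmQuot G p k) := psub_infinite_quot hinfGk hfinGk1
    have hBeq : ∀ j : Fin N, Nonempty (BG j ≃ BC j) := by
      intro j
      rcases lt_trichotomy ((j : ℕ)) k with hlt | heq | hgt
      · haveI h1 : IsEmpty (BG j) := by
          obtain ⟨e1⟩ := hbridgeG j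
          haveI := ulmZero_subsingleton (hzeroG j hlt)
          haveI : Subsingleton (BG j →₀ ZMod p) := e1.toEquiv.symm.subsingleton
          exact finsupp_subsingleton_isEmpty this
        haveI h2 : IsEmpty (BC j) := hCempty j hlt
        exact ⟨Equiv.equivOfIsEmpty _ _⟩
      · obtain ⟨e1⟩ := hbridgeG j
        obtain ⟨e2⟩ := hbridgeC j
        haveI : Infinite (UlmQuot G p (j : ℕ)) := by rw [heq]; exact hinfQGk
        haveI : Infinite (BG j →₀ ZMod p) := Infinite.of_injective e1 e1.injective
        haveI hIG : Infinite (BG j) := finsupp_infinite_iff.1 this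
        haveI : Infinite (UlmQuot C p (j : ℕ)) := by rw [heq]; exact hinf
        haveI : Infinite (BC j →₀ ZMod p) := Infinite.of_injective e2 e2.injective
        haveI hIC : Infinite (BC j) := finsupp_infinite_iff.1 this
        letI := Encodable.ofCountable (BG j)
        letI := Encodable.ofCountable (BC j)
        letI := Denumerable.ofEncodableOfInfinite (BG j)
        letI := Denumerable.ofEncodableOfInfinite (BC j)
        exact ⟨(Denumerable.eqv (BG j)).trans (Denumerable.eqv (BC j)).symm⟩
      · obtain ⟨e1⟩ := hbridgeG j
        obtain ⟨e2⟩ := hbridgeC j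
        have hQ : Nonempty (UlmQuot G p (j : ℕ) ≃+ UlmQuot C p (j : ℕ)) := by
          have hidx : k + 1 + ((j : ℕ) - (k + 1)) = (j : ℕ) := by omega
          have E := ((ulmQuotShift G p (k + 1) ((j : ℕ) - (k + 1))).symm.trans
            ((ulmQuotCongr e p ((j : ℕ) - (k + 1))).trans
              (ulmQuotShift C p (k + 1) ((j : ℕ) - (k + 1)))))
          rw [hidx] at E
          exact ⟨E⟩
        obtain ⟨E⟩ := hQ
        exact finsupp_equiv_index (e1.symm.trans (E.trans e2))
    have ε : ∀ j : Fin N, BG j ≃ BC j := fun j => (hBeq j).some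
    exact ⟨EG.trans ((AddEquiv.piCongrRight (fun j => Finsupp.domCongr (ε j))).trans EC.symm)⟩
end

section
/- Let T be Ehrenfeucht's theory of dense linear orders without endpoints with constants c_0 < c_1 < c_2 < ⋯. Then T has exactly three countable models up to isomorphism: the prime model in which the constants are cofinal, the middle model in which the constants have a least upper bound, and the saturated model in which the constants are bounded above but have no least upper bound. -/
/-- A countable model of Ehrenfeucht's theory: a countable dense linear order
without endpoints together with a strictly increasing sequence of constants. -/
structure EModel : Type 1 where
  carrier : Type
  [linOrd : LinearOrder carrier]
  [dense : DenselyOrdered carrier]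
  [noMax : NoMaxOrder carrier]
  [noMin : NoMinOrder carrier]
  [countable : Countable carrier]
  c : ℕ → carrier
  mono : StrictMono c

attribute [instance] EModel.linOrd EModel.dense EModel.noMax EModel.noMin EModel.countable

/-- Isomorphism of models of the Ehrenfeucht theory: an order isomorphism
preserving the constants. -/
def EIso (A B : EModel) : Prop :=
  ∃ e : A.carrier ≃o B.carrier, ∀ n, e (A.c n) = B.c n

/-- The prime model: the constants are cofinal. -/
def EPrime (A : EModel) : Prop := ∀ x : A.carrier, ∃ n, x < A.c n

/-- The middle model: the constants have a least upper bound. -/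
def EMiddle (A : EModel) : Prop := ∃ x : A.carrier, IsLUB (Set.range A.c) x

/-- The saturated model: the constants are bounded above but have no least
upper bound. -/
def ESat (A : EModel) : Prop :=
  (∃ x : A.carrier, ∀ n, A.c n ≤ x) ∧ ¬ ∃ x : A.carrier, IsLUB (Set.range A.c) x

namespace EhrAux

variable {A B : EModel}

lemma not_isLUB_c (A : EModel) (n : ℕ) : ¬ IsLUB (Set.range A.c) (A.c n) := fun h =>
  absurd (h.1 ⟨n + 1, rfl⟩) (not_le.2 (A.mono (Nat.lt_succ_self n)))

def Compat (A B : EModel) (a : A.carrier) (b : B.carrier) : Prop :=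
  (∀ n, a < A.c n ↔ b < B.c n) ∧ (∀ n, a = A.c n ↔ b = B.c n) ∧
    (IsLUB (Set.range A.c) a ↔ IsLUB (Set.range B.c) b)

lemma Compat.symm {a b} (h : Compat A B a b) : Compat B A b a :=
  ⟨fun n => (h.1 n).symm, fun n => (h.2.1 n).symm, h.2.2.symm⟩

lemma Compat.const_lt {a b} (h : Compat A B a b) (n : ℕ) : A.c n < a ↔ B.c n < b := by
  obtain ⟨h1, h2, -⟩ := h
  constructor
  · intro hlt
    rcases lt_trichotomy b (B.c n) with hb | hb | hb
    · exact absurd ((h1 n).2 hb) (asymm hlt)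
    · exact absurd ((h2 n).2 hb) hlt.ne'
    · exact hb
  · intro hlt
    rcases lt_trichotomy a (A.c n) with ha | ha | ha
    · exact absurd ((h1 n).1 ha) (asymm hlt)
    · exact absurd ((h2 n).1 ha) hlt.ne'
    · exact ha

lemma compat_const (n : ℕ) : Compat A B (A.c n) (B.c n) := by
  refine ⟨fun m => ?_, fun m => ?_, ?_⟩
  · rw [A.mono.lt_iff_lt, B.mono.lt_iff_lt]
  · rw [A.mono.injective.eq_iff, B.mono.injective.eq_iff]
  · exact iff_of_false (not_isLUB_c A n) (not_isLUB_c B n)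

def Good (A B : EModel) (f : Finset (A.carrier × B.carrier)) : Prop :=
  (∀ p ∈ f, Compat A B p.1 p.2) ∧ ∀ p ∈ f, ∀ q ∈ f, (p.1 < q.1 ↔ p.2 < q.2)

lemma good_empty : Good A B ∅ :=
  ⟨fun p hp => absurd hp (Finset.notMem_empty p),
   fun p hp => absurd hp (Finset.notMem_empty p)⟩

lemma Good.swap {f} (hf : Good A B f) : Good B A (f.image Prod.swap) := by
  constructor
  · intro p hp
    obtain ⟨q, hq, rfl⟩ := Finset.mem_image.1 hp
    exact (hf.1 q hq).symm
  · intro p hp q hq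
    obtain ⟨p', hp', rfl⟩ := Finset.mem_image.1 hp
    obtain ⟨q', hq', rfl⟩ := Finset.mem_image.1 hq
    exact (hf.2 p' hp' q' hq').symm

lemma good_insert {f} (hf : Good A B f) {a b} (hab : Compat A B a b)
    (h : ∀ p ∈ f, (p.1 < a ↔ p.2 < b) ∧ (a < p.1 ↔ b < p.2)) :
    Good A B (insert (a, b) f) := by
  constructor
  · intro p hp
    rcases Finset.mem_insert.1 hp with rfl | hp
    · exact hab
    · exact hf.1 p hp
  · intro p hp q hq
    rcases Finset.mem_insert.1 hp with rfl | hp <;> rcases Finset.mem_insert.1 hq with rfl | hq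
    · simp
    · exact (h q hq).2
    · exact (h p hp).1
    · exact hf.2 p hp q hq

lemma good_insert_const {f} (hf : Good A B f) (n : ℕ) :
    Good A B (insert (A.c n, B.c n) f) :=
  good_insert hf (compat_const n)
    (fun p hp => ⟨(hf.1 p hp).1 n, (hf.1 p hp).const_lt n⟩)

end EhrAux
namespace EhrAux

variable {A B : EModel}

def SameClass (A B : EModel) : Prop :=
  (EPrime A ∧ EPrime B) ∨ (EMiddle A ∧ EMiddle B) ∨ (ESat A ∧ ESat B)

lemma SameClass.symm (h : SameClass A B) : SameClass B A := by
  rcases h with ⟨h1, h2⟩ | ⟨h1, h2⟩ | ⟨h1, h2⟩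
  · exact Or.inl ⟨h2, h1⟩
  · exact Or.inr (Or.inl ⟨h2, h1⟩)
  · exact Or.inr (Or.inr ⟨h2, h1⟩)

/-- In a saturated model, the set of upper bounds of the constants has no
least element. -/
lemma sat_no_min (hB : ESat B) {u : B.carrier} (hu : ∀ n, B.c n ≤ u) :
    ∃ v, (∀ n, B.c n ≤ v) ∧ v < u := by
  have hub : u ∈ upperBounds (Set.range B.c) := by rintro _ ⟨n, rfl⟩; exact hu n
  have hnl : ¬ u ∈ lowerBounds (upperBounds (Set.range B.c)) := fun h => hB.2 ⟨u, hub, h⟩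
  simp only [lowerBounds, Set.mem_setOf_eq] at hnl
  push_neg at hnl
  obtain ⟨v, hv, hvu⟩ := hnl
  exact ⟨v, fun n => hv ⟨n, rfl⟩, hvu⟩

lemma ext_dom (hcl : SameClass A B) {f : Finset (A.carrier × B.carrier)}
    (hf : Good A B f) (a : A.carrier) :
    ∃ b, Good A B (insert (a, b) f) := by
  classical
  haveI : Nonempty A.carrier := ⟨A.c 0⟩
  haveI : Nonempty B.carrier := ⟨B.c 0⟩
  -- if `a` is already in the domain, reuse its image
  by_cases hdom : ∃ p ∈ f, p.1 = a
  · obtain ⟨p, hp, rfl⟩ := hdom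
    exact ⟨p.2, good_insert hf (hf.1 p hp)
      (fun q hq => ⟨hf.2 q hq p hp, hf.2 p hp q hq⟩)⟩
  push_neg at hdom
  set Lo : Finset B.carrier := (f.filter (fun p => p.1 < a)).image Prod.snd with hLodef
  set Up : Finset B.carrier := (f.filter (fun p => a < p.1)).image Prod.snd with hUpdef
  have memLo : ∀ p ∈ f, p.1 < a → p.2 ∈ Lo := fun p hp h =>
    Finset.mem_image.2 ⟨p, Finset.mem_filter.2 ⟨hp, h⟩, rfl⟩
  have memUp : ∀ p ∈ f, a < p.1 → p.2 ∈ Up := fun p hp h =>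
    Finset.mem_image.2 ⟨p, Finset.mem_filter.2 ⟨hp, h⟩, rfl⟩
  have exLo : ∀ y ∈ Lo, ∃ p ∈ f, p.1 < a ∧ p.2 = y := by
    intro y hy
    obtain ⟨p, hp, rfl⟩ := Finset.mem_image.1 hy
    have hp' := Finset.mem_filter.1 hp
    exact ⟨p, hp'.1, hp'.2, rfl⟩
  have exUp : ∀ z ∈ Up, ∃ q ∈ f, a < q.1 ∧ q.2 = z := by
    intro z hz
    obtain ⟨q, hq, rfl⟩ := Finset.mem_image.1 hz
    have hq' := Finset.mem_filter.1 hq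
    exact ⟨q, hq'.1, hq'.2, rfl⟩
  have main : ∀ b, Compat A B a b → (∀ y ∈ Lo, y < b) → (∀ z ∈ Up, b < z) →
      Good A B (insert (a, b) f) := by
    intro b hab hlo hup
    apply good_insert hf hab
    intro p hp
    have hne := hdom p hp
    have h1 : p.1 < a → p.2 < b := fun h => hlo _ (memLo p hp h)
    have h2 : a < p.1 → b < p.2 := fun h => hup _ (memUp p hp h)
    refine ⟨⟨h1, fun hb => ?_⟩, ⟨h2, fun hb => ?_⟩⟩
    · rcases hne.lt_or_gt with h | h
      · exact h
      · exact absurd (h2 h) (asymm hb)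
    · rcases hne.lt_or_gt with h | h
      · exact absurd (h1 h) (asymm hb)
      · exact h
  have cross : ∀ y ∈ Lo, ∀ z ∈ Up, y < z := by
    intro y hy z hz
    obtain ⟨p, hp, hpa, rfl⟩ := exLo y hy
    obtain ⟨q, hq, hqa, rfl⟩ := exUp z hz
    exact (hf.2 p hp q hq).1 (hpa.trans hqa)
  by_cases hC : ∃ n, a = A.c n
  · -- `a` is one of the constants
    obtain ⟨n, rfl⟩ := hC
    refine ⟨B.c n, main _ (compat_const n) ?_ ?_⟩
    · intro y hy
      obtain ⟨p, hp, hpa, rfl⟩ := exLo y hy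
      exact ((hf.1 p hp).1 n).1 hpa
    · intro z hz
      obtain ⟨q, hq, hqa, rfl⟩ := exUp z hz
      exact ((hf.1 q hq).const_lt n).1 hqa
  push_neg at hC
  by_cases hL : ∃ n, a < A.c n
  · -- `a` lies below some constant but is not a constant
    set n0 := Nat.find hL with hn0def
    have hn0 : a < A.c n0 := Nat.find_spec hL
    have hlt : ∀ m < n0, A.c m < a := by
      intro m hm
      exact lt_of_le_of_ne (not_lt.1 (Nat.find_min hL hm)) (fun h => hC m h.symm)
    set Lo' : Finset B.carrier := Lo ∪ (Finset.range n0).image B.c with hLo'def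
    set Up' : Finset B.carrier := insert (B.c n0) Up with hUp'def
    have cross' : ∀ y ∈ Lo', ∀ z ∈ Up', y < z := by
      intro y hy z hz
      rcases Finset.mem_union.1 hy with hy | hy <;>
        rcases Finset.mem_insert.1 hz with rfl | hz
      · obtain ⟨p, hp, hpa, rfl⟩ := exLo y hy
        exact ((hf.1 p hp).1 n0).1 (hpa.trans hn0)
      · exact cross y hy z hz
      · obtain ⟨m, hm, rfl⟩ := Finset.mem_image.1 hy
        exact B.mono (Finset.mem_range.1 hm)
      · obtain ⟨m, hm, rfl⟩ := Finset.mem_image.1 hy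
        obtain ⟨q, hq, hqa, rfl⟩ := exUp z hz
        exact ((hf.1 q hq).const_lt m).1 ((hlt m (Finset.mem_range.1 hm)).trans hqa)
    obtain ⟨b, hb1, hb2⟩ := Order.exists_between_finsets Lo' Up' cross'
    have hbn0 : b < B.c n0 := hb2 _ (Finset.mem_insert_self _ _)
    have hbm : ∀ m < n0, B.c m < b := fun m hm =>
      hb1 _ (Finset.mem_union_right _ (Finset.mem_image.2 ⟨m, Finset.mem_range.2 hm, rfl⟩))
    have hcomp : Compat A B a b := by
      refine ⟨fun m => ?_, fun m => ?_, ?_⟩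
      · rcases le_or_gt n0 m with h | h
        · exact iff_of_true (hn0.trans_le (A.mono.monotone h))
            (hbn0.trans_le (B.mono.monotone h))
        · exact iff_of_false (asymm (hlt m h)) (asymm (hbm m h))
      · refine iff_of_false (hC m) ?_
        rcases le_or_gt n0 m with h | h
        · exact (hbn0.trans_le (B.mono.monotone h)).ne
        · exact (hbm m h).ne'
      · refine iff_of_false (fun h => absurd (h.1 ⟨n0, rfl⟩) (not_le.2 hn0))
          (fun h => absurd (h.1 ⟨n0, rfl⟩) (not_le.2 hbn0))
    exact ⟨b, main b hcomp (fun y hy => hb1 y (Finset.mem_union_left _ hy))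
      (fun z hz => hb2 z (Finset.mem_insert_of_mem hz))⟩
  -- `a` is an upper bound of the constants
  push_neg at hL
  have hUs : ∀ n, A.c n < a := fun n =>
    lt_of_lt_of_le (A.mono (Nat.lt_succ_self n)) (hL (n + 1))
  have hnp : ¬ EPrime A := by
    intro h
    obtain ⟨n, hn⟩ := h a
    exact absurd hn (not_lt.2 (hL n))
  -- a pair `(x, y) ∈ f` with `a < x` has `y` an upper bound of the constants
  have upUB : ∀ q ∈ f, a < q.1 → ∀ m, B.c m < q.2 := by
    intro q hq hqa m
    exact ((hf.1 q hq).const_lt m).1 ((hUs m).trans hqa)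
  rcases hcl with ⟨hA, hB⟩ | ⟨hA, hB⟩ | ⟨hA, hB⟩
  · exact absurd hA hnp
  · -- middle case
    obtain ⟨sA, hsA⟩ := hA
    obtain ⟨sB, hsB⟩ := hB
    have hsBlt : ∀ m, B.c m < sB := fun m =>
      lt_of_lt_of_le (B.mono (Nat.lt_succ_self m)) (hsB.1 ⟨m + 1, rfl⟩)
    have hsAlt : ∀ m, A.c m < sA := fun m =>
      lt_of_lt_of_le (A.mono (Nat.lt_succ_self m)) (hsA.1 ⟨m + 1, rfl⟩)
    have hsAle : sA ≤ a := hsA.2 (by rintro _ ⟨n, rfl⟩; exact hL n)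
    -- pairs above `a` map above `sB`
    have upSB : ∀ q ∈ f, a < q.1 → sB < q.2 := by
      intro q hq hqa
      have hub : q.2 ∈ upperBounds (Set.range B.c) := by
        rintro _ ⟨m, rfl⟩; exact (upUB q hq hqa m).le
      have hne : ¬ IsLUB (Set.range B.c) q.2 := by
        rw [← ((hf.1 q hq).2.2)]
        intro h
        have := h.unique hsA
        exact absurd hqa (not_lt.2 (this ▸ hsAle))
      rcases lt_or_ge sB q.2 with h | h
      · exact h
      · exact absurd (le_antisymm (hsB.2 hub) h ▸ hsB) hne
    by_cases haS : a = sA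
    · -- `a` is the least upper bound
      refine ⟨sB, main sB ?_ ?_ ?_⟩
      · refine ⟨fun m => iff_of_false (not_lt.2 (hL m)) (not_lt.2 (hsBlt m).le),
          fun m => iff_of_false (hC m) (hsBlt m).ne', ?_⟩
        exact iff_of_true (haS ▸ hsA) hsB
      · intro y hy
        obtain ⟨p, hp, hpa, rfl⟩ := exLo y hy
        have : ¬ ∀ m, A.c m ≤ p.1 := by
          intro h
          have : sA ≤ p.1 := hsA.2 (by rintro _ ⟨m, rfl⟩; exact h m)
          exact absurd (hpa.trans_eq haS) (not_lt.2 this)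
        push_neg at this
        obtain ⟨m, hm⟩ := this
        exact (((hf.1 p hp).1 m).1 hm).trans (hsBlt m)
      · intro z hz
        obtain ⟨q, hq, hqa, rfl⟩ := exUp z hz
        exact upSB q hq hqa
    · have haS' : sA < a := lt_of_le_of_ne hsAle (Ne.symm haS)
      set Lo' : Finset B.carrier := insert sB Lo with hLo'def
      have cross' : ∀ y ∈ Lo', ∀ z ∈ Up, y < z := by
        intro y hy z hz
        obtain ⟨q, hq, hqa, rfl⟩ := exUp z hz
        rcases Finset.mem_insert.1 hy with rfl | hy
        · exact upSB q hq hqa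
        · exact cross y hy _ (memUp q hq hqa)
      obtain ⟨b, hb1, hb2⟩ := Order.exists_between_finsets Lo' Up cross'
      have hbsB : sB < b := hb1 _ (Finset.mem_insert_self _ _)
      have hbub : ∀ m, B.c m < b := fun m => (hsBlt m).trans hbsB
      refine ⟨b, main b ?_ (fun y hy => hb1 y (Finset.mem_insert_of_mem hy)) hb2⟩
      refine ⟨fun m => iff_of_false (not_lt.2 (hL m)) (not_lt.2 (hbub m).le),
        fun m => iff_of_false (hC m) (hbub m).ne', ?_⟩
      refine iff_of_false (fun h => haS (h.unique hsA)) (fun h => hbsB.ne' (h.unique hsB))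
  · -- saturated case
    obtain ⟨u0, hu0⟩ := hB.1
    have noLubA : ¬ IsLUB (Set.range A.c) a := fun h => hA.2 ⟨a, h⟩
    -- every member of Up is a strict upper bound of the constants of B
    have upStr : ∀ z ∈ Up, ∀ m, B.c m < z := by
      intro z hz m
      obtain ⟨q, hq, hqa, rfl⟩ := exUp z hz
      exact upUB q hq hqa m
    have build : ∃ b, (∀ m, B.c m < b) ∧ (∀ y ∈ Lo, y < b) ∧ ∀ z ∈ Up, b < z := by
      by_cases hyU : ∃ y ∈ Lo, ∀ m, B.c m ≤ y
      · obtain ⟨y0, hy0, hy0U⟩ := hyU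
        obtain ⟨b, hb1, hb2⟩ := Order.exists_between_finsets Lo Up cross
        exact ⟨b, fun m => lt_of_le_of_lt (hy0U m) (hb1 _ hy0), hb1, hb2⟩
      · push_neg at hyU
        have loSmall : ∀ y ∈ Lo, ∀ b : B.carrier, (∀ m, B.c m ≤ b) → y < b := by
          intro y hy b hb
          obtain ⟨m, hm⟩ := hyU y hy
          exact lt_of_lt_of_le hm (hb m)
        by_cases hUp : Up.Nonempty
        · have hz0 : Up.min' hUp ∈ Up := Finset.min'_mem _ _
          obtain ⟨b, hbU, hblt⟩ := sat_no_min hB (fun m => (upStr _ hz0 m).le)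
          refine ⟨b, fun m => lt_of_lt_of_le (B.mono (Nat.lt_succ_self m)) (hbU (m + 1)),
            fun y hy => loSmall y hy b hbU,
            fun z hz => lt_of_lt_of_le hblt (Finset.min'_le _ _ hz)⟩
        · refine ⟨u0, fun m => lt_of_lt_of_le (B.mono (Nat.lt_succ_self m)) (hu0 (m + 1)),
            fun y hy => loSmall y hy u0 hu0,
            fun z hz => absurd ⟨z, hz⟩ hUp⟩
    obtain ⟨b, hbU, hbLo, hbUp⟩ := build
    refine ⟨b, main b ?_ hbLo hbUp⟩
    refine ⟨fun m => iff_of_false (not_lt.2 (hL m)) (not_lt.2 (hbU m).le),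
      fun m => iff_of_false (hC m) (hbU m).ne', ?_⟩
    exact iff_of_false noLubA (fun h => hB.2 ⟨b, h⟩)

lemma ext_ran (hcl : SameClass A B) {f : Finset (A.carrier × B.carrier)}
    (hf : Good A B f) (b : B.carrier) :
    ∃ a, Good A B (insert (a, b) f) := by
  obtain ⟨a, ha⟩ := ext_dom hcl.symm hf.swap b
  refine ⟨a, ?_⟩
  have h2 := ha.swap
  rw [Finset.image_insert, Finset.image_image, Prod.swap_swap_eq, Finset.image_id] at h2
  simpa using h2

noncomputable def step (hcl : SameClass A B) (n : ℕ)
    (F : {f : Finset (A.carrier × B.carrier) // Good A B f})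
    (a : A.carrier) (b : B.carrier) :
    {f : Finset (A.carrier × B.carrier) // Good A B f} :=
  ⟨insert
      (Classical.choose
        (ext_ran hcl
          (Classical.choose_spec (ext_dom hcl (good_insert_const F.2 n) a)) b), b)
      (insert (a, Classical.choose (ext_dom hcl (good_insert_const F.2 n) a))
        (insert (A.c n, B.c n) F.1)),
   Classical.choose_spec
     (ext_ran hcl (Classical.choose_spec (ext_dom hcl (good_insert_const F.2 n) a)) b)⟩

lemma subset_step (hcl : SameClass A B) (n : ℕ) (F) (a : A.carrier) (b : B.carrier) :
    F.1 ⊆ (step hcl n F a b).1 := fun x hx =>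
  Finset.mem_insert_of_mem (Finset.mem_insert_of_mem (Finset.mem_insert_of_mem hx))

lemma mem_step_const (hcl : SameClass A B) (n : ℕ) (F) (a : A.carrier) (b : B.carrier) :
    (A.c n, B.c n) ∈ (step hcl n F a b).1 :=
  Finset.mem_insert_of_mem (Finset.mem_insert_of_mem (Finset.mem_insert_self _ _))

lemma mem_step_dom (hcl : SameClass A B) (n : ℕ) (F) (a : A.carrier) (b : B.carrier) :
    ∃ y, (a, y) ∈ (step hcl n F a b).1 :=
  ⟨_, Finset.mem_insert_of_mem (Finset.mem_insert_self _ _)⟩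

lemma mem_step_ran (hcl : SameClass A B) (n : ℕ) (F) (a : A.carrier) (b : B.carrier) :
    ∃ x, (x, b) ∈ (step hcl n F a b).1 :=
  ⟨_, Finset.mem_insert_self _ _⟩

noncomputable def chain (hcl : SameClass A B) (ea : ℕ → A.carrier) (eb : ℕ → B.carrier) :
    ℕ → {f : Finset (A.carrier × B.carrier) // Good A B f}
  | 0 => ⟨∅, good_empty⟩
  | n + 1 => step hcl n (chain hcl ea eb n) (ea n) (eb n)

lemma chain_mono (hcl : SameClass A B) (ea : ℕ → A.carrier) (eb : ℕ → B.carrier)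
    {m n : ℕ} (h : m ≤ n) : (chain hcl ea eb m).1 ⊆ (chain hcl ea eb n).1 := by
  induction h with
  | refl => exact Finset.Subset.refl _
  | step h ih => exact ih.trans (subset_step _ _ _ _ _)

lemma sameClass_eiso (hcl : SameClass A B) : EIso A B := by
  classical
  haveI : Nonempty A.carrier := ⟨A.c 0⟩
  haveI : Nonempty B.carrier := ⟨B.c 0⟩
  obtain ⟨ea, hea⟩ := exists_surjective_nat A.carrier
  obtain ⟨eb, heb⟩ := exists_surjective_nat B.carrier
  set ch := chain hcl ea eb with hch
  set Fs : Set (A.carrier × B.carrier) := {p | ∃ n, p ∈ (ch n).1} with hFs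
  have hgood : ∀ p ∈ Fs, ∀ q ∈ Fs, Compat A B p.1 p.2 ∧ (p.1 < q.1 ↔ p.2 < q.2) := by
    rintro p ⟨n, hn⟩ q ⟨m, hm⟩
    have hn' := chain_mono hcl ea eb (le_max_left n m) hn
    have hm' := chain_mono hcl ea eb (le_max_right n m) hm
    exact ⟨(ch (max n m)).2.1 p hn', (ch (max n m)).2.2 p hn' q hm'⟩
  have htotal : ∀ a : A.carrier, ∃ b, (a, b) ∈ Fs := by
    intro a
    obtain ⟨k, rfl⟩ := hea a
    obtain ⟨y, hy⟩ := mem_step_dom hcl k (ch k) (ea k) (eb k)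
    exact ⟨y, k + 1, hy⟩
  choose g hg using htotal
  have huniq : ∀ a b, (a, b) ∈ Fs → g a = b := by
    intro a b h1
    have t1 := (hgood _ (hg a) _ h1).2
    have t2 := (hgood _ h1 _ (hg a)).2
    refine le_antisymm (not_lt.1 fun h => ?_) (not_lt.1 fun h => ?_)
    · exact lt_irrefl a (t2.2 h)
    · exact lt_irrefl a (t1.2 h)
  have hmono : StrictMono g := fun a a' h => (hgood _ (hg a) _ (hg a')).2.1 h
  have hsurj : Function.Surjective g := by
    intro b
    obtain ⟨k, rfl⟩ := heb b
    obtain ⟨x, hx⟩ := mem_step_ran hcl k (ch k) (ea k) (eb k)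
    exact ⟨x, huniq x _ ⟨k + 1, hx⟩⟩
  refine ⟨StrictMono.orderIsoOfSurjective g hmono hsurj, fun n => ?_⟩
  have hmem : (A.c n, B.c n) ∈ Fs := ⟨n + 1, mem_step_const hcl n (ch n) (ea n) (eb n)⟩
  have := huniq (A.c n) _ hmem
  simpa [StrictMono.coe_orderIsoOfSurjective] using this

lemma trichotomy (A : EModel) : EPrime A ∨ EMiddle A ∨ ESat A := by
  by_cases hp : EPrime A
  · exact Or.inl hp
  by_cases hm : ∃ x, IsLUB (Set.range A.c) x
  · exact Or.inr (Or.inl hm)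
  · simp only [EPrime, not_forall, not_exists, not_lt] at hp
    obtain ⟨x, hx⟩ := hp
    exact Or.inr (Or.inr ⟨⟨x, hx⟩, hm⟩)

lemma iso_prime (e : A.carrier ≃o B.carrier) (he : ∀ n, e (A.c n) = B.c n)
    (h : EPrime A) : EPrime B := by
  intro y
  obtain ⟨n, hn⟩ := h (e.symm y)
  refine ⟨n, ?_⟩
  have := e.lt_iff_lt.2 hn
  rwa [e.apply_symm_apply, he n] at this

lemma iso_isLUB (e : A.carrier ≃o B.carrier) (he : ∀ n, e (A.c n) = B.c n)
    {x : A.carrier} (hx : IsLUB (Set.range A.c) x) : IsLUB (Set.range B.c) (e x) := by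
  constructor
  · rintro _ ⟨n, rfl⟩
    rw [← he n]
    exact e.le_iff_le.2 (hx.1 ⟨n, rfl⟩)
  · intro y hy
    have h1 : x ≤ e.symm y := by
      apply hx.2
      rintro _ ⟨n, rfl⟩
      have : e.symm (B.c n) = A.c n := by rw [← he n, e.symm_apply_apply]
      rw [← this]
      exact e.symm.le_iff_le.2 (hy ⟨n, rfl⟩)
    have := e.le_iff_le.2 h1
    rwa [e.apply_symm_apply] at this

lemma eiso_symm (h : EIso A B) : EIso B A := by
  obtain ⟨e, he⟩ := h
  exact ⟨e.symm, fun n => by rw [← he n, e.symm_apply_apply]⟩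

lemma eiso_sameClass (h : EIso A B) : SameClass A B := by
  obtain ⟨e, he⟩ := h
  obtain ⟨e', he'⟩ := eiso_symm ⟨e, he⟩
  rcases trichotomy A with h1 | h1 | h1
  · exact Or.inl ⟨h1, iso_prime e he h1⟩
  · obtain ⟨x, hx⟩ := h1
    exact Or.inr (Or.inl ⟨⟨x, hx⟩, ⟨e x, iso_isLUB e he hx⟩⟩)
  · refine Or.inr (Or.inr ⟨h1, ⟨?_, ?_⟩⟩)
    · obtain ⟨x, hx⟩ := h1.1
      refine ⟨e x, fun n => ?_⟩
      rw [← he n]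
      exact e.le_iff_le.2 (hx n)
    · rintro ⟨y, hy⟩
      exact h1.2 ⟨e' y, iso_isLUB e' he' hy⟩

/-! ### The three models -/

@[reducible] noncomputable def Mprime : EModel where
  carrier := ℚ
  c := fun n => (n : ℚ)
  mono := fun n m h => by show (n:ℚ) < (m:ℚ); exact_mod_cast h

lemma mprime_prime : EPrime Mprime := fun x => exists_nat_gt x

@[reducible] noncomputable def Mmid : EModel where
  carrier := ℚ
  c := fun n => -(((n : ℚ) + 1)⁻¹)
  mono := by
    intro n m h
    have h1 : (0:ℚ) < (n : ℚ) + 1 := by positivity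
    have h2 : ((n : ℚ) + 1) < (m : ℚ) + 1 := by exact_mod_cast Nat.succ_lt_succ h
    have := one_div_lt_one_div_of_lt h1 h2
    rw [one_div, one_div] at this
    simpa using this

lemma mmid_middle : EMiddle Mmid := by
  refine ⟨(0 : ℚ), ?_, ?_⟩
  · rintro _ ⟨n, rfl⟩
    show -(((n : ℚ) + 1)⁻¹) ≤ 0
    have : (0:ℚ) ≤ ((n : ℚ) + 1)⁻¹ := by positivity
    linarith
  · intro y hy
    show (0 : ℚ) ≤ y
    by_contra hneg
    push_neg at hneg
    obtain ⟨n, hn⟩ := exists_nat_gt ((-y)⁻¹)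
    have hy' : (0:ℚ) < -y := by linarith
    have h1 : (-y)⁻¹ < (n : ℚ) + 1 := by linarith
    have h2 : (0:ℚ) < (-y)⁻¹ := by positivity
    have h3 : ((n:ℚ) + 1)⁻¹ < ((-y)⁻¹)⁻¹ := by
      have := one_div_lt_one_div_of_lt h2 h1
      rw [one_div, one_div] at this
      exact this
    rw [inv_inv] at h3
    have h4 : y < -(((n:ℚ) + 1)⁻¹) := by linarith
    have h5 : -(((n:ℚ) + 1)⁻¹) ≤ y := hy ⟨n, rfl⟩
    linarith

instance : Countable (ℚ ⊕ₗ ℚ) := inferInstanceAs (Countable (ℚ ⊕ ℚ))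

@[reducible] noncomputable def Msat : EModel where
  carrier := ℚ ⊕ₗ ℚ
  c := fun n => toLex (Sum.inl (n : ℚ))
  mono := fun n m h => Sum.Lex.inl_lt_inl_iff.2 (by exact_mod_cast h)

lemma msat_sat : ESat Msat := by
  constructor
  · exact ⟨toLex (Sum.inr 0), fun n => Sum.Lex.inl_le_inr _ _⟩
  · rintro ⟨x, hx⟩
    rcases x with q | q
    · obtain ⟨n, hn⟩ := exists_nat_gt q
      have := hx.1 ⟨n, rfl⟩
      have hle : (n : ℚ) ≤ q := Sum.Lex.inl_le_inl_iff.1 this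
      linarith
    · have hub : toLex (Sum.inr (q - 1)) ∈ upperBounds (Set.range Msat.c) := by
        rintro _ ⟨n, rfl⟩
        exact Sum.Lex.inl_le_inr _ _
      have := hx.2 hub
      have hle : q ≤ q - 1 := Sum.Lex.inr_le_inr_iff.1 this
      linarith

end EhrAux

/-- Ehrenfeucht's theory has exactly three countable models up to isomorphism:
the prime model, the middle model and the saturated model. -/
theorem stmt13 :
    (∀ A : EModel, EPrime A ∨ EMiddle A ∨ ESat A) ∧
    (∃ A : EModel, EPrime A) ∧ (∃ A : EModel, EMiddle A) ∧ (∃ A : EModel, ESat A) ∧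
    (∀ A B : EModel, EIso A B ↔
      ((EPrime A ∧ EPrime B) ∨ (EMiddle A ∧ EMiddle B) ∨ (ESat A ∧ ESat B))) := by
  refine ⟨EhrAux.trichotomy, ⟨EhrAux.Mprime, EhrAux.mprime_prime⟩,
    ⟨EhrAux.Mmid, EhrAux.mmid_middle⟩, ⟨EhrAux.Msat, EhrAux.msat_sat⟩, fun A B => ?_⟩
  exact ⟨EhrAux.eiso_sameClass, EhrAux.sameClass_eiso⟩
end
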